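/- arXiv:2411.08080 — 7 statements merged into one kernel-verified Lean document; each statement's English description precedes it below -/
import Mathlib

section
/- Let a < b be real numbers and n ≥ 1 a natural number. Let k, κ : ℝ → ℝ be measurable, integrable on (0, b−a], and satisfy the modified Sonine condition of order n. Suppose k is (n−1)-times continuously differentiable on (0, b−a] with each derivative k⁽ʲ⁾ (0 ≤ j ≤ n−1) integrable on (0, b−a], and let f be n-times continuously differentiable on [a,b]. Then for every x ∈ (a,b] the left-sided general fractional Riemann–Liouville derivative of f at x exists and ᶜD_k f(x) = ᴿᴸD_k f(x) − Σ_{j=0}^{n−1} f⁽ʲ⁾(a) · k⁽ⁿ⁻ʲ⁻¹⁾(x−a); equivalently, ᶜD_k f(x) = ᴿᴸD_k [ f(·) − Σ_{j=0}^{n−1} f⁽ʲ⁾(a) (· − a)ʲ/j! ](x). -/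
open MeasureTheory intervalIntegral Set Filter Topology

lemma convKernel_hasDerivWithinAt
    {a b T : ℝ} (hab : a < b) (hT : T = b - a)
    {k₀ : ℝ → ℝ} (hk₀m : Measurable k₀)
    (hk₀I : Integrable k₀)
    (hk₀c : ContinuousOn k₀ (Ioc 0 T))
    {g G' : ℝ → ℝ} {M C : ℝ}
    (hgc : Continuous g) (hG'c : Continuous G')
    (hLip : ∀ p q, |g p - g q| ≤ M * |p - q|)
    (hC : ∀ t, |g t| ≤ C) (hC' : ∀ t, |G' t| ≤ C)
    (hG' : ∀ t ∈ Ioo a b, HasDerivAt g (G' t) t)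
    {x : ℝ} (hx : x ∈ Ioc a b) :
    HasDerivWithinAt (fun y => ∫ s in a..y, k₀ (y - s) * g s)
      (k₀ (x - a) * g a + ∫ s in a..x, k₀ (x - s) * G' s) (Icc a b) x := by
  have hT0 : 0 < T := by rw [hT]; linarith
  have hxa : 0 < x - a := by linarith [hx.1]
  have hxT : x - a ≤ T := by rw [hT]; linarith [hx.2]
  have hM : 0 ≤ M := by
    have := hLip a (a + 1); simp at this
    calc (0:ℝ) ≤ |g a - g (a+1)| := abs_nonneg _
      _ ≤ M * |a - (a+1)| := hLip _ _
      _ = M := by norm_num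
  -- the substituted form
  set I : ℝ → ℝ := fun y => ∫ u in (0:ℝ)..(y - a), k₀ u * g (y - u) with hI
  have hIeq : ∀ y : ℝ, (∫ s in a..y, k₀ (y - s) * g s) = I y := by
    intro y
    have := intervalIntegral.integral_comp_sub_left (a := a) (b := y)
      (fun u => k₀ u * g (y - u)) y
    simp only [sub_self] at this
    show _ = ∫ u in (0:ℝ)..(y - a), k₀ u * g (y - u)
    rw [← this]
    apply intervalIntegral.integral_congr
    intro s _
    simp [sub_sub_cancel]
  -- integrability
  have hmeas : ∀ y : ℝ, AEStronglyMeasurable (fun u => k₀ u * g (y - u)) volume :=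
    fun y => (hk₀m.aestronglyMeasurable).mul
      ((hgc.comp (continuous_const.sub continuous_id)).aestronglyMeasurable)
  have hInt : ∀ y : ℝ, Integrable (fun u => k₀ u * g (y - u)) := by
    intro y
    refine (hk₀I.norm.mul_const C).mono' (hmeas y) (Eventually.of_forall fun u => ?_)
    rw [norm_mul]
    exact mul_le_mul_of_nonneg_left ((Real.norm_eq_abs _) ▸ hC _) (norm_nonneg _)
  have hIntG : Integrable (fun u => k₀ u * G' (x - u)) := by
    refine (hk₀I.norm.mul_const C).mono' ((hk₀m.aestronglyMeasurable).mul
      ((hG'c.comp (continuous_const.sub continuous_id)).aestronglyMeasurable))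
      (Eventually.of_forall fun u => ?_)
    rw [norm_mul]
    exact mul_le_mul_of_nonneg_left ((Real.norm_eq_abs _) ▸ hC' _) (norm_nonneg _)
  have hIntc : Integrable (fun u => k₀ u * g a) := hk₀I.mul_const (g a)
  -- decomposition
  set A : ℝ → ℝ := fun y => ∫ u in (0:ℝ)..(x - a), (k₀ u * g (y - u) - k₀ u * g (x - u))
    with hA
  set B1 : ℝ → ℝ := fun y => ∫ u in (x - a)..(y - a), (k₀ u * g (y - u) - k₀ u * g a)
    with hB1
  set B2 : ℝ → ℝ := fun y => ∫ u in (x - a)..(y - a), k₀ u * g a with hB2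
  have hsplit : ∀ y : ℝ, I y - I x = A y + (B1 y + B2 y) := by
    intro y
    have e1 : A y = (∫ u in (0:ℝ)..(x - a), k₀ u * g (y - u)) - I x := by
      rw [hA, hI]
      exact intervalIntegral.integral_sub (hInt y).intervalIntegrable
        (hInt x).intervalIntegrable
    have e2 : B1 y + B2 y = ∫ u in (x - a)..(y - a), k₀ u * g (y - u) := by
      simp only [hB1, hB2]
      rw [intervalIntegral.integral_sub (hInt y).intervalIntegrable
        hIntc.intervalIntegrable]
      ring
    have e3 : (∫ u in (0:ℝ)..(x - a), k₀ u * g (y - u))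
        + (∫ u in (x - a)..(y - a), k₀ u * g (y - u)) = I y :=
      intervalIntegral.integral_add_adjacent_intervals
        (hInt y).intervalIntegrable (hInt y).intervalIntegrable
    rw [e1, e2]; linarith [e3]
  rw [hasDerivWithinAt_iff_tendsto_slope]
  set l := 𝓝[Icc a b \ {x}] x with hl
  have hmem : ∀ᶠ y in l, y ∈ Icc a b \ {x} := self_mem_nhdsWithin
  have hne : ∀ᶠ y in l, y ≠ x := hmem.mono fun y hy => hy.2
  -- Part A
  have hTA : Tendsto (fun y => A y / (y - x)) l
      (𝓝 (∫ u in (0:ℝ)..(x - a), k₀ u * G' (x - u))) := by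
    have : ∀ y : ℝ, A y / (y - x)
        = ∫ u in (0:ℝ)..(x - a), (k₀ u * g (y - u) - k₀ u * g (x - u)) / (y - x) := by
      intro y; rw [hA, intervalIntegral.integral_div]
    simp_rw [this]
    apply intervalIntegral.tendsto_integral_filter_of_dominated_convergence
      (fun u => ‖k₀ u‖ * M)
    · refine Eventually.of_forall fun y => Measurable.aestronglyMeasurable ?_ |>.restrict
      exact ((hk₀m.mul (hgc.measurable.comp (measurable_const.sub measurable_id))).sub
        (hk₀m.mul (hgc.measurable.comp (measurable_const.sub measurable_id)))).div_const _
    · filter_upwards [hne] with y hy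
      refine Eventually.of_forall fun u _ => ?_
      have h1 : k₀ u * g (y - u) - k₀ u * g (x - u) = k₀ u * (g (y - u) - g (x - u)) := by
        ring
      have h2 : |g (y - u) - g (x - u)| ≤ M * |y - x| := by
        have := hLip (y - u) (x - u)
        simpa [sub_sub_sub_cancel_right] using this
      have hyx : (0:ℝ) < |y - x| := abs_pos.mpr (sub_ne_zero.mpr hy)
      rw [h1, norm_div, norm_mul, Real.norm_eq_abs, Real.norm_eq_abs, Real.norm_eq_abs,
        div_le_iff₀ hyx]
      calc |k₀ u| * |g (y - u) - g (x - u)| ≤ |k₀ u| * (M * |y - x|) :=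
            mul_le_mul_of_nonneg_left h2 (abs_nonneg _)
        _ = |k₀ u| * M * |y - x| := by ring
    · exact (hk₀I.norm.mul_const M).intervalIntegrable
    · have h1 : ∀ᵐ u : ℝ, u ≠ x - a := by
        rw [ae_iff]
        simp only [not_ne_iff, setOf_eq_eq_singleton]
        exact measure_singleton _
      filter_upwards [h1] with u hu humem
      rw [uIoc_of_le (le_of_lt hxa)] at humem
      have hu' : u ∈ Ioo 0 (x - a) := ⟨humem.1, lt_of_le_of_ne humem.2 hu⟩
      have hp : x - u ∈ Ioo a b := ⟨by linarith [hu'.2], by linarith [hu'.1, hx.2]⟩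
      have hD := hG' (x - u) hp
      rw [hasDerivAt_iff_tendsto_slope] at hD
      have htend : Tendsto (fun y => y - u) l (𝓝[≠] (x - u)) := by
        rw [tendsto_nhdsWithin_iff]
        constructor
        · exact ((continuous_id.sub continuous_const).tendsto x).mono_left
            nhdsWithin_le_nhds
        · filter_upwards [hne] with y hy
          simp only [mem_compl_iff, mem_singleton_iff]
          intro h
          exact hy (by linarith [h])
      have hfin := (hD.comp htend).const_mul (k₀ u)
      refine hfin.congr fun y => ?_
      show k₀ u * slope g (x - u) (y - u) = _
      rw [slope_def_field, show y - u - (x - u) = y - x from by ring]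
      ring
  -- FTC part: derivative of y ↦ ∫_0^{y-a} k₀
  have hK : HasDerivWithinAt (fun y => ∫ u in (0:ℝ)..(y - a), k₀ u) (k₀ (x - a))
      (Icc a b) x := by
    have hKT : HasDerivWithinAt (fun t => ∫ u in (0:ℝ)..t, k₀ u) (k₀ (x - a))
        (Icc 0 T) (x - a) := by
      rcases eq_or_lt_of_le hxT with hbT | hbT
      · -- x - a = T
        have hnhds : 𝓝[Ioc 0 T] T = 𝓝[Iic T] T := nhdsWithin_Ioc_eq_nhdsLE hT0
        have hcw : ContinuousWithinAt k₀ (Iic T) T := by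
          have := hk₀c T ⟨hT0, le_rfl⟩
          unfold ContinuousWithinAt at this ⊢
          rwa [hnhds] at this
        have := intervalIntegral.integral_hasDerivWithinAt_right
          (a := (0:ℝ)) (hk₀I.intervalIntegrable) (s := Iic T) (t := Iic T)
          (hk₀m.stronglyMeasurable.stronglyMeasurableAtFilter) hcw
        rw [hbT]
        exact this.mono Icc_subset_Iic_self
      · -- x - a < T : interior point
        have hmemn : Ioc 0 T ∈ 𝓝 (x - a) := Ioc_mem_nhds hxa hbT
        have hca : ContinuousAt k₀ (x - a) := hk₀c.continuousAt hmemn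
        exact (intervalIntegral.integral_hasDerivAt_right
          (hk₀I.intervalIntegrable)
          (hk₀m.stronglyMeasurable.stronglyMeasurableAtFilter)
          hca).hasDerivWithinAt
    have hsub : HasDerivWithinAt (fun y : ℝ => y - a) 1 (Icc a b) x :=
      ((hasDerivAt_id x).sub_const a).hasDerivWithinAt
    have hmap : MapsTo (fun y : ℝ => y - a) (Icc a b) (Icc 0 T) := by
      intro y hy
      rw [mem_Icc] at hy
      simp only [mem_Icc]
      constructor
      · linarith [hy.1]
      · rw [hT]; linarith [hy.2]
    have := hKT.comp x hsub hmap
    rw [mul_one] at this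
    exact this
  have hxIcc : x ∈ Icc a b := ⟨le_of_lt (by linarith [hx.1]), hx.2⟩
  rw [hasDerivWithinAt_iff_tendsto_slope] at hK
  -- Part B2
  have hTB2 : Tendsto (fun y => B2 y / (y - x)) l (𝓝 (k₀ (x - a) * g a)) := by
    have h1 := hK.mul_const (g a)
    refine h1.congr fun y => ?_
    simp only [hB2]
    rw [slope_def_field, intervalIntegral.integral_mul_const]
    rw [show (∫ u in (x - a)..(y - a), k₀ u)
        = (∫ u in (0:ℝ)..(y - a), k₀ u) - ∫ u in (0:ℝ)..(x - a), k₀ u from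
      (intervalIntegral.integral_interval_sub_left hk₀I.intervalIntegrable
        hk₀I.intervalIntegrable).symm]
    ring
  -- Part B1
  have hTB1 : Tendsto (fun y => B1 y / (y - x)) l (𝓝 0) := by
    obtain ⟨δ₀, hδ₀, hδ⟩ := Metric.tendsto_nhdsWithin_nhds.mp
      (hk₀c (x - a) ⟨hxa, hxT⟩) 1 one_pos
    set N := |k₀ (x - a)| + 1 with hN
    have hN0 : 0 ≤ N := by positivity
    set δ := min δ₀ ((x - a) / 2) with hδdef
    have hδpos : 0 < δ := lt_min hδ₀ (by linarith)
    have hev : ∀ᶠ y in l, |y - x| < δ := by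
      have : ∀ᶠ y in 𝓝 x, |y - x| < δ := by
        have := Metric.ball_mem_nhds x hδpos
        filter_upwards [this] with y hy
        rwa [Metric.mem_ball, Real.dist_eq] at hy
      exact this.filter_mono nhdsWithin_le_nhds
    have hbound : ∀ᶠ y in l, ‖B1 y / (y - x)‖ ≤ N * (2 * M) * |y - x| := by
      filter_upwards [hev, hmem] with y hy hymem
      have hyx : |y - x| < δ := hy
      have hyIcc : y ∈ Icc a b := hymem.1
      have habs := abs_lt.mp hyx
      have hkey : ∀ u ∈ Set.uIoc (x - a) (y - a),
          ‖k₀ u * g (y - u) - k₀ u * g a‖ ≤ N * (2 * M) * |y - x| := by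
        intro u hu
        have hu2 : (0 < u ∧ u ≤ T) ∧ |u - (x - a)| ≤ |y - x| := by
          rcases Set.mem_uIoc.mp hu with ⟨h1, h2⟩ | ⟨h1, h2⟩
          · constructor
            · constructor
              · linarith
              · rw [hT]; linarith [hyIcc.2]
            · rw [abs_le]
              constructor
              · linarith [abs_nonneg (y - x)]
              · linarith [le_abs_self (y - x)]
          · constructor
            · constructor
              · have : (x - a) / 2 ≤ y - a := by
                  have := min_le_right δ₀ ((x - a) / 2)
                  linarith [habs.1]
                linarith
              · linarith
            · rw [abs_le]
              constructor
              · linarith [neg_abs_le (y - x)]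
              · linarith [abs_nonneg (y - x)]
        have huIoc : u ∈ Ioc 0 T := ⟨hu2.1.1, hu2.1.2⟩
        have hdist : dist u (x - a) < δ₀ := by
          rw [Real.dist_eq]
          calc |u - (x - a)| ≤ |y - x| := hu2.2
            _ < δ := hyx
            _ ≤ δ₀ := min_le_left _ _
        have hkb : |k₀ u| ≤ N := by
          have := hδ huIoc hdist
          rw [Real.dist_eq] at this
          calc |k₀ u| = |k₀ (x - a) + (k₀ u - k₀ (x - a))| := by ring_nf
            _ ≤ |k₀ (x - a)| + |k₀ u - k₀ (x - a)| := abs_add_le _ _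
            _ ≤ |k₀ (x - a)| + 1 := by linarith [le_of_lt this]
        have hgb : |g (y - u) - g a| ≤ 2 * M * |y - x| := by
          calc |g (y - u) - g a| ≤ M * |y - u - a| := hLip _ _
            _ ≤ M * (2 * |y - x|) := by
                apply mul_le_mul_of_nonneg_left _ hM
                have : y - u - a = (y - x) + ((x - a) - u) := by ring
                rw [this]
                calc |(y - x) + ((x - a) - u)| ≤ |y - x| + |(x - a) - u| := abs_add_le _ _
                  _ ≤ |y - x| + |y - x| := by
                      have := hu2.2; rw [abs_sub_comm] at this; linarith
                  _ = 2 * |y - x| := by ring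
            _ = 2 * M * |y - x| := by ring
        rw [show k₀ u * g (y - u) - k₀ u * g a = k₀ u * (g (y - u) - g a) from by ring]
        rw [norm_mul, Real.norm_eq_abs, Real.norm_eq_abs]
        calc |k₀ u| * |g (y - u) - g a| ≤ N * (2 * M * |y - x|) := by
              apply mul_le_mul hkb hgb (abs_nonneg _) hN0
          _ = N * (2 * M) * |y - x| := by ring
      have hbd := intervalIntegral.norm_integral_le_of_norm_le_const hkey
      rw [show y - a - (x - a) = y - x from by ring] at hbd
      simp only [hB1]
      rcases eq_or_ne y x with rfl | hyne
      · simp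
      · rw [norm_div, Real.norm_eq_abs (y - x),
          div_le_iff₀ (abs_pos.mpr (sub_ne_zero.mpr hyne))]
        calc ‖∫ (u : ℝ) in x - a..y - a, k₀ u * g (y - u) - k₀ u * g a‖
            ≤ N * (2 * M) * |y - x| * |y - x| := hbd
          _ = N * (2 * M) * |y - x| * |y - x| := rfl
    have hlim0 : Tendsto (fun y : ℝ => N * (2 * M) * |y - x|) l (𝓝 0) := by
      have h0 : Tendsto (fun y : ℝ => |y - x|) (𝓝 x) (𝓝 0) := by
        have h1 : Tendsto (fun y : ℝ => y - x) (𝓝 x) (𝓝 (x - x)) :=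
          (continuous_id.sub continuous_const).tendsto x
        rw [sub_self] at h1
        simpa using h1.abs
      have := (h0.const_mul (N * (2 * M))).mono_left
        (nhdsWithin_le_nhds : l ≤ 𝓝 x)
      simpa using this
    exact squeeze_zero_norm' hbound hlim0
  -- combine
  have hcomb := hTA.add (hTB1.add hTB2)
  rw [zero_add] at hcomb
  have hfinal : (∫ u in (0:ℝ)..(x - a), k₀ u * G' (x - u)) + k₀ (x - a) * g a
      = k₀ (x - a) * g a + ∫ s in a..x, k₀ (x - s) * G' s := by
    have := intervalIntegral.integral_comp_sub_left (a := a) (b := x)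
      (fun u => k₀ u * G' (x - u)) x
    simp only [sub_self] at this
    rw [add_comm]
    congr 1
    rw [← this]
    apply intervalIntegral.integral_congr
    intro s _
    simp [sub_sub_cancel]
  rw [← hfinal]
  have hfun : (fun y => ∫ s in a..y, k₀ (y - s) * g s) = I := funext hIeq
  rw [hfun]
  refine hcomb.congr' ?_
  filter_upwards [hne] with y hy
  rw [slope_def_field, hsplit y, add_div, add_div]

theorem keyLemma (a b : ℝ) (hab : a < b) (n : ℕ)
    (k : ℝ → ℝ) (hkm : Measurable k)
    (hkI : IntegrableOn k (Ioc 0 (b - a)))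
    (hkC : ContDiffOn ℝ (n - 1 : ℕ) k (Ioc 0 (b - a)))
    (f : ℝ → ℝ) (hf : ContDiffOn ℝ n f (Icc a b)) :
    ∀ m, m ≤ n → ∀ x ∈ Ioc a b,
      (m < n → DifferentiableWithinAt ℝ
        (iteratedDerivWithin m (fun t => ∫ s in a..t, k (t - s) * f s) (Icc a b))
        (Icc a b) x) ∧
      iteratedDerivWithin m (fun t => ∫ s in a..t, k (t - s) * f s) (Icc a b) x
        = (∫ s in a..x, k (x - s) * iteratedDerivWithin m f (Icc a b) s)
          + ∑ j ∈ Finset.range m, iteratedDerivWithin j f (Icc a b) a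
              * iteratedDerivWithin (m - 1 - j) k (Ioc 0 (b - a)) (x - a) := by
  set T := b - a with hTdef
  have hT0 : 0 < T := by rw [hTdef]; linarith
  set k₀ : ℝ → ℝ := (Ioc 0 T).indicator k with hk₀def
  have hk₀m : Measurable k₀ := hkm.indicator measurableSet_Ioc
  have hk₀I : Integrable k₀ := (integrable_indicator_iff measurableSet_Ioc).mpr hkI
  have hk₀c : ContinuousOn k₀ (Ioc 0 T) :=
    hkC.continuousOn.congr fun u hu => indicator_of_mem hu k
  -- clamp function
  set c : ℝ → ℝ := fun t => min (max t a) b with hcdef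
  have hc1 : ∀ t ∈ Icc a b, c t = t := by
    intro t ht
    rw [hcdef]
    simp only
    rw [max_eq_left ht.1, min_eq_left ht.2]
  have hc2 : ∀ t, c t ∈ Icc a b := by
    intro t
    constructor
    · exact le_min (le_max_right t a) (le_of_lt hab)
    · exact min_le_right _ _
  have hcc : Continuous c := (continuous_id.max continuous_const).min continuous_const
  have hcLip : ∀ p q : ℝ, |c p - c q| ≤ |p - q| := by
    intro p q
    calc |c p - c q| ≤ max |max p a - max q a| |b - b| := abs_min_sub_min_le_max _ _ _ _
      _ = |max p a - max q a| := by simp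
      _ ≤ |p - q| := abs_max_sub_max_le_abs _ _ _
  set g : ℕ → ℝ → ℝ := fun j => iteratedDerivWithin j f (Icc a b) with hgdef
  set gg : ℕ → ℝ → ℝ := fun j t => g j (c t) with hggdef
  have hgc : ∀ j, j ≤ n → ContinuousOn (g j) (Icc a b) := fun j hj =>
    hf.continuousOn_iteratedDerivWithin (by exact_mod_cast hj) (uniqueDiffOn_Icc hab)
  have hggc : ∀ j, j ≤ n → Continuous (gg j) := fun j hj =>
    (hgc j hj).comp_continuous hcc hc2
  have hggeq : ∀ j, ∀ t ∈ Icc a b, gg j t = g j t := fun j t ht => by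
    rw [hggdef]; simp only; rw [hc1 t ht]
  have hgd : ∀ j, j < n → ∀ t ∈ Icc a b,
      HasDerivWithinAt (g j) (g (j + 1) t) (Icc a b) t := by
    intro j hj t ht
    have hdiff := hf.differentiableOn_iteratedDerivWithin
      (by exact_mod_cast hj) (uniqueDiffOn_Icc hab)
    rw [hgdef]
    simp only
    rw [iteratedDerivWithin_succ]
    exact (hdiff t ht).hasDerivWithinAt
  have hggd : ∀ j, j < n → ∀ t ∈ Ioo a b, HasDerivAt (gg j) (gg (j + 1) t) t := by
    intro j hj t ht
    have htIcc : t ∈ Icc a b := Ioo_subset_Icc_self ht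
    have h2 : HasDerivAt (g j) (g (j + 1) t) t :=
      (hgd j hj t htIcc).hasDerivAt (Icc_mem_nhds ht.1 ht.2)
    have hev : gg j =ᶠ[𝓝 t] g j := by
      filter_upwards [isOpen_Ioo.mem_nhds ht] with y hy
      exact hggeq j y (Ioo_subset_Icc_self hy)
    have := h2.congr_of_eventuallyEq hev
    rwa [hggeq (j + 1) t htIcc]
  -- integral conversion
  have hIntEq : ∀ (G GG : ℝ → ℝ), (∀ t ∈ Icc a b, GG t = G t) → ∀ y ∈ Icc a b,
      (∫ s in a..y, k (y - s) * G s) = ∫ s in a..y, k₀ (y - s) * GG s := by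
    intro G GG hGG y hy
    rcases eq_or_lt_of_le hy.1 with rfl | hay
    · simp
    · apply intervalIntegral.integral_congr_ae
      have h1 : ∀ᵐ s : ℝ, s ≠ y := by
        rw [ae_iff]
        simp only [not_ne_iff, setOf_eq_eq_singleton]
        exact measure_singleton _
      filter_upwards [h1] with s hs hsmem
      rw [uIoc_of_le (le_of_lt hay)] at hsmem
      have hs1 : a < s := hsmem.1
      have hs2 : s < y := lt_of_le_of_ne hsmem.2 hs
      have hmem : y - s ∈ Ioc 0 T := ⟨by linarith, by rw [hTdef]; linarith [hy.2]⟩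
      rw [hk₀def, indicator_of_mem hmem, hGG s ⟨le_of_lt hs1, by linarith [hy.2]⟩]
  -- the Φ functions
  set Φ : ℕ → ℝ → ℝ := fun m y => (∫ s in a..y, k₀ (y - s) * gg m s)
    + ∑ j ∈ Finset.range m, g j a * iteratedDerivWithin (m - 1 - j) k (Ioc 0 T) (y - a)
    with hΦdef
  have haIcc : a ∈ Icc a b := ⟨le_rfl, le_of_lt hab⟩
  -- derivative of Φ m
  have hasD : ∀ m, m < n → ∀ x ∈ Ioc a b,
      HasDerivWithinAt (Φ m) (Φ (m + 1) x) (Icc a b) x := by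
    intro m hm x hx
    have hxa : 0 < x - a := by linarith [hx.1]
    have hxT : x - a ≤ T := by rw [hTdef]; linarith [hx.2]
    obtain ⟨C1, hC1⟩ := isCompact_Icc.exists_bound_of_continuousOn (hgc m (le_of_lt hm))
    obtain ⟨C2, hC2⟩ := isCompact_Icc.exists_bound_of_continuousOn (hgc (m + 1) hm)
    have hC20 : 0 ≤ C2 := le_trans (norm_nonneg _) (hC2 a haIcc)
    set C := max C1 C2 with hCdef
    have hbg : ∀ t, |gg m t| ≤ C := fun t => le_trans
      ((Real.norm_eq_abs _) ▸ hC1 (c t) (hc2 t)) (le_max_left _ _)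
    have hbG : ∀ t, |gg (m + 1) t| ≤ C := fun t => le_trans
      ((Real.norm_eq_abs _) ▸ hC2 (c t) (hc2 t)) (le_max_right _ _)
    have hLip : ∀ p q : ℝ, |gg m p - gg m q| ≤ C2 * |p - q| := by
      intro p q
      have h1 : ‖g m (c p) - g m (c q)‖ ≤ C2 * ‖c p - c q‖ :=
        (convex_Icc a b).norm_image_sub_le_of_norm_hasDerivWithin_le
          (fun t ht => hgd m hm t ht) (fun t ht => hC2 t ht) (hc2 q) (hc2 p)
      calc |gg m p - gg m q| ≤ C2 * |c p - c q| := by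
            rw [hggdef]; simpa [Real.norm_eq_abs] using h1
        _ ≤ C2 * |p - q| := mul_le_mul_of_nonneg_left (hcLip p q) hC20
    have hL := convKernel_hasDerivWithinAt hab hTdef hk₀m hk₀I hk₀c
      (hggc m (le_of_lt hm)) (hggc (m + 1) hm) hLip hbg hbG (hggd m hm) hx
    -- sum part
    have hIocmem : Ioc a b ∈ 𝓝[Icc a b] x := by
      rw [mem_nhdsWithin]
      exact ⟨Ioi a, isOpen_Ioi, hx.1, fun y hy => ⟨hy.1, hy.2.2⟩⟩
    have hS : HasDerivWithinAt
        (fun y => ∑ j ∈ Finset.range m, g j a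
          * iteratedDerivWithin (m - 1 - j) k (Ioc 0 T) (y - a))
        (∑ j ∈ Finset.range m, g j a
          * iteratedDerivWithin (m - j) k (Ioc 0 T) (x - a)) (Icc a b) x := by
      apply HasDerivWithinAt.fun_sum
      intro j hj
      have hjm : j < m := Finset.mem_range.mp hj
      have hilt : m - 1 - j < n - 1 := by omega
      have hieq : m - 1 - j + 1 = m - j := by omega
      have hxmem : x - a ∈ Ioc 0 T := ⟨hxa, hxT⟩
      have hKd : HasDerivWithinAt (iteratedDerivWithin (m - 1 - j) k (Ioc 0 T))
          (iteratedDerivWithin (m - j) k (Ioc 0 T) (x - a)) (Ioc 0 T) (x - a) := by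
        have hd := (hkC.differentiableOn_iteratedDerivWithin
          (by exact_mod_cast hilt) (uniqueDiffOn_Ioc 0 T)) (x - a) hxmem
        rw [← hieq, iteratedDerivWithin_succ]
        exact hd.hasDerivWithinAt
      have hsub : HasDerivWithinAt (fun y : ℝ => y - a) 1 (Ioc a b) x :=
        ((hasDerivAt_id x).sub_const a).hasDerivWithinAt
      have hmap : MapsTo (fun y : ℝ => y - a) (Ioc a b) (Ioc 0 T) := by
        intro y hy
        rw [mem_Ioc] at hy
        simp only [mem_Ioc]
        constructor
        · linarith [hy.1]
        · rw [hTdef]; linarith [hy.2]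
      have hcomp := (hKd.comp x hsub hmap).mono_of_mem_nhdsWithin hIocmem
      simpa using hcomp.const_mul (g j a)
    have hadd := hL.add hS
    have heq : (k₀ (x - a) * gg m a + ∫ s in a..x, k₀ (x - s) * gg (m + 1) s)
        + (∑ j ∈ Finset.range m, g j a
            * iteratedDerivWithin (m - j) k (Ioc 0 T) (x - a))
        = Φ (m + 1) x := by
      rw [hΦdef]
      simp only
      rw [Finset.sum_range_succ]
      have h1 : ∀ j ∈ Finset.range m, g j a
          * iteratedDerivWithin (m + 1 - 1 - j) k (Ioc 0 T) (x - a)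
          = g j a * iteratedDerivWithin (m - j) k (Ioc 0 T) (x - a) := by
        intro j hj
        have hje : m + 1 - 1 - j = m - j := by omega
        rw [hje]
      rw [Finset.sum_congr rfl h1]
      have h2 : iteratedDerivWithin (m + 1 - 1 - m) k (Ioc 0 T) (x - a) = k (x - a) := by
        rw [show m + 1 - 1 - m = 0 from by omega, iteratedDerivWithin_zero]
      rw [h2]
      have h3 : k₀ (x - a) = k (x - a) := indicator_of_mem (mem_Ioc.mpr ⟨hxa, hxT⟩) k
      rw [h3, hggeq m a haIcc]
      ring
    rw [heq] at hadd
    exact hadd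
  -- the equality of iterated derivatives with Φ
  set F : ℝ → ℝ := fun t => ∫ s in a..t, k (t - s) * f s with hFdef
  have main : ∀ m, m ≤ n → ∀ x ∈ Ioc a b,
      iteratedDerivWithin m F (Icc a b) x = Φ m x := by
    intro m
    induction m with
    | zero =>
      intro _ x hx
      rw [iteratedDerivWithin_zero, hΦdef]
      simp only [Finset.range_zero, Finset.sum_empty, add_zero]
      rw [hFdef]
      have := hIntEq f (gg 0) (fun t ht => by
        rw [hggeq 0 t ht, hgdef]; simp [iteratedDerivWithin_zero])
        x (Ioc_subset_Icc_self hx)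
      exact this
    | succ m ih =>
      intro hm x hx
      have hm' : m ≤ n := le_of_lt hm
      have hxIcc : x ∈ Icc a b := Ioc_subset_Icc_self hx
      have hIocmem : Ioc a b ∈ 𝓝[Icc a b] x := by
        rw [mem_nhdsWithin]
        exact ⟨Ioi a, isOpen_Ioi, hx.1, fun y hy => ⟨hy.1, hy.2.2⟩⟩
      have hEv : iteratedDerivWithin m F (Icc a b) =ᶠ[𝓝[Icc a b] x] Φ m := by
        filter_upwards [hIocmem] with y hy
        exact ih hm' y hy
      rw [iteratedDerivWithin_succ]
      rw [hEv.derivWithin_eq (ih hm' x hx)]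
      exact (hasD m hm x hx).derivWithin ((uniqueDiffOn_Icc hab) x hxIcc)
  intro m hm x hx
  constructor
  · intro hmn
    have hIocmem : Ioc a b ∈ 𝓝[Icc a b] x := by
      rw [mem_nhdsWithin]
      exact ⟨Ioi a, isOpen_Ioi, hx.1, fun y hy => ⟨hy.1, hy.2.2⟩⟩
    have hEv : iteratedDerivWithin m F (Icc a b) =ᶠ[𝓝[Icc a b] x] Φ m := by
      filter_upwards [hIocmem] with y hy
      exact main m (le_of_lt hmn) y hy
    exact ((hasD m hmn x hx).congr_of_eventuallyEq hEv
      (main m (le_of_lt hmn) x hx)).differentiableWithinAt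
  · rw [main m hm x hx, hΦdef]
    simp only
    congr 1
    exact (hIntEq (g m) (gg m) (hggeq m) x (Ioc_subset_Icc_self hx)).symm

lemma polyQ_hasDerivAt (a : ℝ) (jj m : ℕ) (s : ℝ) :
    HasDerivAt (fun s : ℝ => if m ≤ jj then (s - a) ^ (jj - m) / ((jj - m).factorial : ℝ) else 0)
      (if m + 1 ≤ jj then (s - a) ^ (jj - (m + 1)) / ((jj - (m + 1)).factorial : ℝ) else 0) s := by
  by_cases h1 : m + 1 ≤ jj
  · have h0 : m ≤ jj := by omega
    simp only [if_pos h1, if_pos h0]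
    have hp : jj - m = (jj - (m + 1)) + 1 := by omega
    have hD1 : HasDerivAt (fun s : ℝ => (s - a) ^ (jj - m))
        ((jj - m : ℕ) * (s - a) ^ (jj - m - 1) * 1) s :=
      ((hasDerivAt_id s).sub_const a).pow _
    have hD2 := hD1.div_const ((jj - m).factorial : ℝ)
    have he : (jj - m : ℕ) * (s - a) ^ (jj - m - 1) * 1 / ((jj - m).factorial : ℝ)
        = (s - a) ^ (jj - (m + 1)) / ((jj - (m + 1)).factorial : ℝ) := by
      rw [hp]
      have h2 : jj - (m + 1) + 1 - 1 = jj - (m + 1) := by omega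
      rw [h2, Nat.factorial_succ, Nat.cast_mul, mul_one]
      have hne : ((jj - (m + 1) + 1 : ℕ) : ℝ) ≠ 0 := by positivity
      exact mul_div_mul_left _ _ hne
    rwa [he] at hD2
  · by_cases h0 : m ≤ jj
    · have hjm : jj = m := by omega
      subst hjm
      simp only [if_pos (le_refl jj), if_neg h1, Nat.sub_self]
      exact (hasDerivAt_const s (1:ℝ)).congr_of_eventuallyEq
        (Eventually.of_forall fun t => by simp)
    · simp only [if_neg h0, if_neg h1]
      exact hasDerivAt_const s 0

lemma poly_sum_iteratedDeriv (a : ℝ) (N : ℕ) (c : ℕ → ℝ) :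
    ∀ m, iteratedDeriv m
        (fun s : ℝ => ∑ j ∈ Finset.range N, c j * ((s - a) ^ j / (j.factorial : ℝ)))
      = fun s => ∑ j ∈ Finset.range N,
          c j * (if m ≤ j then (s - a) ^ (j - m) / ((j - m).factorial : ℝ) else 0) := by
  intro m
  induction m with
  | zero =>
    funext s
    simp [iteratedDeriv_zero, Nat.zero_le]
  | succ m ih =>
    rw [iteratedDeriv_succ, ih]
    funext s
    exact (HasDerivAt.fun_sum fun j _ => (polyQ_hasDerivAt a j m s).const_mul (c j)).deriv

lemma iterDW_eq_iterD {P : ℝ → ℝ} {s : Set ℝ} (hs : UniqueDiffOn ℝ s)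
    (hP : ∀ m, Differentiable ℝ (iteratedDeriv m P)) :
    ∀ m, ∀ x ∈ s, iteratedDerivWithin m P s x = iteratedDeriv m P x := by
  intro m
  induction m with
  | zero => intro x hx; simp
  | succ m ih =>
    intro x hx
    rw [iteratedDerivWithin_succ, iteratedDeriv_succ]
    rw [derivWithin_congr (fun y hy => ih y hy) (ih x hx)]
    exact ((hP m) x).derivWithin (hs x hx)

/-- **Relation between left-sided general fractional Caputo and Riemann–Liouville
derivatives.** If `(k, κ)` satisfy the modified Sonine condition of order `n` on
`(0, b-a]`, `k` is `(n-1)`-times continuously differentiable on `(0, b-a]` with integrable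
derivatives, and `f` is `n`-times continuously differentiable on `[a, b]`, then for every
`x ∈ (a, b]` the left RL derivative of `f` exists at `x` and
`ᶜD_k f(x) = ᴿᴸD_k f(x) − Σ_{j<n} f⁽ʲ⁾(a) k⁽ⁿ⁻ʲ⁻¹⁾(x-a)`, equivalently
`ᶜD_k f(x) = ᴿᴸD_k [f(·) − Σ_{j<n} f⁽ʲ⁾(a) (·-a)ʲ/j!](x)`. -/
theorem caputo_eq_riemannLiouville_left
    (a b : ℝ) (hab : a < b) (n : ℕ) (hn : 1 ≤ n)
    (k κ : ℝ → ℝ) (hkm : Measurable k) (hκm : Measurable κ)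
    (hkI : IntegrableOn k (Ioc 0 (b - a)))
    (hκI : IntegrableOn κ (Ioc 0 (b - a)))
    (hSonine : ∀ y, 0 < y → y ≤ b - a →
      ∫ s in (0:ℝ)..y, k (y - s) * κ s = y ^ (n - 1) / (n - 1).factorial)
    (hkC : ContDiffOn ℝ (n - 1) k (Ioc 0 (b - a)))
    (hkD : ∀ j ≤ n - 1,
      IntegrableOn (iteratedDerivWithin j k (Ioc 0 (b - a))) (Ioc 0 (b - a)))
    (f : ℝ → ℝ) (hf : ContDiffOn ℝ n f (Icc a b)) :
    ∀ x ∈ Ioc a b,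
      (∀ j < n, DifferentiableWithinAt ℝ
          (iteratedDerivWithin j (fun t => ∫ s in a..t, k (t - s) * f s) (Icc a b))
          (Icc a b) x) ∧
      (∫ s in a..x, k (x - s) * iteratedDerivWithin n f (Icc a b) s) =
        iteratedDerivWithin n (fun t => ∫ s in a..t, k (t - s) * f s) (Icc a b) x
          - ∑ j ∈ Finset.range n,
              iteratedDerivWithin j f (Icc a b) a *
                iteratedDerivWithin (n - j - 1) k (Ioc 0 (b - a)) (x - a) ∧
      (∫ s in a..x, k (x - s) * iteratedDerivWithin n f (Icc a b) s) =
        iteratedDerivWithin n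
          (fun t => ∫ s in a..t, k (t - s) *
            (f s - ∑ j ∈ Finset.range n,
              iteratedDerivWithin j f (Icc a b) a * (s - a) ^ j / j.factorial))
          (Icc a b) x := by
  intro x hx
  have hxIcc : x ∈ Icc a b := Ioc_subset_Icc_self hx
  have hUD := uniqueDiffOn_Icc hab
  have hkey := keyLemma a b hab n k hkm hkI hkC f hf
  obtain ⟨hdiff, hval⟩ := hkey n le_rfl x hx
  refine ⟨fun j hj => (hkey j (le_of_lt hj) x hx).1 hj, ?_, ?_⟩
  · rw [hval]
    have hsum : ∑ j ∈ Finset.range n, iteratedDerivWithin j f (Icc a b) a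
          * iteratedDerivWithin (n - 1 - j) k (Ioc 0 (b - a)) (x - a)
        = ∑ j ∈ Finset.range n, iteratedDerivWithin j f (Icc a b) a
          * iteratedDerivWithin (n - j - 1) k (Ioc 0 (b - a)) (x - a) := by
      apply Finset.sum_congr rfl
      intro j _
      rw [show n - 1 - j = n - j - 1 from by omega]
    rw [hsum]
    ring
  · -- third conclusion
    set c : ℕ → ℝ := fun j => iteratedDerivWithin j f (Icc a b) a with hc
    set P : ℝ → ℝ := fun s => ∑ j ∈ Finset.range n, c j * (s - a) ^ j / (j.factorial : ℝ)
      with hP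
    have hPP : P = fun s => ∑ j ∈ Finset.range n, c j * ((s - a) ^ j / (j.factorial : ℝ)) := by
      funext s
      exact Finset.sum_congr rfl fun j _ => mul_div_assoc _ _ _
    have hQ : ∀ m, iteratedDeriv m P = fun s => ∑ j ∈ Finset.range n,
        c j * (if m ≤ j then (s - a) ^ (j - m) / ((j - m).factorial : ℝ) else 0) := by
      intro m
      rw [hPP]
      exact poly_sum_iteratedDeriv a n c m
    have hPdiff : ∀ m, Differentiable ℝ (iteratedDeriv m P) := by
      intro m
      rw [hQ m]
      exact fun s => (HasDerivAt.fun_sum fun j _ =>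
        (polyQ_hasDerivAt a j m s).const_mul (c j)).differentiableAt
    have hPW : ∀ m, ∀ y ∈ Icc a b, iteratedDerivWithin m P (Icc a b) y
        = iteratedDeriv m P y := fun m y hy => iterDW_eq_iterD hUD hPdiff m y hy
    have hPcont : ContDiff ℝ (n : ℕ∞) P := by
      rw [hP]
      apply ContDiff.sum
      intro j _
      exact (contDiff_const.mul ((contDiff_id.sub contDiff_const).pow j)).div_const _
    have hfP : ContDiffOn ℝ (n : ℕ∞) (f - P) (Icc a b) := hf.sub hPcont.contDiffOn
    have hsubj : ∀ m, m ≤ n → ∀ y ∈ Icc a b, iteratedDerivWithin m (f - P) (Icc a b) y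
        = iteratedDerivWithin m f (Icc a b) y - iteratedDeriv m P y := by
      intro m hm y hy
      rw [iteratedDerivWithin_sub hy hUD ((hf.contDiffWithinAt hy).of_le (by exact_mod_cast hm))
        ((hPcont.contDiffOn.contDiffWithinAt hy).of_le (by exact_mod_cast hm))]
      rw [hPW m y hy]
    have hQa : ∀ j, j < n → iteratedDeriv j P a = c j := by
      intro j hj
      rw [hQ j]
      simp only [sub_self]
      have h1 : ∀ i ∈ Finset.range n,
          c i * (if j ≤ i then (0:ℝ) ^ (i - j) / ((i - j).factorial : ℝ) else 0)
          = if i = j then c i else 0 := by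
        intro i _
        rcases eq_or_ne i j with rfl | hne
        · simp
        · by_cases hji : j ≤ i
          · have hij0 : i - j ≠ 0 := by omega
            simp [hji, zero_pow hij0, hne]
          · simp [hji, hne]
      rw [Finset.sum_congr rfl h1, Finset.sum_ite_eq' (Finset.range n) j c]
      simp [Finset.mem_range.mpr hj]
    have hQn : ∀ y : ℝ, iteratedDeriv n P y = 0 := by
      intro y
      rw [hQ n]
      apply Finset.sum_eq_zero
      intro j hj
      have : ¬ (n ≤ j) := by
        have := Finset.mem_range.mp hj; omega
      simp [this]
    obtain ⟨_, hval2⟩ := keyLemma a b hab n k hkm hkI hkC (f - P) hfP n le_rfl x hx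
    have hzero : ∑ j ∈ Finset.range n, iteratedDerivWithin j (f - P) (Icc a b) a
        * iteratedDerivWithin (n - 1 - j) k (Ioc 0 (b - a)) (x - a) = 0 := by
      apply Finset.sum_eq_zero
      intro j hj
      have hjn : j < n := Finset.mem_range.mp hj
      rw [hsubj j (le_of_lt hjn) a ⟨le_rfl, le_of_lt hab⟩, hQa j hjn]
      simp [hc]
    have hIcong : (∫ s in a..x, k (x - s) * iteratedDerivWithin n (f - P) (Icc a b) s)
        = ∫ s in a..x, k (x - s) * iteratedDerivWithin n f (Icc a b) s := by
      apply intervalIntegral.integral_congr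
      intro s hs
      rw [uIcc_of_le (le_of_lt hx.1)] at hs
      have hsIcc : s ∈ Icc a b := ⟨hs.1, le_trans hs.2 hx.2⟩
      show k (x - s) * iteratedDerivWithin n (f - P) (Icc a b) s
        = k (x - s) * iteratedDerivWithin n f (Icc a b) s
      rw [hsubj n le_rfl s hsIcc, hQn s, sub_zero]
    rw [hzero, add_zero, hIcong] at hval2
    exact hval2.symm
end

section
/- (First fundamental theorem, left Riemann–Liouville case.) Let a < b be real numbers and n ≥ 1 a natural number. Let k, κ : ℝ → ℝ be measurable, integrable on (0, b−a], and satisfy the modified Sonine condition of order n. Then for every continuous function f : [a,b] → ℝ and every x ∈ (a,b], the left-sided general fractional Riemann–Liouville derivative of the left-sided general fractional integral of f exists at x and ᴿᴸD_k ( I_κ f )(x) = f(x). -/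
open MeasureTheory intervalIntegral Set

private lemma ftc_aux {a b : ℝ} {g : ℝ → ℝ} (hg : Continuous g)
    {x : ℝ} (hx : x ∈ Icc a b) :
    HasDerivWithinAt (fun t => ∫ u in a..t, g u) (g x) (Icc a b) x := by
  haveI : Fact (x ∈ Icc a b) := ⟨hx⟩
  exact intervalIntegral.integral_hasDerivWithinAt_right
    (hg.intervalIntegrable a x)
    ⟨Icc a b, self_mem_nhdsWithin, hg.aestronglyMeasurable.restrict⟩
    hg.continuousAt.continuousWithinAt

private lemma expand_aux {a : ℝ} {g : ℝ → ℝ} (hg : Continuous g) (j : ℕ) (t : ℝ) :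
    ∫ u in a..t, (t - u) ^ j * g u
      = ∑ i ∈ Finset.range (j + 1),
          (j.choose i : ℝ) * t ^ i * ∫ u in a..t, (-u) ^ (j - i) * g u := by
  have hpt : ∀ u : ℝ, (t - u) ^ j * g u
      = ∑ i ∈ Finset.range (j + 1), (j.choose i : ℝ) * t ^ i * ((-u) ^ (j - i) * g u) := by
    intro u
    rw [sub_eq_add_neg, add_pow, Finset.sum_mul]
    exact Finset.sum_congr rfl fun i _ => by ring
  calc ∫ u in a..t, (t - u) ^ j * g u
      = ∫ u in a..t, ∑ i ∈ Finset.range (j + 1),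
          (j.choose i : ℝ) * t ^ i * ((-u) ^ (j - i) * g u) :=
        intervalIntegral.integral_congr fun u _ => hpt u
    _ = ∑ i ∈ Finset.range (j + 1), ∫ u in a..t,
          (j.choose i : ℝ) * t ^ i * ((-u) ^ (j - i) * g u) := by
        apply intervalIntegral.integral_finset_sum
        intro i _
        exact (Continuous.intervalIntegrable (by continuity) _ _)
    _ = ∑ i ∈ Finset.range (j + 1),
          (j.choose i : ℝ) * t ^ i * ∫ u in a..t, (-u) ^ (j - i) * g u := by
        refine Finset.sum_congr rfl fun i _ => ?_
        exact intervalIntegral.integral_const_mul _ _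

private lemma Q_deriv {a b : ℝ} {g : ℝ → ℝ} (hg : Continuous g) (j : ℕ)
    {x : ℝ} (hx : x ∈ Icc a b) :
    HasDerivWithinAt (fun t => ∫ u in a..t, (t - u) ^ (j + 1) * g u)
      (((j : ℝ) + 1) * ∫ u in a..x, (x - u) ^ j * g u) (Icc a b) x := by
  set A : ℕ → ℝ → ℝ := fun i t => ∫ u in a..t, (-u) ^ (j + 1 - i) * g u with hA
  have hAd : ∀ i, HasDerivWithinAt (A i) ((-x) ^ (j + 1 - i) * g x) (Icc a b) x := by
    intro i
    exact ftc_aux (by continuity) hx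
  have key : HasDerivWithinAt
      (fun t => ∑ i ∈ Finset.range (j + 2), ((j+1).choose i : ℝ) * t ^ i * A i t)
      (∑ i ∈ Finset.range (j + 2),
        (((j+1).choose i : ℝ) * ((i : ℝ) * x ^ (i - 1)) * A i x
          + ((j+1).choose i : ℝ) * x ^ i * ((-x) ^ (j + 1 - i) * g x)))
      (Icc a b) x := by
    apply HasDerivWithinAt.fun_sum
    intro i _
    have h1 : HasDerivWithinAt (fun t : ℝ => ((j+1).choose i : ℝ) * t ^ i)
        (((j+1).choose i : ℝ) * ((i : ℝ) * x ^ (i - 1))) (Icc a b) x :=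
      ((hasDerivAt_pow i x).const_mul _).hasDerivWithinAt
    exact h1.mul (hAd i)
  have heq : ∀ t : ℝ, ∫ u in a..t, (t - u) ^ (j + 1) * g u
      = ∑ i ∈ Finset.range (j + 2), ((j+1).choose i : ℝ) * t ^ i * A i t :=
    fun t => expand_aux hg (j + 1) t
  have main := key.congr (fun y _ => heq y) (heq x)
  refine main.congr_deriv ?_
  symm
  rw [Finset.sum_add_distrib]
  have hzero : (∑ i ∈ Finset.range (j + 2),
      ((j+1).choose i : ℝ) * x ^ i * ((-x) ^ (j + 1 - i) * g x)) = 0 := by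
    have : (∑ i ∈ Finset.range (j + 2),
        ((j+1).choose i : ℝ) * x ^ i * ((-x) ^ (j + 1 - i) * g x))
        = (∑ i ∈ Finset.range (j + 2), x ^ i * (-x) ^ (j + 1 - i) * ((j+1).choose i : ℝ)) * g x := by
      rw [Finset.sum_mul]
      exact Finset.sum_congr rfl fun i _ => by ring
    rw [this, ← add_pow]
    simp
  rw [hzero, add_zero]
  have hfirst : (∑ i ∈ Finset.range (j + 2),
      ((j+1).choose i : ℝ) * ((i : ℝ) * x ^ (i - 1)) * A i x)
      = ((j : ℝ) + 1) * ∑ i ∈ Finset.range (j + 1),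
          (j.choose i : ℝ) * x ^ i * A (i + 1) x := by
    rw [Finset.sum_range_succ']
    simp only [Nat.cast_zero, zero_mul, mul_zero, add_zero, zero_add]
    rw [Finset.mul_sum]
    refine Finset.sum_congr rfl fun i _ => ?_
    have hc : ((j+1).choose (i+1) : ℝ) * ((i : ℝ) + 1) = ((j : ℝ) + 1) * (j.choose i : ℝ) := by
      have := Nat.add_one_mul_choose_eq j i
      have h2 : ((j.succ * j.choose i : ℕ) : ℝ) = (((j+1).choose (i+1) * (i+1) : ℕ) : ℝ) := by
        rw [this]
      push_cast at h2
      push_cast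
      linarith [h2]
    push_cast
    calc ((j+1).choose (i+1) : ℝ) * (((i:ℝ) + 1) * x ^ (i + 1 - 1)) * A (i+1) x
        = (((j+1).choose (i+1) : ℝ) * ((i : ℝ) + 1)) * x ^ i * A (i+1) x := by
          rw [Nat.add_sub_cancel]; ring
      _ = ((j : ℝ) + 1) * ((j.choose i : ℝ) * x ^ i * A (i+1) x) := by rw [hc]; ring
  rw [hfirst, expand_aux hg j x]
  congr 1
  refine Finset.sum_congr rfl fun i _ => ?_
  have : j + 1 - (i + 1) = j - i := by omega
  rw [hA]
  simp only [this]

private lemma fubini_aux (a b : ℝ) (hab : a < b) (n : ℕ)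
    (k κ : ℝ → ℝ) (hkm : Measurable k) (hκm : Measurable κ)
    (hkI : IntegrableOn k (Ioc 0 (b - a)))
    (hκI : IntegrableOn κ (Ioc 0 (b - a)))
    (hSonine : ∀ y, 0 < y → y ≤ b - a →
      ∫ s in (0:ℝ)..y, k (y - s) * κ s = y ^ (n - 1) / (n - 1).factorial)
    (g : ℝ → ℝ) (hg : Continuous g) {t : ℝ} (ht : t ∈ Icc a b) :
    ∫ s in a..t, k (t - s) * (∫ u in a..s, κ (s - u) * g u)
      = ∫ u in a..t, (t - u) ^ (n - 1) / (n - 1).factorial * g u := by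
  rcases eq_or_lt_of_le ht.1 with h | hat
  · rw [← h]; simp
  -- bound for g
  obtain ⟨M0, hM0⟩ := isCompact_Icc.exists_bound_of_continuousOn
    (hg.continuousOn : ContinuousOn g (Icc a b))
  set M := max M0 0 with hMdef
  have hM : ∀ y ∈ Icc a b, |g y| ≤ M := fun y hy => le_trans (hM0 y hy) (le_max_left _ _)
  have hMnn : 0 ≤ M := le_max_right _ _
  -- integrability of translates of κ and k
  have hκs : ∀ s ∈ Ioc a t, IntegrableOn (fun u => κ (s - u)) (Ioc a s) := by
    intro s hs
    have h1 : IntervalIntegrable κ volume 0 (s - a) := by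
      rw [intervalIntegrable_iff_integrableOn_Ioc_of_le (by linarith [hs.1])]
      exact hκI.mono_set (Ioc_subset_Ioc le_rfl (by linarith [hs.2, ht.2]))
    have h2 := h1.comp_sub_left s
    rw [intervalIntegrable_iff] at h2
    have he : Set.uIoc (s - 0) (s - (s - a)) = Ioc a s := by
      rw [sub_zero, sub_sub_cancel, uIoc_of_ge (by linarith [hs.1])]
    rwa [he] at h2
  have hks : IntegrableOn (fun s => k (t - s)) (Ioc a t) := by
    have h1 : IntervalIntegrable k volume 0 (t - a) := by
      rw [intervalIntegrable_iff_integrableOn_Ioc_of_le (by linarith)]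
      exact hkI.mono_set (Ioc_subset_Ioc le_rfl (by linarith [ht.2]))
    have h2 := h1.comp_sub_left t
    rw [intervalIntegrable_iff] at h2
    have he : Set.uIoc (t - 0) (t - (t - a)) = Ioc a t := by
      rw [sub_zero, sub_sub_cancel, uIoc_of_ge (by linarith)]
    rwa [he] at h2
  -- integrability of the inner products
  have hprod : ∀ s ∈ Ioc a t, IntegrableOn (fun u => κ (s - u) * g u) (Ioc a s) := by
    intro s hs
    apply Integrable.mono' (((hκs s hs).norm.const_mul M))
    · exact ((hκm.comp (measurable_const.sub measurable_id)).aestronglyMeasurable).mul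
        hg.aestronglyMeasurable.restrict
    · filter_upwards [ae_restrict_mem measurableSet_Ioc] with u hu
      rw [norm_mul]
      have hub : u ∈ Icc a b := ⟨hu.1.le, by linarith [hu.2, hs.2, ht.2]⟩
      calc ‖κ (s - u)‖ * ‖g u‖ ≤ ‖κ (s - u)‖ * M :=
            mul_le_mul_of_nonneg_left (hM u hub) (norm_nonneg _)
        _ = M * ‖κ (s - u)‖ := mul_comm _ _
  -- the product function
  set Φ : ℝ × ℝ → ℝ := fun p =>
    k (t - p.1) * ({q : ℝ × ℝ | a < q.2 ∧ q.2 ≤ q.1}.indicator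
      (fun q => κ (q.1 - q.2) * g q.2) p) with hΦdef
  have hΦ_eq : ∀ s u : ℝ, Φ (s, u)
      = k (t - s) * (Ioc a s).indicator (fun u => κ (s - u) * g u) u := by
    intro s u
    simp only [hΦdef, Set.indicator_apply, Set.mem_setOf_eq, Set.mem_Ioc]
  have hΦm : AEStronglyMeasurable Φ ((volume.restrict (Ioc a t)).prod volume) := by
    apply Measurable.aestronglyMeasurable
    apply (hkm.comp (measurable_const.sub measurable_fst)).mul
    apply Measurable.indicator
    · exact (hκm.comp (measurable_fst.sub measurable_snd)).mul
        (hg.measurable.comp measurable_snd)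
    · have he : {q : ℝ × ℝ | a < q.2 ∧ q.2 ≤ q.1}
          = {q : ℝ × ℝ | a < q.2} ∩ {q : ℝ × ℝ | q.2 ≤ q.1} := rfl
      rw [he]
      exact (measurableSet_lt measurable_const measurable_snd).inter
        (measurableSet_le measurable_snd measurable_fst)
  -- inner integrability
  have hinner : ∀ s ∈ Ioc a t, Integrable (fun u => Φ (s, u)) volume := by
    intro s hs
    simp only [hΦ_eq]
    exact ((integrable_indicator_iff measurableSet_Ioc).2 (hprod s hs)).const_mul _
  -- bound for the norm integral
  set C := M * ∫ v in Ioc 0 (b - a), |κ v| with hCdef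
  have hbound : ∀ s ∈ Ioc a t, (∫ u, ‖Φ (s, u)‖) ≤ ‖k (t - s)‖ * C := by
    intro s hs
    have hstep1 : (∫ u, ‖Φ (s, u)‖)
        = ‖k (t - s)‖ * ∫ u in Ioc a s, ‖κ (s - u) * g u‖ := by
      simp only [hΦ_eq, norm_mul]
      rw [MeasureTheory.integral_const_mul]
      congr 1
      rw [← MeasureTheory.integral_indicator measurableSet_Ioc]
      congr 1
      funext u
      rw [norm_indicator_eq_indicator_norm]
      simp only [norm_mul]
    rw [hstep1]
    have hstep2 : (∫ u in Ioc a s, ‖κ (s - u) * g u‖)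
        ≤ ∫ u in Ioc a s, M * |κ (s - u)| := by
      apply setIntegral_mono_on
      · exact (hprod s hs).norm
      · exact ((hκs s hs).abs.const_mul M)
      · exact measurableSet_Ioc
      · intro u hu
        have hub : u ∈ Icc a b := ⟨hu.1.le, by linarith [hu.2, hs.2, ht.2]⟩
        rw [norm_mul]
        calc ‖κ (s - u)‖ * ‖g u‖ ≤ ‖κ (s - u)‖ * M :=
              mul_le_mul_of_nonneg_left (hM u hub) (norm_nonneg _)
          _ = M * |κ (s - u)| := mul_comm _ _
    have hstep3 : (∫ u in Ioc a s, M * |κ (s - u)|) ≤ C := by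
      rw [MeasureTheory.integral_const_mul, hCdef]
      apply mul_le_mul_of_nonneg_left _ hMnn
      have hchg : (∫ u in Ioc a s, |κ (s - u)|) = ∫ v in Ioc 0 (s - a), |κ v| := by
        rw [← intervalIntegral.integral_of_le hs.1.le,
          intervalIntegral.integral_comp_sub_left (fun v => |κ v|) s, sub_self,
          intervalIntegral.integral_of_le (by linarith [hs.1] : (0:ℝ) ≤ s - a)]
      rw [hchg]
      apply setIntegral_mono_set hκI.abs
      · filter_upwards with v using abs_nonneg _
      · exact HasSubset.Subset.eventuallyLE
          (Ioc_subset_Ioc le_rfl (by linarith [hs.2, ht.2]))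
    exact mul_le_mul_of_nonneg_left (hstep2.trans hstep3) (norm_nonneg _)
  -- full integrability on the product
  have hInt : Integrable Φ ((volume.restrict (Ioc a t)).prod volume) := by
    rw [integrable_prod_iff hΦm]
    constructor
    · filter_upwards [ae_restrict_mem measurableSet_Ioc] with s hs using hinner s hs
    · apply Integrable.mono' (hks.norm.mul_const C)
      · exact hΦm.norm.integral_prod_right'
      · filter_upwards [ae_restrict_mem measurableSet_Ioc] with s hs
        rw [Real.norm_eq_abs, abs_of_nonneg (integral_nonneg fun u => norm_nonneg _)]
        exact hbound s hs
  have hswap := MeasureTheory.integral_integral_swap (f := fun s u => Φ (s, u))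
    (μ := volume.restrict (Ioc a t)) (ν := volume) hInt
  -- left-hand side
  have hL : (∫ s in Ioc a t, ∫ u, Φ (s, u))
      = ∫ s in a..t, k (t - s) * ∫ u in a..s, κ (s - u) * g u := by
    rw [intervalIntegral.integral_of_le hat.le]
    apply setIntegral_congr_fun measurableSet_Ioc
    intro s hs
    simp only [hΦ_eq]
    rw [MeasureTheory.integral_const_mul, MeasureTheory.integral_indicator measurableSet_Ioc,
      ← intervalIntegral.integral_of_le hs.1.le]
  -- right-hand side
  have hψ0 : ∀ u, u ∉ Ioc a t → (∫ s in Ioc a t, Φ (s, u)) = 0 := by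
    intro u hu
    have hz : ∀ s ∈ Ioc a t, Φ (s, u) = (0:ℝ) := by
      intro s hs
      rw [hΦ_eq, Set.indicator_of_notMem, mul_zero]
      rw [Set.mem_Ioc] at hu
      intro hmem
      rw [Set.mem_Ioc] at hmem
      exact hu ⟨hmem.1, hmem.2.trans hs.2⟩
    rw [setIntegral_congr_fun measurableSet_Ioc hz]
    simp
  have hψ1 : ∀ u ∈ Ioo a t, (∫ s in Ioc a t, Φ (s, u))
      = (t - u) ^ (n - 1) / (n - 1).factorial * g u := by
    intro u hu
    have hstep : ∀ s ∈ Ioc a t, Φ (s, u)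
        = (Icc u t).indicator (fun s => k (t - s) * κ (s - u) * g u) s := by
      intro s hs
      rw [hΦ_eq]
      by_cases hus : u ≤ s
      · rw [Set.indicator_of_mem (Set.mem_Ioc.2 ⟨hu.1, hus⟩),
          Set.indicator_of_mem (Set.mem_Icc.2 ⟨hus, hs.2⟩)]
        ring
      · rw [Set.indicator_of_notMem, Set.indicator_of_notMem, mul_zero]
        · intro hmem; exact hus (Set.mem_Icc.1 hmem).1
        · intro hmem; exact hus (Set.mem_Ioc.1 hmem).2
    have hsub1 : (∫ s in u..t, k (t - s) * κ (s - u))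
        = ∫ s in u..t, (fun v => k ((t - u) - v) * κ v) (s - u) := by
      apply intervalIntegral.integral_congr
      intro s _
      simp only
      rw [show (t - u) - (s - u) = t - s by ring]
    calc (∫ s in Ioc a t, Φ (s, u))
        = ∫ s in Ioc a t, (Icc u t).indicator (fun s => k (t - s) * κ (s - u) * g u) s :=
          setIntegral_congr_fun measurableSet_Ioc hstep
      _ = ∫ s in Ioc a t ∩ Icc u t, k (t - s) * κ (s - u) * g u := by
          rw [setIntegral_indicator measurableSet_Icc]
      _ = ∫ s in Icc u t, k (t - s) * κ (s - u) * g u := by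
          rw [show Ioc a t ∩ Icc u t = Icc u t from
            Set.inter_eq_self_of_subset_right fun s hs => Set.mem_Ioc.2
              ⟨lt_of_lt_of_le hu.1 (Set.mem_Icc.1 hs).1, (Set.mem_Icc.1 hs).2⟩]
      _ = ∫ s in Ioc u t, k (t - s) * κ (s - u) * g u := integral_Icc_eq_integral_Ioc
      _ = (∫ s in Ioc u t, k (t - s) * κ (s - u)) * g u := by
          rw [← MeasureTheory.integral_mul_const]
      _ = (∫ s in u..t, k (t - s) * κ (s - u)) * g u := by
          rw [intervalIntegral.integral_of_le hu.2.le]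
      _ = (∫ v in (0:ℝ)..(t - u), k ((t - u) - v) * κ v) * g u := by
          rw [hsub1, intervalIntegral.integral_comp_sub_right
            (fun v => k ((t - u) - v) * κ v) u, sub_self]
      _ = (t - u) ^ (n - 1) / (n - 1).factorial * g u := by
          rw [hSonine (t - u) (by linarith [hu.2]) (by linarith [hu.1, ht.2])]
  have hR : (∫ u, ∫ s in Ioc a t, Φ (s, u))
      = ∫ u in a..t, (t - u) ^ (n - 1) / (n - 1).factorial * g u := by
    calc (∫ u, ∫ s in Ioc a t, Φ (s, u))
        = ∫ u, (Ioc a t).indicator (fun u => ∫ s in Ioc a t, Φ (s, u)) u := by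
          congr 1
          funext u
          by_cases hu : u ∈ Ioc a t
          · rw [Set.indicator_of_mem hu]
          · rw [Set.indicator_of_notMem hu]; exact hψ0 u hu
      _ = ∫ u in Ioc a t, ∫ s in Ioc a t, Φ (s, u) :=
          MeasureTheory.integral_indicator measurableSet_Ioc
      _ = ∫ u in Ioo a t, ∫ s in Ioc a t, Φ (s, u) := integral_Ioc_eq_integral_Ioo
      _ = ∫ u in Ioo a t, (t - u) ^ (n - 1) / (n - 1).factorial * g u :=
          setIntegral_congr_fun measurableSet_Ioo hψ1
      _ = ∫ u in Ioc a t, (t - u) ^ (n - 1) / (n - 1).factorial * g u :=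
          integral_Ioc_eq_integral_Ioo.symm
      _ = ∫ u in a..t, (t - u) ^ (n - 1) / (n - 1).factorial * g u :=
          (intervalIntegral.integral_of_le hat.le).symm
  rw [← hL, hswap]
  exact hR

/-- **First fundamental theorem of general fractional calculus, left Riemann–Liouville
case.** If `(k, κ)` satisfy the modified Sonine condition of order `n` on `(0, b-a]`,
then for every continuous `f : [a,b] → ℝ` and every `x ∈ (a, b]` the left-sided general
fractional Riemann–Liouville derivative of the left-sided general fractional integral
of `f` exists at `x` and equals `f x`. -/
theorem first_fundamental_left_riemannLiouville
    (a b : ℝ) (hab : a < b) (n : ℕ) (hn : 1 ≤ n)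
    (k κ : ℝ → ℝ) (hkm : Measurable k) (hκm : Measurable κ)
    (hkI : IntegrableOn k (Ioc 0 (b - a)))
    (hκI : IntegrableOn κ (Ioc 0 (b - a)))
    (hSonine : ∀ y, 0 < y → y ≤ b - a →
      ∫ s in (0:ℝ)..y, k (y - s) * κ s = y ^ (n - 1) / (n - 1).factorial)
    (f : ℝ → ℝ) (hf : ContinuousOn f (Icc a b)) :
    ∀ x ∈ Ioc a b,
      (∀ j < n, DifferentiableWithinAt ℝ
          (iteratedDerivWithin j
            (fun t => ∫ s in a..t, k (t - s) * (∫ u in a..s, κ (s - u) * f u))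
            (Icc a b))
          (Icc a b) x) ∧
      iteratedDerivWithin n
          (fun t => ∫ s in a..t, k (t - s) * (∫ u in a..s, κ (s - u) * f u))
          (Icc a b) x = f x := by
  intro x hx
  have hx' : x ∈ Icc a b := ⟨hx.1.le, hx.2⟩
  -- continuous global extension of f
  obtain ⟨g, hg, hgf⟩ : ∃ g : ℝ → ℝ, Continuous g ∧ EqOn f g (Icc a b) := by
    refine ⟨IccExtend hab.le ((Icc a b).restrict f), ?_, ?_⟩
    · exact Continuous.Icc_extend' (continuousOn_iff_continuous_restrict.mp hf)
    · intro y hy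
      rw [IccExtend_of_mem hab.le _ hy]
      rfl
  set F : ℝ → ℝ := fun t => ∫ s in a..t, k (t - s) * (∫ u in a..s, κ (s - u) * f u)
    with hFdef
  have hsub : ∀ t ∈ Icc a b, uIcc a t ⊆ Icc a b := by
    intro t htm
    rw [← uIcc_of_le hab.le]
    exact uIcc_subset_uIcc left_mem_uIcc (by rwa [uIcc_of_le hab.le])
  set Fn : ℕ → ℝ → ℝ := fun j t => (∫ u in a..t, (t - u) ^ j * g u) / j.factorial
    with hFndef
  -- F agrees with Fn (n-1) on Icc a b
  have hFH : EqOn F (Fn (n - 1)) (Icc a b) := by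
    intro t htm
    have e1 : F t = ∫ s in a..t, k (t - s) * (∫ u in a..s, κ (s - u) * g u) := by
      apply intervalIntegral.integral_congr
      intro s hs
      have hs' : s ∈ Icc a b := hsub t htm hs
      dsimp only
      congr 1
      apply intervalIntegral.integral_congr
      intro u hu
      dsimp only
      rw [hgf (hsub s hs' hu)]
    rw [e1, fubini_aux a b hab n k κ hkm hκm hkI hκI hSonine g hg htm, hFndef]
    simp only
    rw [eq_div_iff (by positivity : ((n-1).factorial : ℝ) ≠ 0)]
    rw [← intervalIntegral.integral_mul_const]
    apply intervalIntegral.integral_congr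
    intro u _
    field_simp
  -- derivatives of the Fn family
  have hFn_deriv : ∀ j : ℕ, ∀ y ∈ Icc a b,
      HasDerivWithinAt (Fn (j + 1)) (Fn j y) (Icc a b) y := by
    intro j y hy
    have h := (Q_deriv hg j hy).div_const ((j + 1).factorial : ℝ)
    have he : (((j : ℝ) + 1) * ∫ u in a..y, (y - u) ^ j * g u) / ((j+1).factorial : ℝ)
        = Fn j y := by
      rw [hFndef]
      simp only
      rw [Nat.factorial_succ]
      push_cast
      have h1 : ((j : ℝ) + 1) ≠ 0 := by positivity
      have h2 : ((j.factorial : ℝ)) ≠ 0 := by positivity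
      field_simp
    rw [he] at h
    exact h
  have hFn0 : ∀ y ∈ Icc a b, HasDerivWithinAt (Fn 0) (g y) (Icc a b) y := by
    intro y hy
    have h0 : Fn 0 = fun t => ∫ u in a..t, g u := by
      funext t
      rw [hFndef]
      simp
    rw [h0]
    exact ftc_aux hg hy
  have hFn_diff : ∀ j : ℕ, ∀ y ∈ Icc a b,
      DifferentiableWithinAt ℝ (Fn j) (Icc a b) y := by
    intro j y hy
    cases j with
    | zero => exact (hFn0 y hy).differentiableWithinAt
    | succ i => exact (hFn_deriv i y hy).differentiableWithinAt
  -- iterated derivatives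
  have key : ∀ j : ℕ, j ≤ n - 1 →
      EqOn (iteratedDerivWithin j F (Icc a b)) (Fn (n - 1 - j)) (Icc a b) := by
    intro j
    induction j with
    | zero =>
      intro _ y hy
      rw [iteratedDerivWithin_zero]
      simpa using hFH hy
    | succ i IH =>
      intro hj y hy
      have hi : i ≤ n - 1 := le_trans (Nat.le_succ i) hj
      obtain ⟨l, hl⟩ : ∃ l, n - 1 - i = l + 1 := ⟨n - 1 - i - 1, by omega⟩
      rw [iteratedDerivWithin_succ]
      rw [derivWithin_congr (IH hi) (IH hi hy)]
      rw [hl, (hFn_deriv l y hy).derivWithin ((uniqueDiffOn_Icc hab) y hy)]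
      congr 1
      omega
  constructor
  · intro j hj
    exact (hFn_diff (n - 1 - j) x hx').congr (key j (by omega)) (key j (by omega) hx')
  · obtain ⟨p, hp⟩ : ∃ p, n = p + 1 := ⟨n - 1, by omega⟩
    rw [hp, iteratedDerivWithin_succ]
    rw [derivWithin_congr (key p (by omega)) (key p (by omega) hx')]
    rw [show n - 1 - p = 0 by omega]
    rw [(hFn0 x hx').derivWithin (uniqueDiffOn_Icc hab x hx')]
    exact (hgf hx').symm
end

section
/- (First fundamental theorem, left Caputo case.) Let a < b be real numbers and n ≥ 1 a natural number. Let k, κ : ℝ → ℝ be measurable, integrable on (0, b−a], and satisfy the modified Sonine condition of order n, with k (n−1)-times continuously differentiable on (0, b−a] and each derivative k⁽ʲ⁾ (0 ≤ j ≤ n−1) integrable on (0, b−a]. Let f : [a,b] → ℝ be continuous and suppose φ := I_κ f is n-times continuously differentiable on [a,b] with φ⁽ʲ⁾(a) = 0 for all 0 ≤ j ≤ n−1. Then for every x ∈ (a,b], ᶜD_k ( I_κ f )(x) = f(x). -/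
open MeasureTheory intervalIntegral Set

/-- interval integral congruence on the open interval -/
lemma my_congr_Ioo {a x : ℝ} (hax : a ≤ x) {f g : ℝ → ℝ}
    (h : ∀ u ∈ Ioo a x, f u = g u) : ∫ u in a..x, f u = ∫ u in a..x, g u := by
  rw [intervalIntegral.integral_of_le hax, intervalIntegral.integral_of_le hax,
    MeasureTheory.integral_Ioc_eq_integral_Ioo, MeasureTheory.integral_Ioc_eq_integral_Ioo]
  exact setIntegral_congr_fun measurableSet_Ioo h

/-- The key Fubini-type swap lemma for convolution-type double integrals. -/
lemma my_swap (a b x : ℝ) (hax : a < x) (hxb : x ≤ b)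
    (ρ θ w : ℝ → ℝ) (hρm : Measurable ρ) (hθm : Measurable θ)
    (hρI : IntegrableOn ρ (Ioc 0 (b - a)))
    (hθI : IntegrableOn θ (Ioc 0 (b - a)))
    (hwm : Measurable w) (M : ℝ) (hM : ∀ u, |w u| ≤ M) :
    ∫ s in a..x, ρ (x - s) * ∫ u in a..s, θ (s - u) * w u
      = ∫ u in a..x, (∫ v in (0:ℝ)..(x - u), ρ (x - u - v) * θ v) * w u := by
  have hab : a < b := lt_of_lt_of_le hax hxb
  have hM0 : 0 ≤ M := le_trans (abs_nonneg _) (hM 0)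
  set μ := volume.restrict (Ioc a x) with hμ
  set Φ : ℝ × ℝ → ℝ :=
    fun p => ({q : ℝ × ℝ | a < q.2 ∧ q.2 ≤ q.1}).indicator
      (fun q => ρ (x - q.1) * (θ (q.1 - q.2) * w q.2)) p with hΦ
  set F : ℝ → ℝ → ℝ := fun s u => Φ (s, u) with hF
  -- pointwise descriptions of F
  have hF1 : ∀ s, F s = (Ioc a s).indicator (fun u => ρ (x - s) * (θ (s - u) * w u)) := by
    intro s; funext u
    simp only [hF, hΦ, Set.indicator_apply, Set.mem_setOf_eq, Set.mem_Ioc]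
  have hF2 : ∀ u, a < u → (fun s => F s u)
      = (Ici u).indicator (fun s => ρ (x - s) * (θ (s - u) * w u)) := by
    intro u hu; funext s
    simp only [hF, hΦ, Set.indicator_apply, Set.mem_setOf_eq, Set.mem_Ici, hu, true_and]
  -- measurability of Φ
  have hΦm : Measurable Φ := by
    apply Measurable.indicator
    · exact ((hρm.comp (measurable_const.sub measurable_fst)).mul
        ((hθm.comp (measurable_fst.sub measurable_snd)).mul (hwm.comp measurable_snd)))
    · exact (measurableSet_lt measurable_const measurable_snd).inter
        (measurableSet_le measurable_snd measurable_fst)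
  -- integrability of θ-slices
  have hθslice : ∀ s, a ≤ s → s ≤ b → IntegrableOn (fun u => θ (s - u)) (Ioc a s) := by
    intro s has hsb
    have h1 : IntervalIntegrable θ volume 0 (b - a) :=
      (intervalIntegrable_iff_integrableOn_Ioc_of_le (by linarith)).2 hθI
    have h2 : IntervalIntegrable θ volume 0 (s - a) := by
      apply h1.mono_set
      apply uIcc_subset_uIcc
      · exact Set.mem_uIcc.2 (Or.inl ⟨le_rfl, by linarith⟩)
      · exact Set.mem_uIcc.2 (Or.inl ⟨by linarith, by linarith⟩)
    have h3 := h2.comp_sub_left s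
    simp only [sub_zero, sub_sub_cancel] at h3
    exact (intervalIntegrable_iff_integrableOn_Ioc_of_le has).1 h3.symm
  -- integrability of slices of F
  have hslice : ∀ s ∈ Ioc a x, Integrable (F s) μ := by
    intro s hs
    rw [hF1 s, hμ]
    rw [integrable_indicator_iff measurableSet_Ioc]
    rw [IntegrableOn, Measure.restrict_restrict measurableSet_Ioc]
    have hinter : Ioc a s ∩ Ioc a x = Ioc a s := by
      rw [Set.inter_eq_left]; exact Set.Ioc_subset_Ioc le_rfl hs.2
    rw [hinter]
    have hθw : IntegrableOn (fun u => θ (s - u) * w u) (Ioc a s) := by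
      have := ((hθslice s hs.1.le (le_trans hs.2 hxb)).bdd_mul
        (hwm.aestronglyMeasurable) (c := M) (Filter.Eventually.of_forall fun u => by simpa [Real.norm_eq_abs] using hM u))
      exact this.congr (Filter.Eventually.of_forall (fun u => mul_comm _ _))
    exact hθw.const_mul _
  -- the product integrability
  have hint : Integrable (Function.uncurry F) (μ.prod μ) := by
    have hunc : Function.uncurry F = Φ := by
      funext p; cases p; rfl
    rw [hunc]
    rw [integrable_prod_iff (hΦm.aestronglyMeasurable)]
    constructor
    · filter_upwards [MeasureTheory.self_mem_ae_restrict measurableSet_Ioc] with s hs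
      exact hslice s hs
    · -- bound the inner norms
      set C : ℝ := M * ∫ v in Ioc 0 (b - a), |θ v| with hC
      have hθnn : 0 ≤ ∫ v in Ioc 0 (b - a), |θ v| :=
        setIntegral_nonneg measurableSet_Ioc (fun v _ => abs_nonneg _)
      have hC0 : 0 ≤ C := mul_nonneg hM0 hθnn
      have hρcomp : IntegrableOn (fun s => ρ (x - s)) (Ioc a x) := by
        have h1 : IntervalIntegrable ρ volume 0 (b - a) :=
          (intervalIntegrable_iff_integrableOn_Ioc_of_le (by linarith)).2 hρI
        have h2 : IntervalIntegrable ρ volume 0 (x - a) := by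
          apply h1.mono_set
          apply uIcc_subset_uIcc
          · exact Set.mem_uIcc.2 (Or.inl ⟨le_rfl, by linarith⟩)
          · exact Set.mem_uIcc.2 (Or.inl ⟨by linarith, by linarith⟩)
        have h3 := h2.comp_sub_left x
        simp only [sub_zero, sub_sub_cancel] at h3
        exact (intervalIntegrable_iff_integrableOn_Ioc_of_le hax.le).1 h3.symm
      apply Integrable.mono' (g := fun s => |ρ (x - s)| * C)
      · exact ((hρcomp.norm.mul_const C).congr
          (Filter.Eventually.of_forall (fun s => by simp [Real.norm_eq_abs])))
      · exact (hΦm.norm.aestronglyMeasurable.integral_prod_right')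
      · filter_upwards [MeasureTheory.self_mem_ae_restrict measurableSet_Ioc] with s hs
        have hnn : 0 ≤ ∫ u, ‖Φ (s, u)‖ ∂μ := integral_nonneg (fun u => norm_nonneg _)
        rw [Real.norm_eq_abs, abs_of_nonneg hnn]
        have heq : ∀ u, ‖Φ (s, u)‖
            = (Ioc a s).indicator (fun u => |ρ (x - s)| * (|θ (s - u)| * |w u|)) u := by
          intro u
          have : Φ (s, u) = F s u := rfl
          rw [this, hF1 s]
          by_cases h : u ∈ Ioc a s
          · simp [Set.indicator_of_mem h, Real.norm_eq_abs, abs_mul]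
          · simp [Set.indicator_of_notMem h]
        calc ∫ u, ‖Φ (s, u)‖ ∂μ
            = ∫ u in Ioc a x, (Ioc a s).indicator
                (fun u => |ρ (x - s)| * (|θ (s - u)| * |w u|)) u := by
              rw [hμ]; exact integral_congr_ae (Filter.Eventually.of_forall (fun u => heq u))
          _ = ∫ u in Ioc a x ∩ Ioc a s, |ρ (x - s)| * (|θ (s - u)| * |w u|) := by
              rw [setIntegral_indicator measurableSet_Ioc]
          _ = |ρ (x - s)| * ∫ u in Ioc a s, |θ (s - u)| * |w u| := by
              rw [Set.inter_eq_right.2 (Set.Ioc_subset_Ioc le_rfl hs.2),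
                MeasureTheory.integral_const_mul]
          _ ≤ |ρ (x - s)| * C := by
              apply mul_le_mul_of_nonneg_left _ (abs_nonneg _)
              have hint1 : IntegrableOn (fun u => |θ (s - u)| * M) (Ioc a s) :=
                (hθslice s hs.1.le (le_trans hs.2 hxb)).norm.mul_const M
              calc ∫ u in Ioc a s, |θ (s - u)| * |w u|
                  ≤ ∫ u in Ioc a s, |θ (s - u)| * M := by
                    apply integral_mono_of_nonneg
                    · exact Filter.Eventually.of_forall
                        (fun u => mul_nonneg (abs_nonneg _) (abs_nonneg _))
                    · exact hint1
                    · exact Filter.Eventually.of_forall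
                        (fun u => mul_le_mul_of_nonneg_left (hM u) (abs_nonneg _))
                _ = (∫ u in Ioc a s, |θ (s - u)|) * M := by rw [MeasureTheory.integral_mul_const]
                _ ≤ (∫ v in Ioc 0 (b - a), |θ v|) * M := by
                    apply mul_le_mul_of_nonneg_right _ hM0
                    have : ∫ u in Ioc a s, |θ (s - u)| = ∫ v in Ioc 0 (s - a), |θ v| := by
                      rw [← intervalIntegral.integral_of_le hs.1.le,
                        ← intervalIntegral.integral_of_le (by linarith [hs.1] : (0:ℝ) ≤ s - a)]
                      have h4 := intervalIntegral.integral_comp_sub_left (a := a) (b := s)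
                        (fun v => |θ v|) s
                      simp only [sub_self] at h4
                      exact h4
                    rw [this]
                    apply setIntegral_mono_set hθI.norm
                    · exact Filter.Eventually.of_forall (fun v => abs_nonneg _)
                    · exact Filter.Eventually.of_forall
                        (Set.Ioc_subset_Ioc le_rfl (by linarith [hs.2, hxb] : s - a ≤ b - a))
                _ = C := by rw [hC, mul_comm]
  -- now rewrite both sides and swap
  have hLHS : ∫ s in a..x, ρ (x - s) * ∫ u in a..s, θ (s - u) * w u
      = ∫ s, (∫ u, F s u ∂μ) ∂μ := by
    rw [intervalIntegral.integral_of_le hax.le, hμ]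
    apply setIntegral_congr_fun measurableSet_Ioc
    intro s hs
    beta_reduce
    rw [hF1 s, MeasureTheory.integral_indicator measurableSet_Ioc,
      Measure.restrict_restrict measurableSet_Ioc,
      Set.inter_eq_left.2 (Set.Ioc_subset_Ioc le_rfl hs.2),
      MeasureTheory.integral_const_mul, intervalIntegral.integral_of_le hs.1.le]
  have hRHS : ∫ u in a..x, (∫ v in (0:ℝ)..(x - u), ρ (x - u - v) * θ v) * w u
      = ∫ u, (∫ s, F s u ∂μ) ∂μ := by
    rw [intervalIntegral.integral_of_le hax.le, hμ]
    apply setIntegral_congr_fun measurableSet_Ioc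
    intro u hu
    beta_reduce
    have h2 := hF2 u hu.1
    have : (∫ s, F s u ∂(volume.restrict (Ioc a x)))
        = ∫ s in Icc u x, ρ (x - s) * (θ (s - u) * w u) := by
      calc ∫ s, F s u ∂(volume.restrict (Ioc a x))
          = ∫ s in Ioc a x, (Ici u).indicator (fun s => ρ (x - s) * (θ (s - u) * w u)) s := by
            apply MeasureTheory.integral_congr_ae
            exact Filter.Eventually.of_forall (fun s => by rw [← h2])
        _ = ∫ s in Ioc a x ∩ Ici u, ρ (x - s) * (θ (s - u) * w u) := by
            rw [setIntegral_indicator measurableSet_Ici]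
        _ = ∫ s in Icc u x, ρ (x - s) * (θ (s - u) * w u) := by
            have hset : Ioc a x ∩ Ici u = Icc u x := Set.ext fun s => by
              simp only [Set.mem_inter_iff, Set.mem_Ioc, Set.mem_Ici, Set.mem_Icc]
              exact ⟨fun h => ⟨h.2, h.1.2⟩,
                fun h => ⟨⟨lt_of_lt_of_le hu.1 h.1, h.2⟩, h.1⟩⟩
            rw [hset]
    rw [this, MeasureTheory.integral_Icc_eq_integral_Ioc,
      ← intervalIntegral.integral_of_le hu.2]
    have : ∫ s in u..x, ρ (x - s) * (θ (s - u) * w u)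
        = (∫ s in u..x, ρ (x - s) * θ (s - u)) * w u := by
      rw [← intervalIntegral.integral_mul_const]
      congr 1; funext s; ring
    rw [this]
    congr 1
    have := intervalIntegral.integral_comp_sub_right (a := u) (b := x)
      (fun v => ρ (x - u - v) * θ v) u
    simp only [sub_self] at this
    rw [← this]
    congr 1; funext s
    congr 2; ring
  rw [hLHS, hRHS]
  exact integral_integral_swap hint

noncomputable def myConv (a b : ℝ) (θ w : ℝ → ℝ) : ℝ → ℝ :=
  fun s => ∫ v, (Ioc 0 (min s b - a)).indicator (fun v => θ v * w (s - v)) v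

lemma myConv_eq (a b : ℝ) (θ w : ℝ → ℝ) {s : ℝ} (has : a ≤ s) (hsb : s ≤ b) :
    myConv a b θ w s = ∫ u in a..s, θ (s - u) * w u := by
  unfold myConv
  rw [min_eq_left hsb]
  rw [MeasureTheory.integral_indicator measurableSet_Ioc,
    ← intervalIntegral.integral_of_le (by linarith : (0:ℝ) ≤ s - a)]
  have h4 := intervalIntegral.integral_comp_sub_left (a := 0) (b := s - a)
    (fun u => θ (s - u) * w u) s
  simp only [sub_zero, sub_sub_cancel] at h4
  exact h4

lemma myConv_continuous (a b : ℝ) (hab : a < b) (θ w : ℝ → ℝ)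
    (hθm : Measurable θ) (hθI : IntegrableOn θ (Ioc 0 (b - a)))
    (hw : Continuous w) (M : ℝ) (hM : ∀ u, |w u| ≤ M) :
    Continuous (myConv a b θ w) := by
  have hM0 : 0 ≤ M := le_trans (abs_nonneg _) (hM 0)
  rw [continuous_iff_continuousAt]
  intro s₀
  apply MeasureTheory.continuousAt_of_dominated
    (bound := fun v => (Ioc 0 (b - a)).indicator (fun v => |θ v| * M) v)
  · apply Filter.Eventually.of_forall
    intro s
    exact ((hθm.mul (hw.measurable.comp (measurable_const.sub measurable_id))).indicator
      measurableSet_Ioc).aestronglyMeasurable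
  · apply Filter.Eventually.of_forall
    intro s
    apply Filter.Eventually.of_forall
    intro v
    by_cases h : v ∈ Ioc 0 (min s b - a)
    · have hv : v ∈ Ioc 0 (b - a) := ⟨h.1, le_trans h.2 (by
        have := min_le_right s b; linarith)⟩
      rw [Set.indicator_of_mem h, Set.indicator_of_mem hv, Real.norm_eq_abs, abs_mul]
      exact mul_le_mul_of_nonneg_left (hM _) (abs_nonneg _)
    · rw [Set.indicator_of_notMem h]
      simp only [norm_zero]
      exact Set.indicator_nonneg (fun v _ => mul_nonneg (abs_nonneg _) hM0) v
  · rw [integrable_indicator_iff measurableSet_Ioc]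
    exact hθI.norm.mul_const M
  · have hae : ∀ᵐ (v : ℝ), v ≠ min s₀ b - a := by
      rw [MeasureTheory.ae_iff]
      have : {v : ℝ | ¬v ≠ min s₀ b - a} = {min s₀ b - a} := by
        ext v; simp
      rw [this]
      exact measure_singleton _
    filter_upwards [hae] with v hv
    have hcont : ContinuousAt (fun s => min s b - a) s₀ :=
      ((continuous_id.min continuous_const).sub continuous_const).continuousAt
    by_cases h1 : 0 < v
    · rcases lt_or_gt_of_ne hv with hlt | hgt
      · have hev : (fun s => (Ioc 0 (min s b - a)).indicator (fun v => θ v * w (s - v)) v)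
            =ᶠ[nhds s₀] (fun s => θ v * w (s - v)) := by
          filter_upwards [hcont.eventually (eventually_gt_nhds hlt)] with s hs
          exact Set.indicator_of_mem (Set.mem_Ioc.2 ⟨h1, le_of_lt hs⟩) _
        exact (continuousAt_congr hev).2
          ((continuous_const.mul (hw.comp (continuous_id.sub continuous_const))).continuousAt)
      · have hev : (fun s => (Ioc 0 (min s b - a)).indicator (fun v => θ v * w (s - v)) v)
            =ᶠ[nhds s₀] (fun _ => (0:ℝ)) := by
          filter_upwards [hcont.eventually (eventually_lt_nhds hgt)] with s hs
          exact Set.indicator_of_notMem (fun hm => absurd hm.2 (not_le.2 hs)) _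
        exact (continuousAt_congr hev).2 continuousAt_const
    · have hev : (fun s => (Ioc 0 (min s b - a)).indicator (fun v => θ v * w (s - v)) v)
          =ᶠ[nhds s₀] (fun _ => (0:ℝ)) :=
        Filter.Eventually.of_forall
          (fun s => Set.indicator_of_notMem (fun hm => h1 hm.1) _)
      exact (continuousAt_congr hev).2 continuousAt_const

lemma myConv_bound (a b : ℝ) (θ w : ℝ → ℝ)
    (hθm : Measurable θ) (hθI : IntegrableOn θ (Ioc 0 (b - a)))
    (hwm : Measurable w) (M : ℝ) (hM : ∀ u, |w u| ≤ M) :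
    ∀ s, |myConv a b θ w s| ≤ (∫ v in Ioc 0 (b - a), |θ v|) * M := by
  intro s
  have hM0 : 0 ≤ M := le_trans (abs_nonneg _) (hM 0)
  unfold myConv
  rw [← Real.norm_eq_abs]
  calc ‖∫ v, (Ioc 0 (min s b - a)).indicator (fun v => θ v * w (s - v)) v‖
      ≤ ∫ v, ‖(Ioc 0 (min s b - a)).indicator (fun v => θ v * w (s - v)) v‖ :=
        norm_integral_le_integral_norm _
    _ ≤ ∫ v, (Ioc 0 (b - a)).indicator (fun v => |θ v| * M) v := by
        apply integral_mono_of_nonneg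
        · exact Filter.Eventually.of_forall (fun v => norm_nonneg _)
        · rw [integrable_indicator_iff measurableSet_Ioc]
          exact hθI.norm.mul_const M
        · apply Filter.Eventually.of_forall
          intro v
          beta_reduce
          by_cases h : v ∈ Ioc 0 (min s b - a)
          · have hv : v ∈ Ioc 0 (b - a) :=
              ⟨h.1, le_trans h.2 (by have := min_le_right s b; linarith)⟩
            rw [Set.indicator_of_mem h, Set.indicator_of_mem hv, Real.norm_eq_abs, abs_mul]
            exact mul_le_mul_of_nonneg_left (hM _) (abs_nonneg _)
          · rw [Set.indicator_of_notMem h]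
            simp only [norm_zero]
            exact Set.indicator_nonneg (fun v _ => mul_nonneg (abs_nonneg _) hM0) v
    _ = (∫ v in Ioc 0 (b - a), |θ v|) * M := by
        rw [MeasureTheory.integral_indicator measurableSet_Ioc, MeasureTheory.integral_mul_const]

lemma my_zero_of_primitive (a b : ℝ) (hab : a < b) (F : ℝ → ℝ) (hF : Continuous F)
    (hP : ∀ x ∈ Icc a b, (∫ s in a..x, F s) = 0) : ∀ x ∈ Icc a b, F x = 0 := by
  have hIoo : ∀ x ∈ Ioo a b, F x = 0 := by
    intro x hx
    have h1 : HasDerivAt (fun u => ∫ s in a..u, F s) (F x) x :=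
      intervalIntegral.integral_hasDerivAt_right (hF.intervalIntegrable a x)
        (hF.stronglyMeasurable.stronglyMeasurableAtFilter)
        hF.continuousAt
    have h2 : HasDerivAt (fun u => ∫ s in a..u, F s) 0 x := by
      have hev : (fun u => ∫ s in a..u, F s) =ᶠ[nhds x] (fun _ => (0:ℝ)) := by
        filter_upwards [isOpen_Ioo.mem_nhds hx] with u hu
        exact hP u (Ioo_subset_Icc_self hu)
      exact (hasDerivAt_const x (0:ℝ)).congr_of_eventuallyEq hev
    exact h1.unique h2
  intro x hx
  have hcl : Set.EqOn F 0 (closure (Ioo a b)) :=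
    Set.EqOn.closure (fun t ht => hIoo t ht) hF continuous_const
  rw [closure_Ioo hab.ne] at hcl
  exact hcl hx

lemma my_taylor (a b : ℝ) (hab : a < b) (n : ℕ) (hn : 1 ≤ n) (φ : ℝ → ℝ)
    (hφC : ContDiffOn ℝ n φ (Icc a b))
    (hφa : ∀ j ≤ n - 1, iteratedDerivWithin j φ (Icc a b) a = 0) :
    ∀ x ∈ Ioc a b, φ x = ∫ t in a..x,
      ((x - t) ^ (n - 1) / (n - 1).factorial) * iteratedDerivWithin n φ (Icc a b) t := by
  obtain ⟨m, rfl⟩ : ∃ m, n = m + 1 := ⟨n - 1, (Nat.succ_pred_eq_of_pos hn).symm⟩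
  simp only [Nat.add_sub_cancel] at hφa ⊢
  intro x hx
  have hu := uniqueDiffOn_Icc hab
  have hφC' : ContDiffOn ℝ m φ (Icc a b) := hφC.of_le (by exact_mod_cast Nat.le_succ m)
  have hdiff : DifferentiableOn ℝ (iteratedDerivWithin m φ (Icc a b)) (Ioo a b) :=
    (hφC.differentiableOn_iteratedDerivWithin (by exact_mod_cast Nat.lt_succ_self m) hu).mono
      Ioo_subset_Icc_self
  have hcont0 : ContinuousOn (iteratedDerivWithin (m + 1) φ (Icc a b)) (Icc a b) :=
    hφC.continuousOn_iteratedDerivWithin le_rfl hu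
  have hderiv : ∀ t ∈ Ioo a x, HasDerivAt (fun t => taylorWithinEval φ m (Icc a b) t x)
      ((((m.factorial : ℝ))⁻¹ * (x - t) ^ m) • iteratedDerivWithin (m + 1) φ (Icc a b) t) t :=
    fun t ht => taylorWithinEval_hasDerivAt_Ioo x hab (Ioo_subset_Ioo le_rfl hx.2 ht) hφC' hdiff
  have hP : ContinuousOn (fun t => taylorWithinEval φ m (Icc a b) t x) (Icc a x) :=
    (continuousOn_taylorWithinEval hu hφC').mono (Icc_subset_Icc le_rfl hx.2)
  have hint : IntervalIntegrable (fun t =>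
      (((m.factorial : ℝ))⁻¹ * (x - t) ^ m) • iteratedDerivWithin (m + 1) φ (Icc a b) t)
      volume a x := by
    apply ContinuousOn.intervalIntegrable
    rw [uIcc_of_le hx.1.le]
    simp only [smul_eq_mul]
    apply ContinuousOn.mul
    · exact (continuousOn_const.mul ((continuousOn_const.sub continuousOn_id).pow m))
    · exact hcont0.mono (Icc_subset_Icc le_rfl hx.2)
  have hFTC := intervalIntegral.integral_eq_sub_of_hasDerivAt_of_le hx.1.le hP hderiv hint
  have hPx : taylorWithinEval φ m (Icc a b) x x = φ x := taylorWithinEval_self φ m _ x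
  have hPa : taylorWithinEval φ m (Icc a b) a x = 0 := by
    rw [taylor_within_apply]
    apply Finset.sum_eq_zero
    intro j hj
    rw [hφa j (Nat.lt_succ_iff.1 (Finset.mem_range.1 hj)), smul_zero]
  rw [hPx, hPa, sub_zero] at hFTC
  rw [← hFTC]
  apply intervalIntegral.integral_congr
  intro t _
  beta_reduce
  rw [smul_eq_mul]
  ring

lemma my_slice (a b x : ℝ) (hax : a < x) (hxb : x ≤ b) (θ : ℝ → ℝ)
    (hθI : IntegrableOn θ (Ioc 0 (b - a))) :
    IntegrableOn (fun s => θ (x - s)) (Ioc a x) := by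
  have h1 : IntervalIntegrable θ volume 0 (b - a) :=
    (intervalIntegrable_iff_integrableOn_Ioc_of_le (by linarith)).2 hθI
  have h2 : IntervalIntegrable θ volume 0 (x - a) := by
    apply h1.mono_set
    apply uIcc_subset_uIcc
    · exact Set.mem_uIcc.2 (Or.inl ⟨le_rfl, by linarith⟩)
    · exact Set.mem_uIcc.2 (Or.inl ⟨by linarith, by linarith⟩)
  have h3 := h2.comp_sub_left x
  simp only [sub_zero, sub_sub_cancel] at h3
  exact (intervalIntegrable_iff_integrableOn_Ioc_of_le hax.le).1 h3.symm

/-- **First fundamental theorem of general fractional calculus, left Caputo case.**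
If `(k, κ)` satisfy the modified Sonine condition of order `n` on `(0, b-a]`, `k` is
`(n-1)`-times continuously differentiable on `(0, b-a]` with integrable derivatives,
`f : [a,b] → ℝ` is continuous, and `φ := I_κ f` is `n`-times continuously differentiable
on `[a,b]` with `φ⁽ʲ⁾(a) = 0` for `0 ≤ j ≤ n-1`, then for every `x ∈ (a, b]` one has
`ᶜD_k (I_κ f)(x) = f(x)`. -/
theorem first_fundamental_left_caputo
    (a b : ℝ) (hab : a < b) (n : ℕ) (hn : 1 ≤ n)
    (k κ : ℝ → ℝ) (hkm : Measurable k) (hκm : Measurable κ)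
    (hkI : IntegrableOn k (Ioc 0 (b - a)))
    (hκI : IntegrableOn κ (Ioc 0 (b - a)))
    (hSonine : ∀ y, 0 < y → y ≤ b - a →
      ∫ s in (0:ℝ)..y, k (y - s) * κ s = y ^ (n - 1) / (n - 1).factorial)
    (hkC : ContDiffOn ℝ (n - 1) k (Ioc 0 (b - a)))
    (hkD : ∀ j ≤ n - 1,
      IntegrableOn (iteratedDerivWithin j k (Ioc 0 (b - a))) (Ioc 0 (b - a)))
    (f φ : ℝ → ℝ) (hf : ContinuousOn f (Icc a b))
    (hφ : φ = fun x => ∫ s in a..x, κ (x - s) * f s)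
    (hφC : ContDiffOn ℝ n φ (Icc a b))
    (hφa : ∀ j ≤ n - 1, iteratedDerivWithin j φ (Icc a b) a = 0) :
    ∀ x ∈ Ioc a b,
      (∫ s in a..x, k (x - s) * iteratedDerivWithin n φ (Icc a b) s) = f x := by
  intro x hx
  have hba : (0:ℝ) < b - a := by linarith
  have hu := uniqueDiffOn_Icc hab
  set g : ℝ → ℝ := iteratedDerivWithin n φ (Icc a b) with hg
  have hgc : ContinuousOn g (Icc a b) := hφC.continuousOn_iteratedDerivWithin le_rfl hu
  -- clamp to [a,b]
  set cl : ℝ → ℝ := fun t => max a (min t b) with hcl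
  have hclc : Continuous cl := continuous_const.max (continuous_id.min continuous_const)
  have hclmem : ∀ t, cl t ∈ Icc a b :=
    fun t => ⟨le_max_left _ _, max_le hab.le (min_le_right _ _)⟩
  have hclid : ∀ t ∈ Icc a b, cl t = t := fun t ht => by
    rw [hcl]; beta_reduce; rw [min_eq_left ht.2, max_eq_right ht.1]
  set g' : ℝ → ℝ := fun t => g (cl t) with hg'
  set f' : ℝ → ℝ := fun t => f (cl t) with hf'
  have hg'c : Continuous g' := hgc.comp_continuous hclc hclmem
  have hf'c : Continuous f' := hf.comp_continuous hclc hclmem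
  obtain ⟨Mg, hMg⟩ : ∃ M, ∀ u, |g' u| ≤ M := by
    obtain ⟨M, hM⟩ := (isCompact_Icc (a := a) (b := b)).exists_bound_of_continuousOn hgc
    exact ⟨M, fun u => by simpa [Real.norm_eq_abs] using hM (cl u) (hclmem u)⟩
  obtain ⟨Mf, hMf⟩ : ∃ M, ∀ u, |f' u| ≤ M := by
    obtain ⟨M, hM⟩ := (isCompact_Icc (a := a) (b := b)).exists_bound_of_continuousOn hf
    exact ⟨M, fun u => by simpa [Real.norm_eq_abs] using hM (cl u) (hclmem u)⟩
  -- ψ = I_k g'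
  set ψ : ℝ → ℝ := myConv a b k g' with hψ
  have hψc : Continuous ψ := myConv_continuous a b hab k g' hkm hkI hg'c Mg hMg
  have hMψ : ∀ s, |ψ s| ≤ (∫ v in Ioc 0 (b - a), |k v|) * Mg :=
    myConv_bound a b k g' hkm hkI hg'c.measurable Mg hMg
  set Mψ : ℝ := (∫ v in Ioc 0 (b - a), |k v|) * Mg with hMψdef
  set h : ℝ → ℝ := fun u => ψ u - f' u with hh
  have hhc : Continuous h := hψc.sub hf'c
  have hMh : ∀ u, |h u| ≤ Mψ + Mf := fun u => by
    rw [hh]; beta_reduce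
    calc |ψ u - f' u| ≤ |ψ u| + |f' u| := abs_sub _ _
      _ ≤ Mψ + Mf := add_le_add (hMψ u) (hMf u)
  have hTaylor := my_taylor a b hab n hn φ hφC hφa
  -- Step B : κ * h = 0 on (a, b]
  have stepB : ∀ x' ∈ Ioc a b, (∫ s in a..x', κ (x' - s) * h s) = 0 := by
    intro x' hx'
    have hax' : a < x' := hx'.1
    have I1 : IntervalIntegrable (fun s => κ (x' - s) * ψ s) volume a x' := by
      rw [intervalIntegrable_iff_integrableOn_Ioc_of_le hax'.le]
      exact ((my_slice a b x' hax' hx'.2 κ hκI).bdd_mul hψc.measurable.aestronglyMeasurable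
        (c := Mψ) (Filter.Eventually.of_forall fun s => by simpa [Real.norm_eq_abs] using hMψ s)).congr
        (Filter.Eventually.of_forall (fun s => mul_comm _ _))
    have I2 : IntervalIntegrable (fun s => κ (x' - s) * f' s) volume a x' := by
      rw [intervalIntegrable_iff_integrableOn_Ioc_of_le hax'.le]
      exact ((my_slice a b x' hax' hx'.2 κ hκI).bdd_mul hf'c.measurable.aestronglyMeasurable
        (c := Mf) (Filter.Eventually.of_forall fun s => by simpa [Real.norm_eq_abs] using hMf s)).congr
        (Filter.Eventually.of_forall (fun s => mul_comm _ _))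
    have hfpart : (∫ s in a..x', κ (x' - s) * f' s) = φ x' := by
      rw [hφ]; beta_reduce
      apply intervalIntegral.integral_congr
      intro s hs
      have hs' : s ∈ Icc a b := Icc_subset_Icc le_rfl hx'.2 (by rwa [uIcc_of_le hax'.le] at hs)
      rw [hf']; beta_reduce; rw [hclid s hs']
    have hψpart : (∫ s in a..x', κ (x' - s) * ψ s) = φ x' := by
      calc ∫ s in a..x', κ (x' - s) * ψ s
          = ∫ s in a..x', κ (x' - s) * ∫ u in a..s, k (s - u) * g' u := by
            apply intervalIntegral.integral_congr
            intro s hs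
            have hs' : s ∈ Icc a x' := by rwa [uIcc_of_le hax'.le] at hs
            beta_reduce
            rw [hψ, myConv_eq a b k g' hs'.1 (le_trans hs'.2 hx'.2)]
        _ = ∫ u in a..x', (∫ v in (0:ℝ)..(x' - u), κ (x' - u - v) * k v) * g' u :=
            my_swap a b x' hax' hx'.2 κ k g' hκm hkm hκI hkI hg'c.measurable Mg hMg
        _ = ∫ u in a..x', ((x' - u) ^ (n - 1) / (n - 1).factorial) * g' u := by
            apply my_congr_Ioo hax'.le
            intro u hu
            have hy : (0:ℝ) < x' - u := by linarith [hu.2]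
            have hy2 : x' - u ≤ b - a := by linarith [hu.1, hx'.2]
            congr 1
            have hflip := intervalIntegral.integral_comp_sub_left (a := 0) (b := x' - u)
              (fun s => k (x' - u - s) * κ s) (x' - u)
            simp only [sub_zero, sub_self, sub_sub_cancel] at hflip
            rw [← hSonine (x' - u) hy hy2, ← hflip]
            apply intervalIntegral.integral_congr
            intro v _
            beta_reduce
            exact mul_comm _ _
        _ = ∫ u in a..x', ((x' - u) ^ (n - 1) / (n - 1).factorial) * g u := by
            apply intervalIntegral.integral_congr
            intro u hu'
            have hu'' : u ∈ Icc a b :=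
              Icc_subset_Icc le_rfl hx'.2 (by rwa [uIcc_of_le hax'.le] at hu')
            rw [hg']; beta_reduce; rw [hclid u hu'']
        _ = φ x' := (hTaylor x' hx').symm
    calc ∫ s in a..x', κ (x' - s) * h s
        = ∫ s in a..x', (κ (x' - s) * ψ s - κ (x' - s) * f' s) := by
          apply intervalIntegral.integral_congr
          intro s _
          rw [hh]; beta_reduce; ring
      _ = (∫ s in a..x', κ (x' - s) * ψ s) - ∫ s in a..x', κ (x' - s) * f' s :=
          intervalIntegral.integral_sub I1 I2
      _ = 0 := by rw [hψpart, hfpart, sub_self]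
  -- Step C
  have stepC : ∀ x' ∈ Ioc a b,
      (∫ u in a..x', ((x' - u) ^ (n - 1) / (n - 1).factorial) * h u) = 0 := by
    intro x' hx'
    have h1 : (∫ s in a..x', k (x' - s) * ∫ u in a..s, κ (s - u) * h u) = 0 := by
      have hz : ∀ s ∈ Ioo a x', k (x' - s) * (∫ u in a..s, κ (s - u) * h u) = (0:ℝ) :=
        fun s hs => by rw [stepB s ⟨hs.1, le_trans hs.2.le hx'.2⟩, mul_zero]
      rw [my_congr_Ioo hx'.1.le hz]
      simp
    have h2 := my_swap a b x' hx'.1 hx'.2 k κ h hkm hκm hkI hκI hhc.measurable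
      (Mψ + Mf) hMh
    calc ∫ u in a..x', ((x' - u) ^ (n - 1) / (n - 1).factorial) * h u
        = ∫ u in a..x', (∫ v in (0:ℝ)..(x' - u), k (x' - u - v) * κ v) * h u := by
          apply my_congr_Ioo hx'.1.le
          intro u hu
          rw [hSonine (x' - u) (by linarith [hu.2]) (by linarith [hu.1, hx'.2])]
      _ = ∫ s in a..x', k (x' - s) * ∫ u in a..s, κ (s - u) * h u := h2.symm
      _ = 0 := h1
  -- Step D : downward induction on the power
  have hθmint : ∀ m : ℕ, IntegrableOn (fun v : ℝ => v ^ m / (m.factorial : ℝ)) (Ioc 0 (b - a)) :=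
    fun m => (intervalIntegrable_iff_integrableOn_Ioc_of_le hba.le).1
      (((continuous_pow m).div_const _).intervalIntegrable 0 (b - a))
  have hθmmeas : ∀ m : ℕ, Measurable (fun v : ℝ => v ^ m / (m.factorial : ℝ)) :=
    fun m => (measurable_id.pow_const m).div_const _
  set P : ℕ → ℝ → ℝ := fun m => myConv a b (fun v => v ^ m / (m.factorial : ℝ)) h with hPdef
  have hPc : ∀ m, Continuous (P m) := fun m =>
    myConv_continuous a b hab _ h (hθmmeas m) (hθmint m) hhc (Mψ + Mf) hMh
  have hPL1 : ∀ m : ℕ, ∀ s ∈ Icc a b,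
      P m s = ∫ u in a..s, ((s - u) ^ m / (m.factorial : ℝ)) * h u := by
    intro m s hs
    rw [hPdef]; beta_reduce
    exact myConv_eq a b _ h hs.1 hs.2
  have hPtop : ∀ s ∈ Icc a b, P (n - 1) s = 0 := by
    intro s hs
    rcases eq_or_lt_of_le hs.1 with he | hlt
    · rw [hPL1 _ s hs, ← he, intervalIntegral.integral_same]
    · rw [hPL1 _ s hs]; exact stepC s ⟨hlt, hs.2⟩
  have hPstep : ∀ m : ℕ, (∀ s ∈ Icc a b, P (m + 1) s = 0) → (∀ s ∈ Icc a b, P m s = 0) := by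
    intro m hm
    have hprim : ∀ x' ∈ Icc a b, (∫ s in a..x', P m s) = 0 := by
      intro x' hx'
      rcases eq_or_lt_of_le hx'.1 with he | hlt
      · rw [← he, intervalIntegral.integral_same]
      · have hone : IntegrableOn (fun _ : ℝ => (1:ℝ)) (Ioc 0 (b - a)) :=
          integrableOn_const measure_Ioc_lt_top.ne
        have hswap := my_swap a b x' hlt hx'.2 (fun _ => (1:ℝ))
          (fun v => v ^ m / (m.factorial : ℝ)) h measurable_const (hθmmeas m)
          hone (hθmint m) hhc.measurable (Mψ + Mf) hMh
        calc ∫ s in a..x', P m s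
            = ∫ s in a..x', (1:ℝ) * ∫ u in a..s, ((s - u) ^ m / (m.factorial : ℝ)) * h u := by
              apply my_congr_Ioo hlt.le
              intro s hs
              rw [hPL1 m s ⟨hs.1.le, le_trans hs.2.le hx'.2⟩, one_mul]
          _ = ∫ u in a..x', (∫ v in (0:ℝ)..(x' - u),
                (1:ℝ) * (v ^ m / (m.factorial : ℝ))) * h u := hswap
          _ = ∫ u in a..x', ((x' - u) ^ (m + 1) / ((m + 1).factorial : ℝ)) * h u := by
              apply intervalIntegral.integral_congr
              intro u _
              beta_reduce
              congr 1
              simp only [one_mul]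
              rw [intervalIntegral.integral_div, integral_pow]
              rw [Nat.factorial_succ]
              push_cast
              rw [zero_pow (by omega : m + 1 ≠ 0)]
              have hm : ((m.factorial : ℝ)) ≠ 0 := by positivity
              field_simp
              rw [sub_zero]
          _ = P (m + 1) x' := (hPL1 (m + 1) x' hx').symm
          _ = 0 := hm x' hx'
    exact my_zero_of_primitive a b hab (P m) (hPc m) hprim
  have hP0 : ∀ s ∈ Icc a b, P 0 s = 0 := by
    have key : ∀ j : ℕ, j ≤ n - 1 → ∀ s ∈ Icc a b, P (n - 1 - j) s = 0 := by
      intro j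
      induction j with
      | zero => intro _ s hs; simpa using hPtop s hs
      | succ i ih =>
        intro hj s hs
        have hi : i ≤ n - 1 := Nat.le_of_succ_le hj
        have heq : n - 1 - i = (n - 1 - (i + 1)) + 1 := by omega
        exact hPstep _ (fun t ht => by rw [← heq]; exact ih hi t ht) s hs
    intro s hs
    have := key (n - 1) le_rfl s hs
    simpa using this
  -- conclude h = 0 on [a,b]
  have hh0 : ∀ s ∈ Icc a b, h s = 0 := by
    apply my_zero_of_primitive a b hab h hhc
    intro x' hx'
    calc ∫ s in a..x', h s
        = ∫ u in a..x', ((x' - u) ^ 0 / ((Nat.factorial 0 : ℕ) : ℝ)) * h u := by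
          apply intervalIntegral.integral_congr
          intro u _
          simp
      _ = P 0 x' := (hPL1 0 x' hx').symm
      _ = 0 := hP0 x' hx'
  have hxm : x ∈ Icc a b := ⟨hx.1.le, hx.2⟩
  have h0 : ψ x = f' x := by
    have := hh0 x hxm
    rw [hh] at this
    beta_reduce at this
    linarith [this]
  calc ∫ s in a..x, k (x - s) * iteratedDerivWithin n φ (Icc a b) s
      = ∫ s in a..x, k (x - s) * g' s := by
        apply intervalIntegral.integral_congr
        intro s hs
        have hs' : s ∈ Icc a b := Icc_subset_Icc le_rfl hx.2 (by rwa [uIcc_of_le hx.1.le] at hs)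
        rw [hg']; beta_reduce; rw [hclid s hs', hg]
    _ = ψ x := by rw [hψ, myConv_eq a b k g' hxm.1 hxm.2]
    _ = f' x := h0
    _ = f x := by rw [hf']; beta_reduce; rw [hclid x hxm]
end

section
/- (Second fundamental theorem, left Riemann–Liouville case.) Let a < b be real numbers and n ≥ 1 a natural number. Let k, κ : ℝ → ℝ be measurable, integrable on (0, b−a], and satisfy the modified Sonine condition of order n. Suppose f : [a,b] → ℝ can be written as f = I_κ φ for some continuous function φ : [a,b] → ℝ. Then for every x ∈ (a,b], I_κ ( ᴿᴸD_k f )(x) = f(x). -/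
open MeasureTheory intervalIntegral Set

lemma rep_aux (a b : ℝ) (K ψ : ℝ → ℝ) (u : ℝ) (hu : u ∈ Icc a b) :
    ∫ s in a..u, K (u - s) * ψ s =
      ∫ s, (Ioc 0 (b - a)).indicator K (u - s) * (Icc a b).indicator ψ s := by
  have h0 : ∀ s ∉ Ico a u,
      (Ioc 0 (b - a)).indicator K (u - s) * (Icc a b).indicator ψ s = 0 := by
    intro s hs
    rcases lt_or_ge s a with h | h
    · have h1 : s ∉ Icc a b := fun hc => absurd hc.1 (not_le.2 h)
      rw [indicator_of_notMem h1, mul_zero]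
    · have hsu : u ≤ s := by
        by_contra hc
        exact hs ⟨h, not_le.1 hc⟩
      have h1 : u - s ∉ Ioc 0 (b - a) := fun hc => absurd hc.1 (by linarith)
      rw [indicator_of_notMem h1, zero_mul]
  rw [← setIntegral_eq_integral_of_forall_compl_eq_zero h0,
    integral_Ico_eq_integral_Ioo, intervalIntegral.integral_of_le hu.1,
    integral_Ioc_eq_integral_Ioo]
  refine setIntegral_congr_fun measurableSet_Ioo (fun s hs => ?_) |>.symm
  rw [indicator_of_mem (show u - s ∈ Ioc 0 (b - a) by
      constructor <;> [linarith [hs.2]; linarith [hu.2, hs.1]]),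
    indicator_of_mem (show s ∈ Icc a b from ⟨le_of_lt hs.1, le_trans (le_of_lt hs.2) hu.2⟩)]

lemma shear_int {f g : ℝ → ℝ} (hfm : Measurable f) (hgm : Measurable g)
    (hf : Integrable f) (hg : Integrable g) :
    Integrable (fun p : ℝ × ℝ => f p.1 * g (p.1 - p.2)) (volume.prod volume) := by
  have h1 : Integrable (fun z : ℝ × ℝ => f z.1 * g z.2) (volume.prod volume) := hf.mul_prod hg
  have T : MeasurePreserving (fun z : ℝ × ℝ => (z.1, z.1 - z.2)) (volume.prod volume)
      (volume.prod volume) := by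
    have h2 : MeasurePreserving (fun z : ℝ × ℝ => (z.1, z.2 - z.1))
        ((volume : Measure ℝ).prod volume) (volume.prod volume) :=
      measurePreserving_prod_sub volume volume
    have h3 : MeasurePreserving (fun z : ℝ × ℝ => (z.1, -z.2))
        ((volume : Measure ℝ).prod volume) (volume.prod volume) :=
      (MeasurePreserving.id volume).prod (Measure.measurePreserving_neg volume)
    have h4 := h3.comp h2
    convert h4 using 1
    funext z; simp [Function.comp, neg_sub]
  exact (T.integrable_comp (g := fun z : ℝ × ℝ => f z.1 * g z.2)
    ((hfm.comp measurable_fst).mul (hgm.comp measurable_snd)).aestronglyMeasurable).mpr h1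

lemma key1 (a b : ℝ) (N : ℕ) (k κ ψ : ℝ → ℝ)
    (hkm : Measurable k) (hκm : Measurable κ) (hψ : Continuous ψ)
    (hkI : IntegrableOn k (Ioc 0 (b - a))) (hκI : IntegrableOn κ (Ioc 0 (b - a)))
    (hS : ∀ y, 0 < y → y ≤ b - a →
      ∫ s in (0:ℝ)..y, k (y - s) * κ s = y ^ N / N.factorial)
    (t : ℝ) (hat : a ≤ t) (htb : t ≤ b) :
    (∫ u in a..t, k (t - u) * ∫ s in a..u, κ (u - s) * ψ s) =
      ∫ s in a..t, (t - s) ^ N / N.factorial * ψ s := by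
  set k0 : ℝ → ℝ := (Ioc 0 (b - a)).indicator k with hk0
  set κ0 : ℝ → ℝ := (Ioc 0 (b - a)).indicator κ with hκ0
  set ψ0 : ℝ → ℝ := (Icc a b).indicator ψ with hψ0def
  have hk0m : Measurable k0 := hkm.indicator measurableSet_Ioc
  have hκ0m : Measurable κ0 := hκm.indicator measurableSet_Ioc
  have hψ0m : Measurable ψ0 := hψ.measurable.indicator measurableSet_Icc
  have hk0I : Integrable k0 := (integrable_indicator_iff measurableSet_Ioc).2 hkI
  have hκ0I : Integrable κ0 := (integrable_indicator_iff measurableSet_Ioc).2 hκI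
  obtain ⟨C, hC⟩ :=
    (isCompact_Icc (a := a) (b := b)).exists_bound_of_continuousOn hψ.continuousOn
  have hC0 : ∀ s, |ψ0 s| ≤ max C 0 := by
    intro s
    by_cases hs : s ∈ Icc a b
    · rw [hψ0def, indicator_of_mem hs]
      exact le_max_of_le_left (by simpa [Real.norm_eq_abs] using hC s hs)
    · rw [hψ0def, indicator_of_notMem hs]; simp
  set G : ℝ → ℝ := fun u => ∫ s, κ0 (u - s) * ψ0 s with hG
  have hGzero : ∀ u ≤ a, G u = 0 := by
    intro u hu
    have h : ∀ s, κ0 (u - s) * ψ0 s = 0 := by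
      intro s
      rcases lt_or_ge s a with h | h
      · have h1 : s ∉ Icc a b := fun hc => absurd hc.1 (not_le.2 h)
        rw [hψ0def, indicator_of_notMem h1, mul_zero]
      · have h1 : u - s ∉ Ioc 0 (b - a) := fun hc => absurd hc.1 (by linarith)
        rw [hκ0, indicator_of_notMem h1, zero_mul]
    simp [hG, h]
  set c : ℝ → ℝ := fun y => ∫ v, k0 (y - v) * κ0 v with hcdef
  have hc_nonpos : ∀ y ≤ 0, c y = 0 := by
    intro y hy
    have h : ∀ v, k0 (y - v) * κ0 v = 0 := by
      intro v
      rcases le_or_gt v 0 with h | h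
      · have h1 : v ∉ Ioc 0 (b - a) := fun hc => absurd hc.1 (not_lt.2 h)
        rw [hκ0, indicator_of_notMem h1, mul_zero]
      · have h1 : y - v ∉ Ioc 0 (b - a) := fun hc => absurd hc.1 (by linarith)
        rw [hk0, indicator_of_notMem h1, zero_mul]
    simp [hcdef, h]
  have hc_son : ∀ y, 0 < y → y ≤ b - a → c y = y ^ N / N.factorial := by
    intro y hy0 hyb
    have hvan : ∀ v ∉ Ioo 0 y, k0 (y - v) * κ0 v = 0 := by
      intro v hv
      rcases le_or_gt v 0 with h | h
      · have h1 : v ∉ Ioc 0 (b - a) := fun hc => absurd hc.1 (not_lt.2 h)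
        rw [hκ0, indicator_of_notMem h1, mul_zero]
      · have hvy : y ≤ v := by
          by_contra hc
          exact hv ⟨h, not_le.1 hc⟩
        have h1 : y - v ∉ Ioc 0 (b - a) := fun hc => absurd hc.1 (by linarith)
        rw [hk0, indicator_of_notMem h1, zero_mul]
    show (∫ v, k0 (y - v) * κ0 v) = y ^ N / N.factorial
    rw [← setIntegral_eq_integral_of_forall_compl_eq_zero hvan]
    rw [← hS y hy0 hyb, intervalIntegral.integral_of_le hy0.le, integral_Ioc_eq_integral_Ioo]
    refine setIntegral_congr_fun measurableSet_Ioo (fun v hv => ?_)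
    rw [hk0, hκ0, indicator_of_mem (show y - v ∈ Ioc 0 (b - a) by
        constructor <;> [linarith [hv.2]; linarith [hv.1]]),
      indicator_of_mem (show v ∈ Ioc 0 (b - a) from ⟨hv.1, by linarith [hv.2]⟩)]
  have step1 : (∫ u in a..t, k (t - u) * ∫ s in a..u, κ (u - s) * ψ s) =
      ∫ u, k0 (t - u) * G u := by
    have hvan : ∀ u ∉ Ioo a t, k0 (t - u) * G u = 0 := by
      intro u hu
      rcases le_or_gt u a with h | h
      · rw [hGzero u h, mul_zero]
      · have hut : t ≤ u := by
          by_contra hc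
          exact hu ⟨h, not_le.1 hc⟩
        have h1 : t - u ∉ Ioc 0 (b - a) := fun hc => absurd hc.1 (by linarith)
        rw [hk0, indicator_of_notMem h1, zero_mul]
    rw [← setIntegral_eq_integral_of_forall_compl_eq_zero hvan,
      intervalIntegral.integral_of_le hat, integral_Ioc_eq_integral_Ioo]
    refine setIntegral_congr_fun measurableSet_Ioo (fun u hu => ?_)
    have hu' : u ∈ Icc a b := ⟨hu.1.le, hu.2.le.trans htb⟩
    rw [rep_aux a b κ ψ u hu', hk0, indicator_of_mem (show t - u ∈ Ioc 0 (b - a) by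
      constructor <;> [linarith [hu.2]; linarith [hu.1]])]
  have hJ : Integrable (fun p : ℝ × ℝ => k0 (t - p.1) * (κ0 (p.1 - p.2) * ψ0 p.2))
      (volume.prod volume) := by
    have hm : Measurable (fun p : ℝ × ℝ => k0 (t - p.1) * (κ0 (p.1 - p.2) * ψ0 p.2)) :=
      (hk0m.comp (measurable_const.sub measurable_fst)).mul
        ((hκ0m.comp (measurable_fst.sub measurable_snd)).mul (hψ0m.comp measurable_snd))
    have hbd : Integrable (fun p : ℝ × ℝ => |k0 (t - p.1)| * |κ0 (p.1 - p.2)| * max C 0)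
        (volume.prod volume) := by
      have := shear_int (f := fun u => |k0 (t - u)|) (g := fun v => |κ0 v|)
        ((hk0m.comp (measurable_const.sub measurable_id)).abs) hκ0m.abs
        ((hk0I.comp_sub_left t).abs) hκ0I.abs
      exact this.mul_const (max C 0)
    refine hbd.mono' hm.aestronglyMeasurable (Filter.Eventually.of_forall fun p => ?_)
    have h1 : ‖k0 (t - p.1) * (κ0 (p.1 - p.2) * ψ0 p.2)‖ =
        |k0 (t - p.1)| * |κ0 (p.1 - p.2)| * |ψ0 p.2| := by
      rw [Real.norm_eq_abs, abs_mul, abs_mul, mul_assoc]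
    rw [h1]
    exact mul_le_mul_of_nonneg_left (hC0 _) (by positivity)
  have step2 : (∫ u, k0 (t - u) * G u) = ∫ s, c (t - s) * ψ0 s := by
    have e1 : (∫ u, k0 (t - u) * G u) =
        ∫ u, ∫ s, k0 (t - u) * (κ0 (u - s) * ψ0 s) := by
      simp_rw [MeasureTheory.integral_const_mul]; rfl
    rw [e1, integral_integral_swap hJ]
    refine integral_congr_ae (Filter.Eventually.of_forall fun s => ?_)
    show (∫ u, k0 (t - u) * (κ0 (u - s) * ψ0 s)) = c (t - s) * ψ0 s
    have e2 : (∫ u, k0 (t - u) * (κ0 (u - s) * ψ0 s)) =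
        (∫ u, k0 (t - u) * κ0 (u - s)) * ψ0 s := by
      simp_rw [← mul_assoc]
      exact MeasureTheory.integral_mul_const _ _
    rw [e2]
    congr 1
    show (∫ u, k0 (t - u) * κ0 (u - s)) = ∫ v, k0 ((t - s) - v) * κ0 v
    rw [← integral_add_right_eq_self (fun u => k0 (t - u) * κ0 (u - s)) s]
    refine integral_congr_ae (Filter.Eventually.of_forall fun v => ?_)
    show k0 (t - (v + s)) * κ0 (v + s - s) = k0 ((t - s) - v) * κ0 v
    rw [show t - (v + s) = (t - s) - v by ring, add_sub_cancel_right]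
  have step3 : (∫ s, c (t - s) * ψ0 s) = ∫ s in a..t, (t - s) ^ N / N.factorial * ψ s := by
    rw [rep_aux a b (fun y => y ^ N / N.factorial) ψ t ⟨hat, htb⟩]
    refine integral_congr_ae (Filter.Eventually.of_forall fun s => ?_)
    show c (t - s) * ψ0 s =
      (Ioc 0 (b - a)).indicator (fun y => y ^ N / N.factorial) (t - s) *
        (Icc a b).indicator ψ s
    rw [← hψ0def]
    by_cases hs : s ∈ Icc a b
    · congr 1
      rcases le_or_gt (t - s) 0 with h | h
      · rw [hc_nonpos _ h, indicator_of_notMem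
          (fun hc : t - s ∈ Ioc 0 (b - a) => absurd hc.1 (not_lt.2 h))]
      · rw [hc_son _ h (by linarith [hs.1]), indicator_of_mem
          (show t - s ∈ Ioc 0 (b - a) from ⟨h, by linarith [hs.1]⟩)]
    · have h0 : ψ0 s = 0 := by rw [hψ0def, indicator_of_notMem hs]
      rw [h0, mul_zero, mul_zero]
  rw [step1, step2, step3]

lemma key2 (a b : ℝ) (hab : a ≤ b) (m : ℕ) (ψ : ℝ → ℝ) (hψ : Continuous ψ)
    (t : ℝ) (hat : a ≤ t) (htb : t ≤ b) :
    (∫ u in a..t, ∫ s in a..u, (u - s) ^ m / m.factorial * ψ s) =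
      ∫ s in a..t, (t - s) ^ (m + 1) / (m + 1).factorial * ψ s := by
  set Km : ℝ → ℝ := fun y => y ^ m / m.factorial with hKm
  set pm : ℝ → ℝ := (Ioc 0 (b - a)).indicator Km with hpm
  set ψ0 : ℝ → ℝ := (Icc a b).indicator ψ with hψ0def
  have hψ0m : Measurable ψ0 := hψ.measurable.indicator measurableSet_Icc
  have hpmm : Measurable pm := (by fun_prop : Measurable Km).indicator measurableSet_Ioc
  obtain ⟨C, hC⟩ :=
    (isCompact_Icc (a := a) (b := b)).exists_bound_of_continuousOn hψ.continuousOn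
  have hC0 : ∀ s, |ψ0 s| ≤ max C 0 := by
    intro s
    by_cases hs : s ∈ Icc a b
    · rw [hψ0def, indicator_of_mem hs]
      exact le_max_of_le_left (by simpa [Real.norm_eq_abs] using hC s hs)
    · rw [hψ0def, indicator_of_notMem hs]; simp
  have hpm_bd : ∀ y, |pm y| ≤ (b - a) ^ m / m.factorial := by
    intro y
    by_cases hy : y ∈ Ioc 0 (b - a)
    · rw [hpm, indicator_of_mem hy]
      have h1 : |Km y| = y ^ m / m.factorial := by
        rw [hKm]
        exact abs_of_nonneg (div_nonneg (pow_nonneg hy.1.le m) (Nat.cast_nonneg _))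
      rw [h1]
      gcongr
      · exact hy.1.le
      · exact hy.2
    · rw [hpm, indicator_of_notMem hy]
      simp only [abs_zero]
      exact div_nonneg (pow_nonneg (by linarith) m) (Nat.cast_nonneg _)
  set J : ℝ × ℝ → ℝ :=
    fun p => (Ioc a t).indicator (fun _ => (1 : ℝ)) p.1 * (pm (p.1 - p.2) * ψ0 p.2) with hJdef
  have hJm : Measurable J :=
    ((measurable_one.indicator measurableSet_Ioc).comp measurable_fst).mul
      ((hpmm.comp (measurable_fst.sub measurable_snd)).mul (hψ0m.comp measurable_snd))
  have hJint : Integrable J (volume.prod volume) := by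
    refine Integrable.mono'
      (g := fun p => ((Ioc a t) ×ˢ (Icc a b)).indicator
        (fun _ => (b - a) ^ m / m.factorial * max C 0) p)
      ?_ hJm.aestronglyMeasurable (Filter.Eventually.of_forall fun p => ?_)
    · refine (integrable_indicator_iff (measurableSet_Ioc.prod measurableSet_Icc)).2 ?_
      refine integrableOn_const ?_
      rw [Measure.prod_prod]
      exact (ENNReal.mul_lt_top measure_Ioc_lt_top measure_Icc_lt_top).ne
    · show ‖J p‖ ≤ ((Ioc a t) ×ˢ (Icc a b)).indicator
          (fun _ => (b - a) ^ m / m.factorial * max C 0) p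
      have hbd0 : (0:ℝ) ≤ (b - a) ^ m / m.factorial * max C 0 :=
        mul_nonneg (div_nonneg (pow_nonneg (by linarith) m) (Nat.cast_nonneg _))
          (le_max_right _ _)
      by_cases hp1 : p.1 ∈ Ioc a t
      · by_cases hp2 : p.2 ∈ Icc a b
        · rw [indicator_of_mem (show p ∈ (Ioc a t) ×ˢ (Icc a b) from ⟨hp1, hp2⟩)]
          have h1 : ‖J p‖ = |pm (p.1 - p.2)| * |ψ0 p.2| := by
            rw [hJdef]
            simp only [indicator_of_mem hp1, one_mul, Real.norm_eq_abs, abs_mul]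
          rw [h1]
          exact mul_le_mul (hpm_bd _) (hC0 _) (abs_nonneg _)
            (div_nonneg (pow_nonneg (by linarith) m) (Nat.cast_nonneg _))
        · have h1 : J p = 0 := by
            rw [hJdef]
            simp only [hψ0def, indicator_of_notMem hp2, mul_zero]
          rw [h1]
          simp only [norm_zero]
          by_cases hp : p ∈ (Ioc a t) ×ˢ (Icc a b)
          · rw [indicator_of_mem hp]; exact hbd0
          · rw [indicator_of_notMem hp]
      · have h1 : J p = 0 := by
          rw [hJdef]
          simp only [indicator_of_notMem hp1, zero_mul]
        rw [h1]
        simp only [norm_zero]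
        by_cases hp : p ∈ (Ioc a t) ×ˢ (Icc a b)
        · rw [indicator_of_mem hp]; exact hbd0
        · rw [indicator_of_notMem hp]
  have hpmI : Integrable pm := by
    refine (integrable_indicator_iff measurableSet_Ioc).2 ?_
    exact (by fun_prop : Continuous Km).integrableOn_Ioc
  have step1 : (∫ u in a..t, ∫ s in a..u, (u - s) ^ m / m.factorial * ψ s) =
      ∫ u, ∫ s, J (u, s) := by
    rw [intervalIntegral.integral_of_le hat]
    have e1 : ∀ u ∈ Ioc a t,
        (∫ s in a..u, (u - s) ^ m / m.factorial * ψ s) = ∫ s, pm (u - s) * ψ0 s := by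
      intro u hu
      exact rep_aux a b Km ψ u ⟨hu.1.le, hu.2.trans htb⟩
    rw [setIntegral_congr_fun measurableSet_Ioc e1,
      ← MeasureTheory.integral_indicator measurableSet_Ioc]
    refine MeasureTheory.integral_congr_ae (Filter.Eventually.of_forall fun u => ?_)
    by_cases hu : u ∈ Ioc a t
    · rw [indicator_of_mem hu]
      refine MeasureTheory.integral_congr_ae (Filter.Eventually.of_forall fun s => ?_) |>.symm
      show J (u, s) = pm (u - s) * ψ0 s
      rw [hJdef]
      simp only [indicator_of_mem hu, one_mul]
    · rw [indicator_of_notMem hu]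
      have h1 : ∀ s, J (u, s) = 0 := by
        intro s
        rw [hJdef]
        simp only [indicator_of_notMem hu, zero_mul]
      simp [h1]
  have step2 : (∫ u, ∫ s, J (u, s)) = ∫ s, ∫ u, J (u, s) :=
    integral_integral_swap hJint
  have step3 : (∫ s, ∫ u, J (u, s)) =
      ∫ s in a..t, (t - s) ^ (m + 1) / (m + 1).factorial * ψ s := by
    rw [rep_aux a b (fun y => y ^ (m + 1) / (m + 1).factorial) ψ t ⟨hat, htb⟩]
    refine MeasureTheory.integral_congr_ae (Filter.Eventually.of_forall fun s => ?_)
    show (∫ u, J (u, s)) =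
      (Ioc 0 (b - a)).indicator (fun y => y ^ (m + 1) / (m + 1).factorial) (t - s) *
        (Icc a b).indicator ψ s
    rw [← hψ0def]
    have e1 : (∫ u, J (u, s)) = (∫ u in Ioc a t, pm (u - s)) * ψ0 s := by
      have e2 : ∀ u, J (u, s) = (Ioc a t).indicator (fun u => pm (u - s) * ψ0 s) u := by
        intro u
        by_cases hu : u ∈ Ioc a t
        · rw [hJdef, indicator_of_mem hu]
          simp only [indicator_of_mem hu, one_mul]
        · rw [hJdef, indicator_of_notMem hu]
          simp only [indicator_of_notMem hu, zero_mul]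
      simp_rw [e2]
      rw [MeasureTheory.integral_indicator measurableSet_Ioc]
      exact MeasureTheory.integral_mul_const _ _
    rw [e1]
    by_cases hs : s ∈ Icc a b
    · congr 1
      rcases le_or_gt t s with h | h
      · have h1 : ∀ u ∈ Ioc a t, pm (u - s) = 0 := by
          intro u hu
          rw [hpm]
          exact indicator_of_notMem (fun hc => absurd hc.1 (by linarith [hu.2])) _
        rw [setIntegral_congr_fun measurableSet_Ioc h1]
        simp only [MeasureTheory.integral_zero]
        rw [indicator_of_notMem (fun hc : t - s ∈ Ioc 0 (b - a) => absurd hc.1 (by linarith))]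
      · have hsplit : Ioc a s ∪ Ioc s t = Ioc a t := Ioc_union_Ioc_eq_Ioc hs.1 h.le
        have hdisj : Disjoint (Ioc a s) (Ioc s t) := by
          rw [Set.disjoint_left]; intro u h1 h2; exact absurd h2.1 (not_lt.2 h1.2)
        have hint1 : IntegrableOn (fun u => pm (u - s)) (Ioc a s) :=
          (hpmI.comp_sub_right s).integrableOn
        have hint2 : IntegrableOn (fun u => pm (u - s)) (Ioc s t) :=
          (hpmI.comp_sub_right s).integrableOn
        rw [← hsplit, setIntegral_union hdisj measurableSet_Ioc hint1 hint2]
        have h1 : ∀ u ∈ Ioc a s, pm (u - s) = 0 := by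
          intro u hu
          rw [hpm]
          exact indicator_of_notMem (fun hc => absurd hc.1 (by linarith [hu.2])) _
        rw [setIntegral_congr_fun measurableSet_Ioc h1]
        simp only [MeasureTheory.integral_zero, zero_add]
        have h2 : ∀ u ∈ Ioc s t, pm (u - s) = (u - s) ^ m / m.factorial := by
          intro u hu
          rw [hpm, indicator_of_mem (show u - s ∈ Ioc 0 (b - a) from
            ⟨by linarith [hu.1], by linarith [hu.2, hs.1]⟩)]
        rw [setIntegral_congr_fun measurableSet_Ioc h2,
          ← intervalIntegral.integral_of_le h.le,
          indicator_of_mem (show t - s ∈ Ioc 0 (b - a) from ⟨by linarith, by linarith [hs.1]⟩)]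
        have h3 : (∫ u in s..t, (u - s) ^ m / m.factorial) =
            (∫ u in s..t, (u - s) ^ m) / m.factorial := intervalIntegral.integral_div _ _
        rw [h3, intervalIntegral.integral_comp_sub_right (fun y => y ^ m) s, sub_self,
          integral_pow]
        have hfac : ((m + 1).factorial : ℝ) = (m + 1) * m.factorial := by
          rw [Nat.factorial_succ]; push_cast; ring
        rw [hfac]
        have hm1 : ((m : ℝ) + 1) ≠ 0 := by positivity
        have hmf : ((m.factorial : ℝ)) ≠ 0 := Nat.cast_ne_zero.2 m.factorial_ne_zero
        field_simp
        simp
    · have h0 : ψ0 s = 0 := by rw [hψ0def, indicator_of_notMem hs]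
      rw [h0, mul_zero, mul_zero]
  rw [step1, step2, step3]

/-- **Second fundamental theorem of general fractional calculus, left Riemann–Liouville
case.** If `(k, κ)` satisfy the modified Sonine condition of order `n` on `(0, b-a]` and
`f = I_κ φ` for some continuous `φ : [a,b] → ℝ`, then for every `x ∈ (a, b]` one has
`I_κ (ᴿᴸD_k f)(x) = f(x)`, where
`ᴿᴸD_k f (t) = (d/dt)ⁿ ∫_a^t k(t-s) f(s) ds`. -/
theorem second_fundamental_left_riemannLiouville
    (a b : ℝ) (hab : a < b) (n : ℕ) (hn : 1 ≤ n)
    (k κ : ℝ → ℝ) (hkm : Measurable k) (hκm : Measurable κ)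
    (hkI : IntegrableOn k (Ioc 0 (b - a)))
    (hκI : IntegrableOn κ (Ioc 0 (b - a)))
    (hSonine : ∀ y, 0 < y → y ≤ b - a →
      ∫ s in (0:ℝ)..y, k (y - s) * κ s = y ^ (n - 1) / (n - 1).factorial)
    (f φ : ℝ → ℝ) (hφ : ContinuousOn φ (Icc a b))
    (hfφ : ∀ x ∈ Icc a b, f x = ∫ s in a..x, κ (x - s) * φ s) :
    ∀ x ∈ Ioc a b,
      (∫ s in a..x, κ (x - s) *
          iteratedDerivWithin n (fun t => ∫ u in a..t, k (t - u) * f u) (Icc a b) s) =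
        f x := by
  obtain ⟨ψc, hψc⟩ := ContinuousMap.exists_restrict_eq (Y := ℝ)
    (isClosed_Icc (a := a) (b := b)) ⟨(Icc a b).restrict φ, hφ.restrict⟩
  set ψ : ℝ → ℝ := (ψc : ℝ → ℝ) with hψdef
  have hψcont : Continuous ψ := ψc.continuous
  have hψeq : ∀ s ∈ Icc a b, ψ s = φ s := by
    intro s hs
    have h := congrFun (congrArg DFunLike.coe hψc) ⟨s, hs⟩
    exact h
  obtain ⟨N, rfl⟩ : ∃ N, n = N + 1 := ⟨n - 1, by omega⟩
  simp only [Nat.add_sub_cancel] at hSonine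
  set g : ℝ → ℝ := fun t => ∫ u in a..t, k (t - u) * f u with hgdef
  set P : ℕ → ℝ → ℝ := fun m t => ∫ s in a..t, (t - s) ^ m / m.factorial * ψ s with hPdef
  have hfψ : ∀ u ∈ Icc a b, f u = ∫ s in a..u, κ (u - s) * ψ s := by
    intro u hu
    rw [hfφ u hu]
    refine intervalIntegral.integral_congr (fun s hs => ?_)
    rw [uIcc_of_le hu.1] at hs
    rw [hψeq s ⟨hs.1, hs.2.trans hu.2⟩]
  have hgP : ∀ t ∈ Icc a b, g t = P N t := by
    intro t ht
    have e1 : g t = ∫ u in a..t, k (t - u) * ∫ s in a..u, κ (u - s) * ψ s := by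
      refine intervalIntegral.integral_congr (fun u hu => ?_)
      rw [uIcc_of_le ht.1] at hu
      rw [hfψ u ⟨hu.1, hu.2.trans ht.2⟩]
    rw [e1]
    exact key1 a b N k κ ψ hkm hκm hψcont hkI hκI hSonine t ht.1 ht.2
  have hP0 : ∀ t : ℝ, HasDerivAt (P 0) (ψ t) t := by
    intro t
    have e1 : P 0 = fun x => ∫ s in a..x, ψ s := by
      funext x
      show (∫ s in a..x, (x - s) ^ 0 / (Nat.factorial 0) * ψ s) = ∫ s in a..x, ψ s
      refine intervalIntegral.integral_congr (fun s _ => ?_)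
      simp
    rw [e1]
    exact (hψcont.integral_hasStrictDerivAt a t).hasDerivAt
  have hstep : ∀ m : ℕ, ContinuousOn (P m) (Icc a b) →
      ∀ t ∈ Icc a b, HasDerivWithinAt (P (m + 1)) (P m t) (Icc a b) t := by
    intro m hcont t ht
    haveI : Fact (t ∈ Icc a b) := ⟨ht⟩
    have hii : IntervalIntegrable (P m) volume a t := by
      refine ContinuousOn.intervalIntegrable ?_
      rw [uIcc_of_le ht.1]
      exact hcont.mono (Icc_subset_Icc_right ht.2)
    have hQ : HasDerivWithinAt (fun x => ∫ u in a..x, P m u) (P m t) (Icc a b) t :=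
      intervalIntegral.integral_hasDerivWithinAt_right hii
        (hcont.stronglyMeasurableAtFilter_nhdsWithin measurableSet_Icc t)
        (hcont t ht)
    refine hQ.congr (fun y hy => ?_) ?_
    · exact (key2 a b hab.le m ψ hψcont y hy.1 hy.2).symm
    · exact (key2 a b hab.le m ψ hψcont t ht.1 ht.2).symm
  have hPcont : ∀ m, ContinuousOn (P m) (Icc a b) := by
    intro m
    induction m with
    | zero => exact fun t ht => (hP0 t).continuousAt.continuousWithinAt
    | succ m ih => exact fun t ht => (hstep m ih t ht).continuousWithinAt
  have hPderiv : ∀ m, ∀ t ∈ Icc a b, HasDerivWithinAt (P (m + 1)) (P m t) (Icc a b) t :=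
    fun m => hstep m (hPcont m)
  have hUD := uniqueDiffOn_Icc hab
  have hiter : ∀ j, j ≤ N → ∀ t ∈ Icc a b,
      iteratedDerivWithin j g (Icc a b) t = P (N - j) t := by
    intro j
    induction j with
    | zero =>
      intro _ t ht
      rw [iteratedDerivWithin_zero]
      simpa using hgP t ht
    | succ j ih =>
      intro hj t ht
      rw [iteratedDerivWithin_succ]
      have e1 : derivWithin (iteratedDerivWithin j g (Icc a b)) (Icc a b) t
          = derivWithin (P (N - j)) (Icc a b) t :=
        derivWithin_congr (fun y hy => ih (by omega) y hy) (ih (by omega) t ht)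
      rw [e1, show N - j = (N - (j + 1)) + 1 from by omega]
      exact (hPderiv (N - (j + 1)) t ht).derivWithin (hUD t ht)
  have hfinal : ∀ t ∈ Icc a b, iteratedDerivWithin (N + 1) g (Icc a b) t = ψ t := by
    intro t ht
    rw [iteratedDerivWithin_succ]
    have e1 : derivWithin (iteratedDerivWithin N g (Icc a b)) (Icc a b) t
        = derivWithin (P (N - N)) (Icc a b) t :=
      derivWithin_congr (fun y hy => hiter N le_rfl y hy) (hiter N le_rfl t ht)
    rw [e1, Nat.sub_self]
    exact (hP0 t).hasDerivWithinAt.derivWithin (hUD t ht)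
  intro x hx
  have hx' : x ∈ Icc a b := ⟨hx.1.le, hx.2⟩
  have e1 : (∫ s in a..x, κ (x - s) * iteratedDerivWithin (N + 1) g (Icc a b) s)
      = ∫ s in a..x, κ (x - s) * ψ s := by
    refine intervalIntegral.integral_congr (fun s hs => ?_)
    rw [uIcc_of_le hx.1.le] at hs
    rw [hfinal s ⟨hs.1, hs.2.trans hx.2⟩]
  rw [e1, ← hfψ x hx']
end

section
/- (Second fundamental theorem, left Caputo case.) Let a < b be real numbers and n ≥ 1 a natural number. Let k, κ : ℝ → ℝ be measurable, integrable on (0, b−a], and satisfy the modified Sonine condition of order n. Then for every n-times continuously differentiable function f : [a,b] → ℝ and every x ∈ (a,b], I_κ ( ᶜD_k f )(x) = f(x) − Σ_{j=0}^{n−1} f⁽ʲ⁾(a) (x−a)ʲ/j!. -/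
open MeasureTheory intervalIntegral Set

lemma taylor_integral_remainder' (a b : ℝ) (hab : a < b) (N : ℕ) (f : ℝ → ℝ)
    (hf : ContDiffOn ℝ (N + 1) f (Icc a b)) (x : ℝ) (hx : x ∈ Ioc a b) :
    f x - taylorWithinEval f N (Icc a b) a x =
      ∫ t in a..x, ((N.factorial : ℝ)⁻¹ * (x - t) ^ N) * iteratedDerivWithin (N + 1) f (Icc a b) t := by
  have hu : UniqueDiffOn ℝ (Icc a b) := uniqueDiffOn_Icc hab
  have hfN : ContDiffOn ℝ N f (Icc a b) := hf.of_le (by exact_mod_cast Nat.le_succ N)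
  have hgc : ContinuousOn (iteratedDerivWithin (N + 1) f (Icc a b)) (Icc a b) :=
    hf.continuousOn_iteratedDerivWithin le_rfl hu
  have hder : ∀ t ∈ Ioo a x, HasDerivWithinAt (fun y => taylorWithinEval f N (Icc a b) y x)
      (((N.factorial : ℝ)⁻¹ * (x - t) ^ N) * iteratedDerivWithin (N + 1) f (Icc a b) t) (Ioi t) t := by
    intro t ht
    have ht' : t ∈ Ioo a b := ⟨ht.1, lt_of_lt_of_le ht.2 hx.2⟩
    have := taylorWithinEval_hasDerivAt_Ioo x hab ht' hfN
      ((hf.differentiableOn_iteratedDerivWithin (by exact_mod_cast Nat.lt_succ_self N) hu).mono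
        Ioo_subset_Icc_self)
    simpa [smul_eq_mul] using this.hasDerivWithinAt
  have hcont : ContinuousOn (fun y => taylorWithinEval f N (Icc a b) y x) (Icc a x) :=
    (continuousOn_taylorWithinEval hu hfN).mono (Icc_subset_Icc le_rfl hx.2)
  have hint : IntervalIntegrable
      (fun t => ((N.factorial : ℝ)⁻¹ * (x - t) ^ N) * iteratedDerivWithin (N + 1) f (Icc a b) t)
      volume a x := by
    apply ContinuousOn.intervalIntegrable
    apply ContinuousOn.mul (by fun_prop)
    exact hgc.mono (by rw [uIcc_of_le hx.1.le]; exact Icc_subset_Icc le_rfl hx.2)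
  have := intervalIntegral.integral_eq_sub_of_hasDeriv_right_of_le hx.1.le hcont hder hint
  rw [this, taylorWithinEval_self]

/-- **Second fundamental theorem of general fractional calculus, left Caputo case.**
If `(k, κ)` satisfy the modified Sonine condition of order `n` on `(0, b-a]`, then for
every `n`-times continuously differentiable `f : [a,b] → ℝ` and every `x ∈ (a, b]`,
`I_κ (ᶜD_k f)(x) = f(x) − Σ_{j<n} f⁽ʲ⁾(a) (x-a)ʲ/j!`. -/
theorem second_fundamental_left_caputo
    (a b : ℝ) (hab : a < b) (n : ℕ) (hn : 1 ≤ n)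
    (k κ : ℝ → ℝ) (hkm : Measurable k) (hκm : Measurable κ)
    (hkI : IntegrableOn k (Ioc 0 (b - a)))
    (hκI : IntegrableOn κ (Ioc 0 (b - a)))
    (hSonine : ∀ y, 0 < y → y ≤ b - a →
      ∫ s in (0:ℝ)..y, k (y - s) * κ s = y ^ (n - 1) / (n - 1).factorial)
    (f : ℝ → ℝ) (hf : ContDiffOn ℝ n f (Icc a b)) :
    ∀ x ∈ Ioc a b,
      (∫ s in a..x, κ (x - s) *
          (∫ u in a..s, k (s - u) * iteratedDerivWithin n f (Icc a b) u)) =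
        f x - ∑ j ∈ Finset.range n,
          iteratedDerivWithin j f (Icc a b) a * (x - a) ^ j / j.factorial := by
  obtain ⟨N, rfl⟩ : ∃ N, n = N + 1 := ⟨n - 1, (Nat.succ_pred_eq_of_pos hn).symm⟩
  intro x hx
  obtain ⟨hax, hxb⟩ := hx
  have hu : UniqueDiffOn ℝ (Icc a b) := uniqueDiffOn_Icc hab
  set g : ℝ → ℝ := iteratedDerivWithin (N + 1) f (Icc a b) with hg
  have hgc : ContinuousOn g (Icc a b) := hf.continuousOn_iteratedDerivWithin le_rfl hu
  -- continuous extension of g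
  set G₀ : ℝ → ℝ := fun t => g (min (max t a) b) with hG₀
  have hclamp : ∀ t, min (max t a) b ∈ Icc a b := fun t =>
    ⟨le_min (le_max_right t a) hab.le, min_le_right _ _⟩
  have hG₀c : Continuous G₀ :=
    hgc.comp_continuous (by continuity) hclamp
  have hG₀eq : ∀ t ∈ Icc a b, G₀ t = g t := by
    intro t ht
    simp only [hG₀, max_eq_left ht.1, min_eq_left ht.2]
  obtain ⟨M, hM⟩ := isCompact_Icc.exists_bound_of_continuousOn hgc
  have hM0 : 0 ≤ M := le_trans (norm_nonneg _) (hM a ⟨le_rfl, hab.le⟩)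
  have hG₀M : ∀ t, ‖G₀ t‖ ≤ M := fun t => hM _ (hclamp t)
  set K : ℝ → ℝ := (Ioc 0 (b - a)).indicator k with hK
  set Q : ℝ → ℝ := (Ioc 0 (b - a)).indicator κ with hQ
  set G : ℝ → ℝ := (Ioc a x).indicator G₀ with hGdef
  have hKm' : Measurable K := hkm.indicator measurableSet_Ioc
  have hQm' : Measurable Q := hκm.indicator measurableSet_Ioc
  have hGm' : Measurable G := hG₀c.measurable.indicator measurableSet_Ioc
  have hKi : Integrable K := hkI.integrable_indicator measurableSet_Ioc
  have hQi : Integrable Q := hκI.integrable_indicator measurableSet_Ioc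
  have hGM : ∀ t, ‖G t‖ ≤ M := fun t =>
    le_trans (norm_indicator_le_norm_self _ _) (hG₀M t)
  have hGeq : ∀ u ∈ Ioc a x, G u = g u := by
    intro u hu'
    rw [hGdef, indicator_of_mem hu', hG₀eq u ⟨hu'.1.le, hu'.2.trans hxb⟩]
  have hxa : x - a ≤ b - a := by linarith
  -- Step 1 : rewrite LHS as a double integral over ℝ × ℝ
  have step1 : (∫ s in a..x, κ (x - s) * (∫ u in a..s, k (s - u) * g u))
      = ∫ s, Q (x - s) * (∫ u, K (s - u) * G u) := by
    rw [integral_of_le hax.le, integral_Ioc_eq_integral_Ioo]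
    rw [← setIntegral_eq_integral_of_forall_compl_eq_zero
      (s := Ioo a x) (f := fun s => Q (x - s) * (∫ u, K (s - u) * G u)) ?_]
    · apply setIntegral_congr_fun measurableSet_Ioo
      intro s hs
      have hmemQ : x - s ∈ Ioc 0 (b - a) := ⟨by linarith [hs.2], by linarith [hs.1]⟩
      have hQeq : κ (x - s) = Q (x - s) := (indicator_of_mem hmemQ κ).symm
      have hinner : (∫ u in a..s, k (s - u) * g u) = ∫ u, K (s - u) * G u := by
        rw [← setIntegral_eq_integral_of_forall_compl_eq_zero
          (s := Ioo a s) (f := fun u => K (s - u) * G u) ?_]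
        · rw [integral_of_le hs.1.le, integral_Ioc_eq_integral_Ioo]
          apply setIntegral_congr_fun measurableSet_Ioo
          intro u hu'
          have hmemK : s - u ∈ Ioc 0 (b - a) :=
            ⟨by linarith [hu'.2], by linarith [hu'.1, hs.2]⟩
          have h1 : K (s - u) = k (s - u) := indicator_of_mem hmemK k
          have h2 : G u = g u := hGeq u ⟨hu'.1, by linarith [hu'.2, hs.2]⟩
          simp only [h1, h2]
        · intro u hu'
          rcases le_or_gt u a with h | h
          · have : G u = 0 := indicator_of_notMem (fun hc => absurd hc.1 (not_lt.2 h)) _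
            simp only [this, mul_zero]
          · have hsu : s ≤ u := by
              by_contra hc
              exact hu' ⟨h, lt_of_not_ge hc⟩
            have : K (s - u) = 0 :=
              indicator_of_notMem (fun hc => absurd hc.1 (by linarith)) _
            simp only [this, zero_mul]
      simp only [hQeq, hinner]
    · intro s hs
      rcases le_or_gt s a with h | h
      · have hz : ∀ u, K (s - u) * G u = 0 := by
          intro u
          rcases le_or_gt u a with h' | h'
          · have : G u = 0 := indicator_of_notMem (fun hc => absurd hc.1 (not_lt.2 h')) _
            simp only [this, mul_zero]
          · have : K (s - u) = 0 :=
              indicator_of_notMem (fun hc => absurd hc.1 (by linarith)) _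
            simp only [this, zero_mul]
        simp only [hz, MeasureTheory.integral_zero, mul_zero]
      · have hxs : x ≤ s := by
          by_contra hc
          exact hs ⟨h, lt_of_not_ge hc⟩
        have : Q (x - s) = 0 :=
          indicator_of_notMem (fun hc => absurd hc.1 (by linarith)) _
        simp only [this, zero_mul]
  -- Integrability of the double integrand
  have hT : MeasurePreserving (fun p : ℝ × ℝ => (x - p.1, p.1 - p.2))
      ((volume : Measure ℝ).prod volume) ((volume : Measure ℝ).prod volume) := by
    have t1 := measurePreserving_prod_sub_swap (volume : Measure ℝ) volume
    have t2 := measurePreserving_add_prod (volume : Measure ℝ) volume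
    have t3 := (Measure.measurePreserving_sub_left (volume : Measure ℝ) x).prod
      (MeasurePreserving.id (volume : Measure ℝ))
    have hc := t3.comp (t2.comp t1)
    have heq : (Prod.map (fun t : ℝ => x - t) id ∘ (fun z : ℝ × ℝ => (z.1 + z.2, z.2)) ∘
        (fun z : ℝ × ℝ => (z.2, z.1 - z.2))) = fun p : ℝ × ℝ => (x - p.1, p.1 - p.2) := by
      funext p
      simp only [Function.comp_apply, Prod.map_apply, id_eq, Prod.mk.injEq]
      exact ⟨by ring, trivial⟩
    rwa [heq] at hc
  have hΨ : Integrable (fun q : ℝ × ℝ => |Q q.1| * (M * |K q.2|))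
      ((volume : Measure ℝ).prod volume) :=
    hQi.abs.mul_prod (hKi.abs.const_mul M)
  have hΨT : Integrable (fun p : ℝ × ℝ => |Q (x - p.1)| * (M * |K (p.1 - p.2)|))
      ((volume : Measure ℝ).prod volume) := by
    have hmeas : Measurable (fun q : ℝ × ℝ => |Q q.1| * (M * |K q.2|)) :=
      ((hQm'.comp measurable_fst).abs).mul (((hKm'.comp measurable_snd).abs).const_mul M)
    exact (hT.integrable_comp hmeas.aestronglyMeasurable).mpr hΨ
  have hFm : Measurable (fun p : ℝ × ℝ => Q (x - p.1) * (K (p.1 - p.2) * G p.2)) := by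
    fun_prop
  have hFi : Integrable (fun p : ℝ × ℝ => Q (x - p.1) * (K (p.1 - p.2) * G p.2))
      ((volume : Measure ℝ).prod volume) := by
    apply Integrable.mono' hΨT hFm.aestronglyMeasurable
    filter_upwards with p
    have h1 : ‖Q (x - p.1) * (K (p.1 - p.2) * G p.2)‖
        = |Q (x - p.1)| * (|K (p.1 - p.2)| * ‖G p.2‖) := by
      simp [abs_mul, Real.norm_eq_abs]
    rw [h1]
    have h4 : |K (p.1 - p.2)| * ‖G p.2‖ ≤ M * |K (p.1 - p.2)| := by
      rw [mul_comm M]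
      exact mul_le_mul_of_nonneg_left (hGM p.2) (abs_nonneg _)
    exact mul_le_mul_of_nonneg_left h4 (abs_nonneg _)
  -- Step 2 : Fubini
  have step2 : (∫ s, Q (x - s) * (∫ u, K (s - u) * G u))
      = ∫ u, (∫ s, Q (x - s) * (K (s - u) * G u)) := by
    rw [← MeasureTheory.integral_integral_swap hFi]
    congr 1
    funext s
    rw [← MeasureTheory.integral_const_mul]
  -- Step 3 : the Sonine convolution identity
  have hW : ∀ u ∈ Ioo a x, (∫ s, Q (x - s) * K (s - u)) = (x - u) ^ N / N.factorial := by
    intro u hu'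
    set y : ℝ := x - u with hy
    have hy0 : 0 < y := by simp [hy]; linarith [hu'.2]
    have hyba : y ≤ b - a := by simp [hy]; linarith [hu'.1]
    have h1 : (∫ s, Q (x - s) * K (s - u)) = ∫ t, Q (y - t) * K t := by
      have := integral_sub_right_eq_self (μ := (volume : Measure ℝ))
        (fun t => Q (y - t) * K t) u
      rw [← this]
      congr 1
      funext s
      have : y - (s - u) = x - s := by rw [hy]; ring
      rw [this]
    rw [h1]
    rw [← setIntegral_eq_integral_of_forall_compl_eq_zero
      (s := Ioo 0 y) (f := fun t => Q (y - t) * K t) ?_]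
    · have h2 : ∫ t in Ioo 0 y, Q (y - t) * K t = ∫ t in Ioo 0 y, κ (y - t) * k t := by
        apply setIntegral_congr_fun measurableSet_Ioo
        intro t ht
        have hmQ : y - t ∈ Ioc 0 (b - a) := ⟨by linarith [ht.2], by linarith [ht.1]⟩
        have hmK : t ∈ Ioc 0 (b - a) := ⟨ht.1, le_trans ht.2.le hyba⟩
        have hQt : Q (y - t) = κ (y - t) := indicator_of_mem hmQ κ
        have hKt : K t = k t := indicator_of_mem hmK k
        simp only [hQt, hKt]
      rw [h2, ← integral_Ioc_eq_integral_Ioo, ← integral_of_le hy0.le]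
      have h3 : (∫ t in (0:ℝ)..y, κ (y - t) * k t) = ∫ t in (0:ℝ)..y, k (y - t) * κ t := by
        have := intervalIntegral.integral_comp_sub_left
          (a := (0:ℝ)) (b := y) (fun s => k (y - s) * κ s) y
        simp only [sub_zero, sub_self] at this
        rw [← this]
        congr 1
        funext t
        rw [sub_sub_cancel, mul_comm]
      rw [h3, hSonine y hy0 hyba]
      simp
    · intro t ht
      rcases le_or_gt t 0 with h | h
      · have : K t = 0 := indicator_of_notMem (fun hc => absurd hc.1 (not_lt.2 h)) _
        simp only [this, mul_zero]
      · have hyt : y ≤ t := by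
          by_contra hc
          exact ht ⟨h, lt_of_not_ge hc⟩
        have : Q (y - t) = 0 :=
          indicator_of_notMem (fun hc => absurd hc.1 (by linarith)) _
        simp only [this, zero_mul]
  -- Step 4 : compute the outer integral
  have step4 : (∫ u, (∫ s, Q (x - s) * (K (s - u) * G u)))
      = ∫ t in a..x, ((N.factorial : ℝ)⁻¹ * (x - t) ^ N) * g t := by
    have hzero : ∀ u, u ∉ Ioo a x →
        (∫ s, Q (x - s) * (K (s - u) * G u)) = 0 := by
      intro u hu'
      rcases le_or_gt x u with h | h
      · have hz : ∀ s, Q (x - s) * (K (s - u) * G u) = 0 := by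
          intro s
          rcases le_or_gt s x with h'' | h''
          · have : K (s - u) = 0 :=
              indicator_of_notMem (fun hc => absurd hc.1 (by linarith)) _
            simp only [this, zero_mul, mul_zero]
          · have : Q (x - s) = 0 :=
              indicator_of_notMem (fun hc => absurd hc.1 (by linarith)) _
            simp only [this, zero_mul]
        simp only [hz, MeasureTheory.integral_zero]
      · have hua : u ≤ a := by
          by_contra hc
          exact hu' ⟨lt_of_not_ge hc, h⟩
        have : G u = 0 := indicator_of_notMem (fun hc => absurd hc.1 (not_lt.2 hua)) _
        simp only [this, mul_zero, MeasureTheory.integral_zero]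
    rw [← setIntegral_eq_integral_of_forall_compl_eq_zero (s := Ioo a x) hzero]
    rw [integral_of_le hax.le, integral_Ioc_eq_integral_Ioo]
    apply setIntegral_congr_fun measurableSet_Ioo
    intro u hu'
    have h1 : (∫ s, Q (x - s) * (K (s - u) * G u))
        = (∫ s, Q (x - s) * K (s - u)) * G u := by
      rw [← MeasureTheory.integral_mul_const]
      congr 1
      funext s
      ring
    dsimp only
    rw [h1, hW u hu', hGeq u ⟨hu'.1, hu'.2.le⟩]
    field_simp
  -- Step 5 : Taylor's theorem with integral remainder
  have taylor := taylor_integral_remainder' a b hab N f hf x ⟨hax, hxb⟩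
  have hsum : taylorWithinEval f N (Icc a b) a x
      = ∑ j ∈ Finset.range (N + 1),
          iteratedDerivWithin j f (Icc a b) a * (x - a) ^ j / j.factorial := by
    rw [taylor_within_apply]
    apply Finset.sum_congr rfl
    intro j _
    rw [smul_eq_mul]
    ring
  rw [step1, step2, step4, ← hsum, taylor]
end

section
/- Let α, β > −1 and let k, κ : ℝ → ℝ be measurable, integrable on (0, 1], satisfying the Sonine condition ∫_0^x k(x−t) κ(t) dt = 1 for all 0 < x ≤ 1. Let φ_n(x) = ∫_0^x κ(x−t) P̃_n^{α,β}(t) dt be the n-th left Jacobi convolution series. Then φ_n(0) = 0 (indeed φ_n(x) → 0 as x → 0⁺), and for every x ∈ (0,1] the general fractional Riemann–Liouville derivative of φ_n exists and equals the shifted Jacobi polynomial: (d/dx) ∫_0^x k(x−s) φ_n(s) ds = P̃_n^{α,β}(x). -/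
open MeasureTheory intervalIntegral Set Filter
open scoped Convolution Topology

/-- The Jacobi polynomial `P_n^{α,β}` on `[-1,1]`, written via the Euler Gamma function. -/
noncomputable def jacobiP (α β : ℝ) (n : ℕ) (x : ℝ) : ℝ :=
  (2 : ℝ) ^ (-(n : ℤ)) * ∑ k ∈ Finset.range (n + 1),
    (Real.Gamma ((n : ℝ) + α + 1) /
        (Real.Gamma ((k : ℝ) + 1) * Real.Gamma ((n : ℝ) + α - (k : ℝ) + 1))) *
      (Real.Gamma ((n : ℝ) + β + 1) /
        (Real.Gamma ((n : ℝ) - (k : ℝ) + 1) * Real.Gamma (β + (k : ℝ) + 1))) *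
      (x - 1) ^ (n - k) * (x + 1) ^ k

/-- The shifted Jacobi polynomial `P̃_n^{α,β}` on `[0,1]`. -/
noncomputable def shiftedJacobiP (α β : ℝ) (n : ℕ) (x : ℝ) : ℝ :=
  jacobiP α β n (2 * x - 1)

/-- The `n`-th left Jacobi convolution series `φ_n(x) = ∫_0^x κ(x-t) P̃_n^{α,β}(t) dt`. -/
noncomputable def leftJacobiConv (κ : ℝ → ℝ) (α β : ℝ) (n : ℕ) (x : ℝ) : ℝ :=
  ∫ t in (0:ℝ)..x, κ (x - t) * shiftedJacobiP α β n t

lemma continuous_shiftedJacobiP (α β : ℝ) (n : ℕ) : Continuous (shiftedJacobiP α β n) := by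
  unfold shiftedJacobiP jacobiP; fun_prop

/-- **The general fractional derivative of the left Jacobi convolution series is the
shifted Jacobi polynomial.** For a Sonine pair `(k, κ)` on `(0,1]`, the `n`-th left
Jacobi convolution series `φ_n` satisfies `φ_n(0) = 0` (indeed `φ_n(x) → 0` as
`x → 0⁺`), and for every `x ∈ (0,1]` the general fractional Riemann–Liouville
derivative `(d/dx) ∫_0^x k(x-s) φ_n(s) ds` exists and equals `P̃_n^{α,β}(x)`. -/
theorem gfd_leftJacobiConv_eq_shiftedJacobiP
    (α β : ℝ) (hα : -1 < α) (hβ : -1 < β) (n : ℕ)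
    (k κ : ℝ → ℝ) (hkm : Measurable k) (hκm : Measurable κ)
    (hkI : IntegrableOn k (Ioc 0 1))
    (hκI : IntegrableOn κ (Ioc 0 1))
    (hSonine : ∀ x : ℝ, 0 < x → x ≤ 1 → ∫ t in (0:ℝ)..x, k (x - t) * κ t = 1) :
    leftJacobiConv κ α β n 0 = 0 ∧
    Tendsto (leftJacobiConv κ α β n) (nhdsWithin 0 (Ioi 0)) (nhds 0) ∧
    ∀ x ∈ Ioc (0:ℝ) 1,
      HasDerivWithinAt (fun t => ∫ s in (0:ℝ)..t, k (t - s) * leftJacobiConv κ α β n s)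
        (shiftedJacobiP α β n x) (Icc 0 1) x := by
  set P : ℝ → ℝ := shiftedJacobiP α β n with hPdef
  have hPc : Continuous P := continuous_shiftedJacobiP α β n
  set φ : ℝ → ℝ := leftJacobiConv κ α β n with hφdef
  -- a bound for `P` on `[0,1]`
  obtain ⟨C, hC⟩ := (isCompact_Icc (a := (0:ℝ)) (b := 1)).exists_bound_of_continuousOn
    hPc.continuousOn
  set C0 : ℝ := max C 0 with hC0def
  have hC0 : ∀ t ∈ Icc (0:ℝ) 1, ‖P t‖ ≤ C0 := fun t ht => (hC t ht).trans (le_max_left _ _)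
  -- truncated kernels
  set k₀ : ℝ → ℝ := (Ioc (0:ℝ) 1).indicator k with hk₀def
  set κ₀ : ℝ → ℝ := (Ioc (0:ℝ) 1).indicator κ with hκ₀def
  set P₀ : ℝ → ℝ := (Icc (0:ℝ) 1).indicator P with hP₀def
  have hk₀I : Integrable k₀ := (integrable_indicator_iff measurableSet_Ioc).mpr hkI
  have hκ₀I : Integrable κ₀ := (integrable_indicator_iff measurableSet_Ioc).mpr hκI
  have hP₀I : Integrable P₀ := (integrable_indicator_iff measurableSet_Icc).mpr
    (hPc.continuousOn.integrableOn_Icc)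
  have hk₀m : Measurable k₀ := hkm.indicator measurableSet_Ioc
  have hκ₀m : Measurable κ₀ := hκm.indicator measurableSet_Ioc
  have hP₀m : Measurable P₀ := hPc.measurable.indicator measurableSet_Icc
  have hP₀b : ∀ t, ‖P₀ t‖ ≤ C0 := by
    intro t
    by_cases ht : t ∈ Icc (0:ℝ) 1
    · rw [hP₀def, indicator_of_mem ht]; exact hC0 t ht
    · rw [hP₀def, indicator_of_notMem ht]; simp [hC0def, le_max_right]
  have hk₀0 : ∀ t : ℝ, t ∉ Ioc (0:ℝ) 1 → k₀ t = 0 := fun t ht => indicator_of_notMem ht _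
  have hκ₀0 : ∀ t : ℝ, t ∉ Ioc (0:ℝ) 1 → κ₀ t = 0 := fun t ht => indicator_of_notMem ht _
  have hP₀0 : ∀ t : ℝ, t ∉ Icc (0:ℝ) 1 → P₀ t = 0 := fun t ht => indicator_of_notMem ht _
  set L : ℝ →L[ℝ] ℝ →L[ℝ] ℝ := ContinuousLinearMap.mul ℝ ℝ with hLdef
  have hLapp : ∀ (f g : ℝ → ℝ) (x : ℝ),
      (f ⋆[L, volume] g) x = ∫ t, f t * g (x - t) := by
    intro f g x; rw [convolution_def]; simp [hLdef]
  set Φ : ℝ → ℝ := κ₀ ⋆[L, volume] P₀ with hΦdef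
  -- the convolution vanishes on nonpositive reals
  have hΦ0 : ∀ y : ℝ, y ≤ 0 → Φ y = 0 := by
    intro y hy
    rw [hΦdef, hLapp]
    have hz : ∀ t : ℝ, κ₀ t * P₀ (y - t) = 0 := by
      intro t
      by_cases ht : t ∈ Ioc (0:ℝ) 1
      · have hmem : y - t ∉ Icc (0:ℝ) 1 := by
          simp only [mem_Icc, not_and_or, not_le]
          left; linarith [ht.1]
        rw [hP₀0 (y - t) hmem, mul_zero]
      · rw [hκ₀0 t ht, zero_mul]
    simp only [hz, MeasureTheory.integral_zero]
  have hφ0 : φ 0 = 0 := by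
    rw [hφdef, leftJacobiConv, intervalIntegral.integral_same]
  -- the reflection identity for interval integrals of the convolution type
  have hrefl : ∀ (f g : ℝ → ℝ) (x : ℝ), (∫ t in (0:ℝ)..x, f (x - t) * g t)
      = ∫ t in (0:ℝ)..x, f t * g (x - t) := by
    intro f g x
    have := intervalIntegral.integral_comp_sub_left (a := (0:ℝ)) (b := x)
      (fun t => f t * g (x - t)) x
    simpa [sub_sub_cancel] using this
  -- E1 : φ agrees with Φ on (0,1]
  have hE1 : ∀ x ∈ Ioc (0:ℝ) 1, φ x = Φ x := by
    intro x hx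
    rw [hφdef, leftJacobiConv, ← hPdef, hrefl κ P x, hΦdef, hLapp,
      intervalIntegral.integral_of_le hx.1.le,
      ← MeasureTheory.integral_indicator measurableSet_Ioc]
    congr 1
    funext t
    by_cases ht : t ∈ Ioc 0 x
    · rw [indicator_of_mem ht]
      have h1 : t ∈ Ioc (0:ℝ) 1 := ⟨ht.1, ht.2.trans hx.2⟩
      have h2 : x - t ∈ Icc (0:ℝ) 1 := ⟨by linarith [ht.2], by linarith [ht.1, hx.2]⟩
      rw [hκ₀def, hP₀def, indicator_of_mem h1, indicator_of_mem h2]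
    · rw [indicator_of_notMem ht]
      simp only [mem_Ioc, not_and_or, not_lt, not_le] at ht
      rcases ht with ht | ht
      · have hmem : t ∉ Ioc (0:ℝ) 1 := by
          simp only [mem_Ioc, not_and_or, not_lt]; left; exact ht
        rw [hκ₀0 t hmem, zero_mul]
      · have hmem : x - t ∉ Icc (0:ℝ) 1 := by
          simp only [mem_Icc, not_and_or, not_le]; left; linarith
        rw [hP₀0 (x - t) hmem, mul_zero]
  -- E2 : the Sonine convolution
  set S : ℝ → ℝ := k₀ ⋆[L, volume] κ₀ with hSdef
  have hS0 : ∀ y : ℝ, y ≤ 0 → S y = 0 := by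
    intro y hy
    rw [hSdef, hLapp]
    have hz : ∀ t : ℝ, k₀ t * κ₀ (y - t) = 0 := by
      intro t
      by_cases ht : t ∈ Ioc (0:ℝ) 1
      · have hmem : y - t ∉ Ioc (0:ℝ) 1 := by
          simp only [mem_Ioc, not_and_or, not_lt]; left; linarith [ht.1]
        rw [hκ₀0 (y - t) hmem, mul_zero]
      · rw [hk₀0 t ht, zero_mul]
    simp only [hz, MeasureTheory.integral_zero]
  have hS1 : ∀ y ∈ Ioc (0:ℝ) 1, S y = 1 := by
    intro y hy
    rw [hSdef, hLapp]
    have heq : (fun t => k₀ t * κ₀ (y - t))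
        = (Ioo (0:ℝ) y).indicator (fun t => k t * κ (y - t)) := by
      funext t
      by_cases ht : t ∈ Ioo 0 y
      · rw [indicator_of_mem ht]
        have h1 : t ∈ Ioc (0:ℝ) 1 := ⟨ht.1, ht.2.le.trans hy.2⟩
        have h2 : y - t ∈ Ioc (0:ℝ) 1 := ⟨by linarith [ht.2], by linarith [ht.1, hy.2]⟩
        rw [hk₀def, hκ₀def, indicator_of_mem h1, indicator_of_mem h2]
      · rw [indicator_of_notMem ht]
        simp only [mem_Ioo, not_and_or, not_lt] at ht
        rcases ht with ht | ht
        · have hmem : t ∉ Ioc (0:ℝ) 1 := by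
            simp only [mem_Ioc, not_and_or, not_lt]; left; exact ht
          rw [hk₀0 t hmem, zero_mul]
        · have hmem : y - t ∉ Ioc (0:ℝ) 1 := by
            simp only [mem_Ioc, not_and_or, not_lt]; left; linarith
          rw [hκ₀0 (y - t) hmem, mul_zero]
    rw [heq, MeasureTheory.integral_indicator measurableSet_Ioo, ← integral_Ioc_eq_integral_Ioo,
      ← intervalIntegral.integral_of_le hy.1.le, ← hrefl k κ y]
    exact hSonine y hy.1 hy.2
  -- E3 : the iterated convolution as a full-line convolution
  have hE3 : ∀ t ∈ Ioc (0:ℝ) 1,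
      (∫ s in (0:ℝ)..t, k (t - s) * φ s) = (k₀ ⋆[L, volume] Φ) t := by
    intro t ht
    rw [hrefl k φ t, hLapp, intervalIntegral.integral_of_le ht.1.le,
      ← MeasureTheory.integral_indicator measurableSet_Ioc]
    congr 1
    funext s
    by_cases hs : s ∈ Ioc 0 t
    · rw [indicator_of_mem hs]
      have h1 : s ∈ Ioc (0:ℝ) 1 := ⟨hs.1, hs.2.trans ht.2⟩
      rw [hk₀def, indicator_of_mem h1]
      rcases eq_or_lt_of_le hs.2 with h | h
      · rw [h, sub_self, hΦ0 0 le_rfl, hφ0]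
      · rw [hE1 (t - s) ⟨by linarith, by linarith [ht.2, hs.1]⟩]
    · rw [indicator_of_notMem hs]
      simp only [mem_Ioc, not_and_or, not_lt, not_le] at hs
      rcases hs with hs | hs
      · have hmem : s ∉ Ioc (0:ℝ) 1 := by
          simp only [mem_Ioc, not_and_or, not_lt]; left; exact hs
        rw [hk₀0 s hmem, zero_mul]
      · rw [hΦ0 (t - s) (by linarith), mul_zero]
  -- associativity of convolution
  have hassoc : ∀ t : ℝ, (S ⋆[L, volume] P₀) t = (k₀ ⋆[L, volume] Φ) t := by
    intro t
    rw [hSdef, hΦdef]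
    refine convolution_assoc L L L L (fun x y z => by simp [hLdef, mul_assoc]) ?_ ?_ ?_ ?_ ?_ ?_
    · exact hk₀m.aestronglyMeasurable
    · exact hκ₀m.aestronglyMeasurable
    · exact hP₀m.aestronglyMeasurable
    · exact hk₀I.ae_convolution_exists L hκ₀I
    · exact hκ₀I.norm.ae_convolution_exists (ContinuousLinearMap.mul ℝ ℝ) hP₀I.norm
    · -- ConvolutionExistsAt ‖k₀‖ (‖κ₀‖ ⋆ ‖P₀‖) t
      set H : ℝ → ℝ := (fun x => ‖κ₀ x‖) ⋆[ContinuousLinearMap.mul ℝ ℝ, volume]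
        (fun x => ‖P₀ x‖) with hHdef
      have hHapp : ∀ y, H y = ∫ u, ‖κ₀ u‖ * ‖P₀ (y - u)‖ := by
        intro y; rw [hHdef, convolution_def]; simp
      set B : ℝ := (∫ u, ‖κ₀ u‖) * C0 with hBdef
      have hHnn : ∀ y, 0 ≤ H y := by
        intro y; rw [hHapp]
        exact integral_nonneg fun u => mul_nonneg (norm_nonneg _) (norm_nonneg _)
      have hHb : ∀ y, H y ≤ B := by
        intro y; rw [hHapp, hBdef, ← MeasureTheory.integral_mul_const]
        refine integral_mono_of_nonneg
          (Eventually.of_forall fun u => mul_nonneg (norm_nonneg _) (norm_nonneg _))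
          (hκ₀I.norm.mul_const C0)
          (Eventually.of_forall fun u => ?_)
        exact mul_le_mul_of_nonneg_left (hP₀b _) (norm_nonneg _)
      have hHm : StronglyMeasurable H := by
        have h1 : StronglyMeasurable fun p : ℝ × ℝ => ‖κ₀ p.2‖ * ‖P₀ (p.1 - p.2)‖ :=
          (((hκ₀m.comp measurable_snd).norm).mul
            ((hP₀m.comp (measurable_fst.sub measurable_snd)).norm)).stronglyMeasurable
        have := h1.integral_prod_right' (ν := volume)
        have heq : (fun x => ∫ u, ‖κ₀ u‖ * ‖P₀ (x - u)‖) = H := by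
          funext y; rw [hHapp]
        rw [← heq]
        exact this
      have hint : Integrable (fun s => ‖k₀ s‖ * H (t - s)) volume := by
        refine Integrable.mono' (hk₀I.norm.mul_const B) ?_ (Eventually.of_forall fun s => ?_)
        · exact (hk₀m.norm.stronglyMeasurable.mul
            (hHm.comp_measurable (measurable_const.sub measurable_id))).aestronglyMeasurable
        · have h1 : ‖‖k₀ s‖ * H (t - s)‖ = ‖k₀ s‖ * H (t - s) := by
            rw [Real.norm_of_nonneg (mul_nonneg (norm_nonneg _) (hHnn _))]
          rw [h1]
          exact mul_le_mul_of_nonneg_left (hHb _) (norm_nonneg _)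
      simpa [ConvolutionExistsAt, ContinuousLinearMap.mul_apply'] using hint
  -- E5 : the Sonine-collapsed convolution is the primitive of P
  have hE5 : ∀ t ∈ Ioc (0:ℝ) 1, (S ⋆[L, volume] P₀) t = ∫ u in (0:ℝ)..t, P u := by
    intro t ht
    rw [hLapp]
    have heq : (fun s => S s * P₀ (t - s))
        = (Ioc (0:ℝ) t).indicator (fun s => P (t - s)) := by
      funext s
      by_cases hs : s ∈ Ioc 0 t
      · rw [indicator_of_mem hs]
        have h1 : s ∈ Ioc (0:ℝ) 1 := ⟨hs.1, hs.2.trans ht.2⟩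
        have h2 : t - s ∈ Icc (0:ℝ) 1 := ⟨by linarith [hs.2], by linarith [hs.1, ht.2]⟩
        rw [hS1 s h1, hP₀def, indicator_of_mem h2, one_mul]
      · rw [indicator_of_notMem hs]
        simp only [mem_Ioc, not_and_or, not_lt, not_le] at hs
        rcases hs with hs | hs
        · rw [hS0 s hs, zero_mul]
        · have hmem : t - s ∉ Icc (0:ℝ) 1 := by
            simp only [mem_Icc, not_and_or, not_le]; left; linarith
          rw [hP₀0 (t - s) hmem, mul_zero]
    rw [heq, MeasureTheory.integral_indicator measurableSet_Ioc,
      ← intervalIntegral.integral_of_le ht.1.le]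
    have := intervalIntegral.integral_comp_sub_left (a := (0:ℝ)) (b := t) P t
    simpa using this
  -- the two sides agree on [0,1]
  have hFG : ∀ τ ∈ Icc (0:ℝ) 1,
      (∫ s in (0:ℝ)..τ, k (τ - s) * φ s) = ∫ u in (0:ℝ)..τ, P u := by
    intro τ hτ
    rcases eq_or_lt_of_le hτ.1 with h | h
    · rw [← h]; simp
    · rw [hE3 τ ⟨h, hτ.2⟩, ← hassoc, hE5 τ ⟨h, hτ.2⟩]
  refine ⟨hφ0, ?_, ?_⟩
  · -- the tendsto part
    have hbound : ∀ x ∈ Ioc (0:ℝ) 1, ‖φ x‖ ≤ (∫ t in (0:ℝ)..x, ‖κ t‖) * C0 := by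
      intro x hx
      have hκx : IntervalIntegrable κ volume 0 x :=
        (intervalIntegrable_iff_integrableOn_Ioc_of_le hx.1.le).mpr
          (hκI.mono_set (Ioc_subset_Ioc_right hx.2))
      have hmul : IntervalIntegrable (fun t => κ t * P (x - t)) volume 0 x :=
        hκx.mul_continuousOn ((hPc.comp (continuous_const.sub continuous_id)).continuousOn)
      calc ‖φ x‖ = ‖∫ t in (0:ℝ)..x, κ t * P (x - t)‖ := by
            rw [hφdef, leftJacobiConv, ← hPdef, hrefl κ P x]
        _ ≤ ∫ t in (0:ℝ)..x, ‖κ t * P (x - t)‖ :=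
            intervalIntegral.norm_integral_le_integral_norm hx.1.le
        _ ≤ ∫ t in (0:ℝ)..x, ‖κ t‖ * C0 := by
            refine intervalIntegral.integral_mono_on hx.1.le hmul.norm
              (hκx.norm.mul_const C0) (fun t htt => ?_)
            rw [norm_mul]
            refine mul_le_mul_of_nonneg_left (hC0 _ ⟨by linarith [htt.2], ?_⟩) (norm_nonneg _)
            linarith [htt.1, hx.2]
        _ = (∫ t in (0:ℝ)..x, ‖κ t‖) * C0 := intervalIntegral.integral_mul_const _ _
    refine squeeze_zero_norm' (a := fun x => (∫ t in (0:ℝ)..x, ‖κ t‖) * C0) ?_ ?_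
    · filter_upwards [Ioo_mem_nhdsGT (show (0:ℝ) < 1 by norm_num)] with x hx
      exact hbound x ⟨hx.1, hx.2.le⟩
    · -- the primitive tends to 0
      have hκn : IntegrableOn (fun t => ‖κ t‖) (Icc (0:ℝ) 1) :=
        (integrableOn_Icc_iff_integrableOn_Ioc (by finiteness)).mpr hκI.norm
      have hcont : ContinuousWithinAt (fun x => ∫ t in Ioc (0:ℝ) x, ‖κ t‖) (Icc 0 1) 0 :=
        (continuousOn_primitive hκn) 0 (by simp)
      have h0 : (∫ t in Ioc (0:ℝ) (0:ℝ), ‖κ t‖) = 0 := by simp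
      have h1 : Tendsto (fun x => ∫ t in Ioc (0:ℝ) x, ‖κ t‖) (𝓝[Ioo (0:ℝ) 1] 0) (𝓝 0) := by
        have h2 := hcont.tendsto.mono_left (nhdsWithin_mono 0 Ioo_subset_Icc_self)
        rwa [h0] at h2
      have h2 : Tendsto (fun x => ∫ t in Ioc (0:ℝ) x, ‖κ t‖) (𝓝[>] (0:ℝ)) (𝓝 0) := by
        rwa [nhdsWithin_Ioo_eq_nhdsGT (by norm_num : (0:ℝ) < 1)] at h1
      have h3 : Tendsto (fun x => ∫ t in (0:ℝ)..x, ‖κ t‖) (𝓝[>] (0:ℝ)) (𝓝 0) := by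
        refine h2.congr' ?_
        filter_upwards [self_mem_nhdsWithin] with x hx
        rw [intervalIntegral.integral_of_le (le_of_lt hx)]
      simpa using h3.mul_const C0
  · -- the derivative part
    intro x hx
    have hG : HasDerivWithinAt (fun τ => ∫ u in (0:ℝ)..τ, P u) (P x) (Icc 0 1) x :=
      (intervalIntegral.integral_hasDerivAt_right (hPc.intervalIntegrable 0 x)
        (hPc.stronglyMeasurable.stronglyMeasurableAtFilter) hPc.continuousAt).hasDerivWithinAt
    exact hG.congr (fun τ hτ => hFG τ hτ) (hFG x (Ioc_subset_Icc_self hx))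
end

section
/- (Linear independence of the Jacobi convolution series.) Let α, β > −1 and let k, κ : ℝ → ℝ be measurable, integrable on (0, 1], satisfying the Sonine condition ∫_0^x k(x−t) κ(t) dt = 1 for all 0 < x ≤ 1. Let φ_n(x) = ∫_0^x κ(x−t) P̃_n^{α,β}(t) dt. Then for every N ∈ ℕ the functions φ_0, φ_1, …, φ_N are linearly independent: if c_0, …, c_N ∈ ℝ satisfy Σ_{i=0}^{N} c_i φ_i(x) = 0 for all x ∈ (0,1], then c_i = 0 for all 0 ≤ i ≤ N. -/
open MeasureTheory intervalIntegral Set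

open scoped Convolution

noncomputable def jacobiPoly (α β : ℝ) (n : ℕ) : Polynomial ℝ :=
  Polynomial.C ((2 : ℝ) ^ (-(n : ℤ))) * ∑ k ∈ Finset.range (n + 1),
    Polynomial.C ((Real.Gamma ((n : ℝ) + α + 1) /
        (Real.Gamma ((k : ℝ) + 1) * Real.Gamma ((n : ℝ) + α - (k : ℝ) + 1))) *
      (Real.Gamma ((n : ℝ) + β + 1) /
        (Real.Gamma ((n : ℝ) - (k : ℝ) + 1) * Real.Gamma (β + (k : ℝ) + 1)))) *
      (Polynomial.X - 1) ^ (n - k) * (Polynomial.X + 1) ^ k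

noncomputable def shiftedJacobiPoly (α β : ℝ) (n : ℕ) : Polynomial ℝ :=
  (jacobiPoly α β n).comp (Polynomial.C 2 * Polynomial.X - 1)

lemma shiftedJacobiPoly_eval (α β : ℝ) (n : ℕ) (x : ℝ) :
    (shiftedJacobiPoly α β n).eval x = shiftedJacobiP α β n x := by
  simp [shiftedJacobiPoly, jacobiPoly, shiftedJacobiP, jacobiP, Polynomial.eval_finset_sum,
    mul_assoc]

-- the monic product
lemma monic_aux (n k : ℕ) : ((Polynomial.X - 1 : Polynomial ℝ) ^ (n - k) *
    (Polynomial.X + 1) ^ k).Monic := by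
  have h1 : (Polynomial.X - 1 : Polynomial ℝ).Monic := by
    simpa using Polynomial.monic_X_sub_C (1 : ℝ)
  have h2 : (Polynomial.X + 1 : Polynomial ℝ).Monic := by
    simpa using Polynomial.monic_X_add_C (1 : ℝ)
  exact (h1.pow _).mul (h2.pow _)

lemma natDegree_aux (n k : ℕ) (hk : k ≤ n) :
    ((Polynomial.X - 1 : Polynomial ℝ) ^ (n - k) * (Polynomial.X + 1) ^ k).natDegree = n := by
  have h1 : (Polynomial.X - 1 : Polynomial ℝ).Monic := by
    simpa using Polynomial.monic_X_sub_C (1 : ℝ)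
  have h2 : (Polynomial.X + 1 : Polynomial ℝ).Monic := by
    simpa using Polynomial.monic_X_add_C (1 : ℝ)
  rw [Polynomial.natDegree_mul ((h1.pow _).ne_zero) ((h2.pow _).ne_zero),
    Polynomial.natDegree_pow, Polynomial.natDegree_pow]
  have e1 : (Polynomial.X - 1 : Polynomial ℝ).natDegree = 1 := by
    simpa using Polynomial.natDegree_X_sub_C (1 : ℝ)
  have e2 : (Polynomial.X + 1 : Polynomial ℝ).natDegree = 1 := by
    simpa using Polynomial.natDegree_X_add_C (1 : ℝ)
  rw [e1, e2]; omega

lemma jacobiPoly_coeff (α β : ℝ) (n : ℕ) :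
    (jacobiPoly α β n).coeff n = (2 : ℝ) ^ (-(n : ℤ)) * ∑ k ∈ Finset.range (n + 1),
      (Real.Gamma ((n : ℝ) + α + 1) /
        (Real.Gamma ((k : ℝ) + 1) * Real.Gamma ((n : ℝ) + α - (k : ℝ) + 1))) *
      (Real.Gamma ((n : ℝ) + β + 1) /
        (Real.Gamma ((n : ℝ) - (k : ℝ) + 1) * Real.Gamma (β + (k : ℝ) + 1))) := by
  rw [jacobiPoly, Polynomial.coeff_C_mul, Polynomial.finset_sum_coeff]
  congr 1
  refine Finset.sum_congr rfl fun k hk => ?_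
  have hk' : k ≤ n := by simpa [Nat.lt_succ_iff] using Finset.mem_range.1 hk
  rw [mul_assoc, Polynomial.coeff_C_mul]
  have := (monic_aux n k).coeff_natDegree
  rw [natDegree_aux n k hk'] at this
  rw [this, mul_one]

lemma jacobiPoly_coeff_pos (α β : ℝ) (hα : -1 < α) (hβ : -1 < β) (n : ℕ) :
    0 < (jacobiPoly α β n).coeff n := by
  rw [jacobiPoly_coeff]
  apply mul_pos (by positivity)
  apply Finset.sum_pos _ ⟨0, Finset.mem_range.2 n.succ_pos⟩
  intro k hk
  have hk' : (k : ℝ) ≤ n := by exact_mod_cast Nat.lt_succ_iff.1 (Finset.mem_range.1 hk)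
  have h1 : 0 < Real.Gamma ((n : ℝ) + α + 1) := Real.Gamma_pos_of_pos (by
    have : (0:ℝ) ≤ n := n.cast_nonneg
    linarith)
  have h2 : 0 < Real.Gamma ((k : ℝ) + 1) := Real.Gamma_pos_of_pos (by positivity)
  have h3 : 0 < Real.Gamma ((n : ℝ) + α - (k : ℝ) + 1) := Real.Gamma_pos_of_pos (by linarith)
  have h4 : 0 < Real.Gamma ((n : ℝ) + β + 1) := Real.Gamma_pos_of_pos (by
    have : (0:ℝ) ≤ n := n.cast_nonneg
    linarith)
  have h5 : 0 < Real.Gamma ((n : ℝ) - (k : ℝ) + 1) := Real.Gamma_pos_of_pos (by linarith)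
  have h6 : 0 < Real.Gamma (β + (k : ℝ) + 1) := Real.Gamma_pos_of_pos (by
    have : (0:ℝ) ≤ k := k.cast_nonneg
    linarith)
  positivity

lemma jacobiPoly_natDegree (α β : ℝ) (hα : -1 < α) (hβ : -1 < β) (n : ℕ) :
    (jacobiPoly α β n).natDegree = n := by
  refine le_antisymm ?_ (Polynomial.le_natDegree_of_ne_zero (jacobiPoly_coeff_pos α β hα hβ n).ne')
  rw [jacobiPoly]
  refine le_trans (Polynomial.natDegree_C_mul_le _ _) ?_
  refine Polynomial.natDegree_sum_le_of_forall_le _ _ fun k hk => ?_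
  have hk' : k ≤ n := by simpa [Nat.lt_succ_iff] using Finset.mem_range.1 hk
  rw [mul_assoc]
  refine le_trans (Polynomial.natDegree_C_mul_le _ _) ?_
  rw [natDegree_aux n k hk']

lemma shiftedJacobiPoly_natDegree (α β : ℝ) (hα : -1 < α) (hβ : -1 < β) (n : ℕ) :
    (shiftedJacobiPoly α β n).natDegree = n := by
  rw [shiftedJacobiPoly, Polynomial.natDegree_comp, jacobiPoly_natDegree α β hα hβ]
  have : (Polynomial.C (2:ℝ) * Polynomial.X - 1).natDegree = 1 := by
    have : (Polynomial.C (2:ℝ) * Polynomial.X - 1) = Polynomial.C 2 * Polynomial.X + Polynomial.C (-1) := by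
      simp [sub_eq_add_neg]
    rw [this, Polynomial.natDegree_linear (by norm_num)]
  rw [this, mul_one]

lemma shiftedJacobiPoly_coeff_ne (α β : ℝ) (hα : -1 < α) (hβ : -1 < β) (n : ℕ) :
    (shiftedJacobiPoly α β n).coeff n ≠ 0 := by
  have hdeg := shiftedJacobiPoly_natDegree α β hα hβ n
  have hq : (Polynomial.C (2:ℝ) * Polynomial.X - 1) = Polynomial.C 2 * Polynomial.X + Polynomial.C (-1) := by
    simp [sub_eq_add_neg]
  have hlc : (shiftedJacobiPoly α β n).leadingCoeff =
      (jacobiPoly α β n).leadingCoeff * 2 ^ (jacobiPoly α β n).natDegree := by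
    rw [shiftedJacobiPoly, Polynomial.leadingCoeff_comp (by rw [hq, Polynomial.natDegree_linear] <;> norm_num)]
    rw [hq, Polynomial.leadingCoeff_linear (by norm_num)]
  have : (shiftedJacobiPoly α β n).coeff n ≠ 0 := by
    have := hlc
    rw [Polynomial.leadingCoeff, hdeg, Polynomial.leadingCoeff, jacobiPoly_natDegree α β hα hβ] at this
    rw [this]
    exact mul_ne_zero (jacobiPoly_coeff_pos α β hα hβ n).ne' (by positivity)
  exact this

lemma jacobi_lin_indep (α β : ℝ) (hα : -1 < α) (hβ : -1 < β) :
    ∀ (N : ℕ) (c : ℕ → ℝ),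
      (∑ i ∈ Finset.range (N + 1), c i • shiftedJacobiPoly α β i) = 0 → ∀ i ≤ N, c i = 0 := by
  intro N
  induction N with
  | zero =>
    intro c hc i hi
    interval_cases i
    rw [Finset.sum_range_one] at hc
    have := congrArg (fun p => Polynomial.coeff p 0) hc
    simp only [Polynomial.coeff_smul, Polynomial.coeff_zero, smul_eq_mul] at this
    rcases mul_eq_zero.1 this with h | h
    · exact h
    · exact absurd h (shiftedJacobiPoly_coeff_ne α β hα hβ 0)
  | succ N ih =>
    intro c hc
    have htop : c (N + 1) = 0 := by
      have := congrArg (fun p => Polynomial.coeff p (N + 1)) hc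
      simp only [Polynomial.finset_sum_coeff, Polynomial.coeff_smul, Polynomial.coeff_zero,
        smul_eq_mul] at this
      rw [Finset.sum_range_succ] at this
      have hz : ∀ i ∈ Finset.range (N + 1), c i * (shiftedJacobiPoly α β i).coeff (N + 1) = 0 := by
        intro i hi
        have : (shiftedJacobiPoly α β i).coeff (N + 1) = 0 := by
          apply Polynomial.coeff_eq_zero_of_natDegree_lt
          rw [shiftedJacobiPoly_natDegree α β hα hβ]
          exact Nat.lt_succ_of_le (Nat.lt_succ_iff.1 (Finset.mem_range.1 hi))
        rw [this, mul_zero]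
      rw [Finset.sum_eq_zero hz, zero_add] at this
      rcases mul_eq_zero.1 this with h | h
      · exact h
      · exact absurd h (shiftedJacobiPoly_coeff_ne α β hα hβ (N + 1))
    intro i hi
    rcases Nat.lt_succ_iff_lt_or_eq.1 (Nat.lt_succ_of_le hi) with h | h
    · refine ih c ?_ i (Nat.lt_succ_iff.1 h)
      rw [Finset.sum_range_succ, htop, zero_smul, add_zero] at hc
      exact hc
    · rw [h]; exact htop

set_option maxHeartbeats 1000000 in
lemma key_zero_integral
    (k κ : ℝ → ℝ) (hkm : Measurable k) (hκm : Measurable κ)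
    (hkI : IntegrableOn k (Ioc 0 1)) (hκI : IntegrableOn κ (Ioc 0 1))
    (hSonine : ∀ x : ℝ, 0 < x → x ≤ 1 → ∫ t in (0:ℝ)..x, k (x - t) * κ t = 1)
    (P : ℝ → ℝ) (hP : Continuous P)
    (hvanish : ∀ s ∈ Ioc (0:ℝ) 1, ∫ t in (0:ℝ)..s, κ (s - t) * P t = 0) :
    ∀ x ∈ Ioc (0:ℝ) 1, ∫ t in (0:ℝ)..x, P t = 0 := by
  intro x hx
  set L := ContinuousLinearMap.mul ℝ ℝ with hL
  set K : ℝ → ℝ := (Ioc (0:ℝ) 1).indicator k with hK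
  set Cf : ℝ → ℝ := (Ioc (0:ℝ) 1).indicator κ with hCf
  set Q : ℝ → ℝ := (Ioc (0:ℝ) 1).indicator P with hQ
  have hKmeas : Measurable K := hkm.indicator measurableSet_Ioc
  have hCmeas : Measurable Cf := hκm.indicator measurableSet_Ioc
  have hQmeas : Measurable Q := (hP.measurable).indicator measurableSet_Ioc
  have hKi : Integrable K := hkI.integrable_indicator measurableSet_Ioc
  have hCi : Integrable Cf := hκI.integrable_indicator measurableSet_Ioc
  have hQi : Integrable Q :=
    (hP.integrableOn_Ioc).integrable_indicator measurableSet_Ioc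
  obtain ⟨M, hM⟩ := isCompact_Icc.exists_bound_of_continuousOn
    (s := Icc (0:ℝ) 1) hP.continuousOn
  have hQb : ∀ t, ‖Q t‖ ≤ max M 0 := by
    intro t
    by_cases ht : t ∈ Ioc (0:ℝ) 1
    · rw [hQ, indicator_of_mem ht]
      exact le_trans (hM t (Ioc_subset_Icc_self ht)) (le_max_left _ _)
    · rw [hQ, indicator_of_notMem ht]; simp
  have cdef : ∀ (f g : ℝ → ℝ) (y : ℝ),
      (f ⋆[L] g) y = ∫ t, f t * g (y - t) := by
    intro f g y
    rw [convolution_def]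
    simp [hL, ContinuousLinearMap.mul_apply']
  -- values of K ⋆ Cf
  have hKC0 : ∀ y : ℝ, y ≤ 0 → (K ⋆[L] Cf) y = 0 := by
    intro y hy
    rw [cdef]
    have : (fun t => K t * Cf (y - t)) = fun _ => (0:ℝ) := by
      funext t
      by_cases ht : t ∈ Ioc (0:ℝ) 1
      · have : y - t ∉ Ioc (0:ℝ) 1 := by
          simp only [mem_Ioc, not_and_or, not_lt]
          left; linarith [ht.1]
        rw [hCf, indicator_of_notMem this, mul_zero]
      · rw [hK, indicator_of_notMem ht, zero_mul]
    rw [this]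
    simp
  have hKC1 : ∀ y ∈ Ioc (0:ℝ) 1, (K ⋆[L] Cf) y = 1 := by
    intro y hy
    rw [cdef]
    have he : (fun t => K t * Cf (y - t)) =
        (Ioo (0:ℝ) y).indicator (fun t => k t * κ (y - t)) := by
      funext t
      by_cases ht : t ∈ Ioo (0:ℝ) y
      · have h1 : t ∈ Ioc (0:ℝ) 1 := ⟨ht.1, le_trans ht.2.le hy.2⟩
        have h2 : y - t ∈ Ioc (0:ℝ) 1 := ⟨by linarith [ht.2], by linarith [ht.1, hy.2]⟩
        rw [indicator_of_mem ht, hK, hCf, indicator_of_mem h1, indicator_of_mem h2]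
      · rw [indicator_of_notMem ht]
        rcases not_and_or.1 (fun hc => ht (mem_Ioo.mpr hc)) with h | h
        · have : t ∉ Ioc (0:ℝ) 1 := fun hc => h hc.1
          rw [hK, indicator_of_notMem this, zero_mul]
        · have : y - t ∉ Ioc (0:ℝ) 1 := by
            simp only [mem_Ioc, not_and_or, not_lt]
            left; linarith [not_lt.1 h]
          rw [hCf, indicator_of_notMem this, mul_zero]
    rw [he, MeasureTheory.integral_indicator measurableSet_Ioo, ← integral_Ioc_eq_integral_Ioo,
      ← intervalIntegral.integral_of_le hy.1.le]
    have hs := intervalIntegral.integral_comp_sub_left (a := 0) (b := y)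
      (fun t => k (y - t) * κ t) y
    simp only [sub_sub_cancel, sub_zero, sub_self] at hs
    rw [hs]
    exact hSonine y hy.1 hy.2
  -- values of Cf ⋆ Q
  have hCQ0 : ∀ s : ℝ, s ≤ 0 → (Cf ⋆[L] Q) s = 0 := by
    intro s hs
    rw [cdef]
    have : (fun t => Cf t * Q (s - t)) = fun _ => (0:ℝ) := by
      funext t
      by_cases ht : t ∈ Ioc (0:ℝ) 1
      · have : s - t ∉ Ioc (0:ℝ) 1 := by
          simp only [mem_Ioc, not_and_or, not_lt]
          left; linarith [ht.1]
        rw [hQ, indicator_of_notMem this, mul_zero]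
      · rw [hCf, indicator_of_notMem ht, zero_mul]
    rw [this]
    simp
  have hCQ1 : ∀ s ∈ Ioc (0:ℝ) 1, (Cf ⋆[L] Q) s = 0 := by
    intro s hs
    rw [cdef]
    have he : (fun t => Cf t * Q (s - t)) =
        (Ioo (0:ℝ) s).indicator (fun t => κ t * P (s - t)) := by
      funext t
      by_cases ht : t ∈ Ioo (0:ℝ) s
      · have h1 : t ∈ Ioc (0:ℝ) 1 := ⟨ht.1, le_trans ht.2.le hs.2⟩
        have h2 : s - t ∈ Ioc (0:ℝ) 1 := ⟨by linarith [ht.2], by linarith [ht.1, hs.2]⟩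
        rw [indicator_of_mem ht, hCf, hQ, indicator_of_mem h1, indicator_of_mem h2]
      · rw [indicator_of_notMem ht]
        rcases not_and_or.1 (fun hc => ht (mem_Ioo.mpr hc)) with h | h
        · have : t ∉ Ioc (0:ℝ) 1 := fun hc => h hc.1
          rw [hCf, indicator_of_notMem this, zero_mul]
        · have : s - t ∉ Ioc (0:ℝ) 1 := by
            simp only [mem_Ioc, not_and_or, not_lt]
            left; linarith [not_lt.1 h]
          rw [hQ, indicator_of_notMem this, mul_zero]
    rw [he, MeasureTheory.integral_indicator measurableSet_Ioo, ← integral_Ioc_eq_integral_Ioo,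
      ← intervalIntegral.integral_of_le hs.1.le]
    have hsub := intervalIntegral.integral_comp_sub_left (a := 0) (b := s)
      (fun t => κ (s - t) * P t) s
    simp only [sub_sub_cancel, sub_zero, sub_self] at hsub
    rw [hsub]
    exact hvanish s hs
  -- convolution existence hypotheses
  have hgk : ∀ᵐ y : ℝ, ConvolutionExistsAt (fun t => ‖Cf t‖) (fun t => ‖Q t‖) y
      (ContinuousLinearMap.mul ℝ ℝ) volume := by
    refine Filter.Eventually.of_forall fun y => ?_
    have hb : Integrable (fun t => ‖Q (y - t)‖ * ‖Cf t‖) := by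
      refine Integrable.bdd_mul (c := max M 0) hCi.norm ?_ (Filter.Eventually.of_forall fun t => ?_)
      · exact ((hQmeas.comp (measurable_const.sub measurable_id)).norm).aestronglyMeasurable
      · rw [norm_norm]; exact hQb (y - t)
    have hb' : Integrable (fun t => ‖Cf t‖ * ‖Q (y - t)‖) :=
      hb.congr (Filter.Eventually.of_forall fun t => mul_comm _ _)
    show Integrable (fun t => (ContinuousLinearMap.mul ℝ ℝ) ‖Cf t‖ ‖Q (y - t)‖) volume
    refine hb'.congr (Filter.Eventually.of_forall fun t => ?_)
    simp [ContinuousLinearMap.mul_apply']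
  have hg0m : AEStronglyMeasurable ((fun t => ‖Cf t‖) ⋆[ContinuousLinearMap.mul ℝ ℝ]
      fun t => ‖Q t‖) volume := by
    have h1 : AEStronglyMeasurable
        (fun p : ℝ × ℝ => (ContinuousLinearMap.mul ℝ ℝ) (‖Cf p.2‖) (‖Q (p.1 - p.2)‖))
        (volume.prod volume) :=
      AEStronglyMeasurable.convolution_integrand _
        hCmeas.norm.aestronglyMeasurable hQmeas.norm.aestronglyMeasurable
    exact h1.integral_prod_right'
  have hg0b : ∀ y : ℝ, ‖((fun t => ‖Cf t‖) ⋆[ContinuousLinearMap.mul ℝ ℝ]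
      fun t => ‖Q t‖) y‖ ≤ (max M 0) * ∫ t, ‖Cf t‖ := by
    intro y
    have hy1 : Integrable (fun t => ‖Cf t‖ * ‖Q (y - t)‖) := by
      have hb : Integrable (fun t => ‖Q (y - t)‖ * ‖Cf t‖) := by
        refine Integrable.bdd_mul (c := max M 0) hCi.norm ?_ (Filter.Eventually.of_forall fun t => ?_)
        · exact ((hQmeas.comp (measurable_const.sub measurable_id)).norm).aestronglyMeasurable
        · rw [norm_norm]; exact hQb (y - t)
      exact hb.congr (Filter.Eventually.of_forall fun t => mul_comm _ _)
    have e : ((fun t => ‖Cf t‖) ⋆[ContinuousLinearMap.mul ℝ ℝ] fun t => ‖Q t‖) y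
        = ∫ t, ‖Cf t‖ * ‖Q (y - t)‖ := by
      rw [convolution_def]; simp [ContinuousLinearMap.mul_apply']
    rw [e]
    calc ‖∫ t, ‖Cf t‖ * ‖Q (y - t)‖‖ ≤ ∫ t, ‖Cf t‖ * ‖Q (y - t)‖ := by
          rw [Real.norm_of_nonneg]
          exact integral_nonneg fun t => by positivity
      _ ≤ ∫ t, ‖Cf t‖ * (max M 0) := by
          refine integral_mono hy1 (hCi.norm.mul_const _) fun t => ?_
          exact mul_le_mul_of_nonneg_left (hQb _) (norm_nonneg _)
      _ = (max M 0) * ∫ t, ‖Cf t‖ := by rw [MeasureTheory.integral_mul_const]; ring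
  have hfgk : ConvolutionExistsAt (fun t => ‖K t‖)
      ((fun t => ‖Cf t‖) ⋆[ContinuousLinearMap.mul ℝ ℝ, volume] fun t => ‖Q t‖) x
      (ContinuousLinearMap.mul ℝ ℝ) volume := by
    have hcomp : AEStronglyMeasurable
        (fun t => ((fun t => ‖Cf t‖) ⋆[ContinuousLinearMap.mul ℝ ℝ] fun t => ‖Q t‖) (x - t))
        volume :=
      hg0m.comp_quasiMeasurePreserving
        (Measure.measurePreserving_sub_left volume x).quasiMeasurePreserving
    have hb : Integrable (fun t =>
        ((fun t => ‖Cf t‖) ⋆[ContinuousLinearMap.mul ℝ ℝ] fun t => ‖Q t‖) (x - t) * ‖K t‖) := by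
      refine Integrable.bdd_mul (c := (max M 0) * ∫ t, ‖Cf t‖) hKi.norm hcomp (Filter.Eventually.of_forall fun t => ?_)
      exact hg0b (x - t)
    have hb' := hb.congr (Filter.Eventually.of_forall fun t =>
      mul_comm (((fun t => ‖Cf t‖) ⋆[ContinuousLinearMap.mul ℝ ℝ] fun t => ‖Q t‖) (x - t)) ‖K t‖)
    show Integrable (fun t => (ContinuousLinearMap.mul ℝ ℝ) ‖K t‖
      (((fun t => ‖Cf t‖) ⋆[ContinuousLinearMap.mul ℝ ℝ, volume] fun t => ‖Q t‖) (x - t))) volume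
    refine hb'.congr (Filter.Eventually.of_forall fun t => ?_)
    simp [ContinuousLinearMap.mul_apply']
  -- associativity
  have hassoc : ((K ⋆[L] Cf) ⋆[L] Q) x = (K ⋆[L] (Cf ⋆[L] Q)) x := by
    refine convolution_assoc L L L L (fun a b c => mul_assoc a b c) ?_ ?_ ?_ ?_ ?_ ?_
    · exact hKmeas.aestronglyMeasurable
    · exact hCmeas.aestronglyMeasurable
    · exact hQmeas.aestronglyMeasurable
    · exact hKi.ae_convolution_exists L hCi
    · exact hgk
    · exact hfgk
  -- compute RHS = 0
  have hRHS : (K ⋆[L] (Cf ⋆[L] Q)) x = 0 := by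
    rw [cdef]
    have : (fun t => K t * (Cf ⋆[L] Q) (x - t)) = fun _ => (0:ℝ) := by
      funext t
      by_cases ht : t ∈ Ioc (0:ℝ) 1
      · by_cases htx : t < x
        · have : x - t ∈ Ioc (0:ℝ) 1 := ⟨by linarith [htx], by linarith [ht.1, hx.2]⟩
          rw [hCQ1 _ this, mul_zero]
        · have : x - t ≤ 0 := by linarith [not_lt.1 htx]
          rw [hCQ0 _ this, mul_zero]
      · rw [hK, indicator_of_notMem ht, zero_mul]
    rw [this]
    simp
  -- compute LHS = ∫_0^x P
  have hLHS : ((K ⋆[L] Cf) ⋆[L] Q) x = ∫ t in (0:ℝ)..x, P t := by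
    rw [cdef]
    have he : (fun t => (K ⋆[L] Cf) t * Q (x - t)) =
        (Ioo (0:ℝ) x).indicator (fun t => P (x - t)) := by
      funext t
      by_cases ht : t ∈ Ioo (0:ℝ) x
      · have h1 : t ∈ Ioc (0:ℝ) 1 := ⟨ht.1, le_trans ht.2.le hx.2⟩
        have h2 : x - t ∈ Ioc (0:ℝ) 1 := ⟨by linarith [ht.2], by linarith [ht.1, hx.2]⟩
        rw [indicator_of_mem ht, hKC1 _ h1, one_mul, hQ, indicator_of_mem h2]
      · rw [indicator_of_notMem ht]
        rcases not_and_or.1 (fun hc => ht (mem_Ioo.mpr hc)) with h | h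
        · rw [hKC0 _ (not_lt.1 h), zero_mul]
        · have : x - t ∉ Ioc (0:ℝ) 1 := by
            simp only [mem_Ioc, not_and_or, not_lt]
            left; linarith [not_lt.1 h]
          rw [hQ, indicator_of_notMem this, mul_zero]
    rw [he, MeasureTheory.integral_indicator measurableSet_Ioo, ← integral_Ioc_eq_integral_Ioo,
      ← intervalIntegral.integral_of_le hx.1.le]
    have hsub := intervalIntegral.integral_comp_sub_left (a := 0) (b := x) P x
    simp only [sub_zero, sub_self] at hsub
    rw [hsub]
  rw [← hLHS, hassoc, hRHS]

/-- **Linear independence of the left Jacobi convolution series.** For a Sonine pair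
`(k, κ)` on `(0,1]` and `α, β > -1`, if a finite linear combination
`Σ_{i≤N} c_i φ_i` of left Jacobi convolution series vanishes on `(0,1]`, then all the
coefficients vanish. -/
theorem leftJacobiConv_linearIndependent
    (α β : ℝ) (hα : -1 < α) (hβ : -1 < β)
    (k κ : ℝ → ℝ) (hkm : Measurable k) (hκm : Measurable κ)
    (hkI : IntegrableOn k (Ioc 0 1))
    (hκI : IntegrableOn κ (Ioc 0 1))
    (hSonine : ∀ x : ℝ, 0 < x → x ≤ 1 → ∫ t in (0:ℝ)..x, k (x - t) * κ t = 1) :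
    ∀ (N : ℕ) (c : ℕ → ℝ),
      (∀ x ∈ Ioc (0:ℝ) 1, ∑ i ∈ Finset.range (N + 1), c i * leftJacobiConv κ α β i x = 0) →
      ∀ i ≤ N, c i = 0 := by
  intro N c hsum i hi
  set p : Polynomial ℝ := ∑ j ∈ Finset.range (N + 1), c j • shiftedJacobiPoly α β j with hp
  set P : ℝ → ℝ := fun t => p.eval t with hPdef
  have hPeval : ∀ t, P t = ∑ j ∈ Finset.range (N + 1), c j * shiftedJacobiP α β j t := by
    intro t
    simp [hPdef, hp, Polynomial.eval_finset_sum, shiftedJacobiPoly_eval]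
  have hPc : Continuous P := by
    exact Polynomial.continuous p
  have hScont : ∀ j : ℕ, Continuous (shiftedJacobiP α β j) := by
    intro j
    have : shiftedJacobiP α β j = fun x => (shiftedJacobiPoly α β j).eval x :=
      funext fun x => (shiftedJacobiPoly_eval α β j x).symm
    rw [this]
    exact Polynomial.continuous _
  have hvanish : ∀ s ∈ Ioc (0:ℝ) 1, ∫ t in (0:ℝ)..s, κ (s - t) * P t = 0 := by
    intro s hs
    have hκ0s : IntervalIntegrable κ volume 0 s :=
      (intervalIntegrable_iff_integrableOn_Ioc_of_le hs.1.le).2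
        (hκI.mono_set (Ioc_subset_Ioc_right hs.2))
    have hκs : IntervalIntegrable (fun t => κ (s - t)) volume 0 s := by
      have h2 := hκ0s.comp_sub_left s
      simpa using h2.symm
    have hInt : ∀ j ∈ Finset.range (N + 1), IntervalIntegrable
        (fun t => c j * (κ (s - t) * shiftedJacobiP α β j t)) volume 0 s := by
      intro j _
      exact (hκs.mul_continuousOn (hScont j).continuousOn).const_mul (c j)
    have he : (fun t => κ (s - t) * P t) =
        fun t => ∑ j ∈ Finset.range (N + 1), c j * (κ (s - t) * shiftedJacobiP α β j t) := by
      funext t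
      rw [hPeval, Finset.mul_sum]
      exact Finset.sum_congr rfl fun j _ => by ring
    rw [intervalIntegral.integral_congr (fun t _ => congrFun he t),
      intervalIntegral.integral_finset_sum hInt]
    have : ∀ j ∈ Finset.range (N + 1),
        (∫ t in (0:ℝ)..s, c j * (κ (s - t) * shiftedJacobiP α β j t))
          = c j * leftJacobiConv κ α β j s := by
      intro j _
      rw [intervalIntegral.integral_const_mul]
      rfl
    rw [Finset.sum_congr rfl this]
    exact hsum s hs
  have hkey := key_zero_integral k κ hkm hκm hkI hκI hSonine P hPc hvanish
  have hP0 : ∀ y ∈ Ioo (0:ℝ) 1, P y = 0 := by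
    intro y hy
    have hder : HasDerivAt (fun u => ∫ t in (0:ℝ)..u, P t) (P y) y :=
      intervalIntegral.integral_hasDerivAt_right (hPc.intervalIntegrable 0 y)
        hPc.stronglyMeasurable.stronglyMeasurableAtFilter hPc.continuousAt
    have hconst : HasDerivAt (fun u => ∫ t in (0:ℝ)..u, P t) 0 y := by
      refine (hasDerivAt_const y (0:ℝ)).congr_of_eventuallyEq ?_
      filter_upwards [isOpen_Ioo.mem_nhds hy] with z hz
      exact hkey z ⟨hz.1, hz.2.le⟩
    exact hder.unique hconst
  have hpoly0 : p = 0 := by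
    refine Polynomial.eq_zero_of_infinite_isRoot p ?_
    refine (Set.Ioo_infinite (by norm_num : (0:ℝ) < 1)).mono fun y hy => ?_
    exact hP0 y hy
  exact jacobi_lin_indep α β hα hβ N c (hp ▸ hpoly0) i hi
end
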